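/- arXiv:2402.18468 — 8 statements merged into one kernel-verified Lean document; each statement's English description precedes it below -/
import Mathlib

section
/- For every integer n ≥ 1 and every x ∈ (-1,1), the principal value (1/π) P.V. ∫_{-1}^{1} T_n(ξ) / (√(1-ξ^2) (x-ξ)) dξ exists and equals -U_{n-1}(x). -/
open Filter

set_option maxHeartbeats 1000000
section PVChebAux
open Real MeasureTheory Set intervalIntegral Polynomial Polynomial.Chebyshev

lemma II_weight : IntervalIntegrable (fun ξ : ℝ => 1 / Real.sqrt (1 - ξ^2)) volume (-1) 1 := by
  have h1 : IntervalIntegrable (fun ξ : ℝ => (1 - ξ) ^ (-(1/2) : ℝ)) volume (-1) 1 := by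
    have := (intervalIntegral.intervalIntegrable_rpow' (a := 0) (b := 2)
      (r := (-(1/2) : ℝ)) (by norm_num)).comp_sub_left 1
    norm_num at this
    exact this.symm
  have h2 : IntervalIntegrable (fun ξ : ℝ => (ξ + 1) ^ (-(1/2) : ℝ)) volume (-1) 1 := by
    have := (intervalIntegral.intervalIntegrable_rpow' (a := 0) (b := 2)
      (r := (-(1/2) : ℝ)) (by norm_num)).comp_add_right 1
    norm_num at this
    exact this
  refine (h1.add h2).mono_fun' ?_ ?_
  · exact ((measurable_const.div ((measurable_const.sub (measurable_id.pow_const 2)).sqrt))).aestronglyMeasurable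
  · filter_upwards [ae_restrict_mem measurableSet_uIoc] with ξ hξ
    rw [Set.uIoc_of_le (by norm_num : (-1:ℝ) ≤ 1)] at hξ
    obtain ⟨hl, hr⟩ := hξ
    show ‖1 / Real.sqrt (1 - ξ^2)‖ ≤ (1 - ξ) ^ (-(1/2) : ℝ) + (ξ + 1) ^ (-(1/2) : ℝ)
    have hra : ((1 - ξ) ^ (-(1/2) : ℝ)) = (Real.sqrt (1-ξ))⁻¹ := by
      rw [Real.rpow_neg (by linarith), Real.sqrt_eq_rpow]
    have hrb : ((ξ + 1) ^ (-(1/2) : ℝ)) = (Real.sqrt (ξ+1))⁻¹ := by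
      rw [Real.rpow_neg (by linarith), Real.sqrt_eq_rpow]
    rw [hra, hrb]
    have hfac : 1 - ξ^2 = (1-ξ)*(ξ+1) := by ring
    rw [hfac, Real.sqrt_mul (by linarith) , Real.norm_eq_abs]
    rcases eq_or_lt_of_le hr with rfl | hr
    · norm_num
    set a := Real.sqrt (1-ξ) with hadef
    set b := Real.sqrt (ξ+1) with hbdef
    have ha : 0 < a := Real.sqrt_pos.mpr (by linarith)
    have hb : 0 < b := Real.sqrt_pos.mpr (by linarith)
    have ha2 : a^2 = 1 - ξ := Real.sq_sqrt (by linarith)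
    have hb2 : b^2 = ξ + 1 := Real.sq_sqrt (by linarith)
    have hab1 : (1:ℝ) ≤ a + b := by nlinarith [sq_nonneg (a-b), sq_nonneg (a+b)]
    rw [abs_of_nonneg (by positivity)]
    calc 1/(a*b) ≤ (a+b)/(a*b) := by
          exact div_le_div_of_nonneg_right hab1 (by positivity)
      _ = a⁻¹ + b⁻¹ := by field_simp; ring


lemma II_bound {g : ℝ → ℝ} {a b M : ℝ} (ha : -1 ≤ a) (hb : b ≤ 1) (hab : a ≤ b)
    (hm : AEStronglyMeasurable g (volume.restrict (Set.uIoc a b)))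
    (hM : ∀ ξ ∈ Set.Icc a b, |g ξ| ≤ M * (1 / Real.sqrt (1 - ξ^2))) :
    IntervalIntegrable g volume a b := by
  have hsub : Set.uIcc a b ⊆ Set.uIcc (-1:ℝ) 1 := by
    rw [Set.uIcc_of_le hab, Set.uIcc_of_le (by norm_num : (-1:ℝ) ≤ 1)]
    exact Set.Icc_subset_Icc ha hb
  have hw : IntervalIntegrable (fun ξ : ℝ => M * (1 / Real.sqrt (1 - ξ^2))) volume a b :=
    (II_weight.mono_set hsub).const_mul M
  refine hw.mono_fun hm ?_
  filter_upwards [ae_restrict_mem measurableSet_uIoc] with ξ hξ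
  rw [Set.uIoc_of_le hab] at hξ
  have hmem : ξ ∈ Set.Icc a b := ⟨le_of_lt hξ.1, hξ.2⟩
  calc ‖g ξ‖ = |g ξ| := rfl
    _ ≤ M * (1 / Real.sqrt (1 - ξ^2)) := hM ξ hmem
    _ ≤ ‖M * (1 / Real.sqrt (1 - ξ^2))‖ := le_abs_self _

lemma T_abs_le {j : ℤ} {ξ : ℝ} (h1 : -1 ≤ ξ) (h2 : ξ ≤ 1) :
    |(T ℝ j).eval ξ| ≤ 1 := by
  have := Polynomial.Chebyshev.T_real_cos (Real.arccos ξ) j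
  rw [Real.cos_arccos h1 h2] at this
  rw [this]
  exact Real.abs_cos_le_one _

lemma II_Tdiv (j : ℤ) {a b : ℝ} (ha : -1 ≤ a) (hb : b ≤ 1) (hab : a ≤ b) :
    IntervalIntegrable (fun ξ : ℝ => (T ℝ j).eval ξ / Real.sqrt (1 - ξ^2)) volume a b := by
  refine II_bound (M := 1) ha hb hab ?_ ?_
  · exact (((T ℝ j).continuous_aeval.measurable).div
      ((measurable_const.sub (measurable_id.pow_const 2)).sqrt)).aestronglyMeasurable
  · intro ξ hξ
    rw [abs_div, abs_of_nonneg (Real.sqrt_nonneg _), one_mul]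
    exact div_le_div_of_nonneg_right (T_abs_le (le_trans ha hξ.1) (le_trans hξ.2 hb)) (Real.sqrt_nonneg _)

lemma moment_zero : ∫ ξ in (-1:ℝ)..1, 1 / Real.sqrt (1 - ξ^2) = Real.pi := by
  rw [integral_eq_sub_of_hasDeriv_right_of_le (by norm_num)
    Real.continuous_arcsin.continuousOn
    (fun y hy => (Real.hasDerivAt_arcsin hy.1.ne' hy.2.ne).hasDerivWithinAt)
    II_weight]
  rw [Real.arcsin_one, Real.arcsin_neg_one]
  ring

lemma moment_T (j : ℤ) (hj : j ≠ 0) :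
    ∫ ξ in (-1:ℝ)..1, (T ℝ j).eval ξ / Real.sqrt (1 - ξ^2) = 0 := by
  have hFTC := integral_eq_sub_of_hasDeriv_right_of_le (a := (-1:ℝ)) (b := 1)
    (f := fun ξ => -(Real.sin (j * Real.arccos ξ))/j)
    (f' := fun ξ => (T ℝ j).eval ξ / Real.sqrt (1 - ξ^2))
    (by norm_num)
    (((Real.continuous_sin.comp (continuous_const.mul Real.continuous_arccos)).neg.div_const _).continuousOn)
    (fun y hy => ?_) (II_Tdiv j (le_refl _) (le_refl _) (by norm_num))
  · rw [hFTC]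
    simp [Real.arccos_one, Real.arccos_neg_one, Real.sin_int_mul_pi]
  · have hd : HasDerivAt (fun ξ : ℝ => -(Real.sin ((j:ℝ) * Real.arccos ξ))/(j:ℝ))
        ((T ℝ j).eval y / Real.sqrt (1 - y^2)) y := by
      have h1 := (Real.hasDerivAt_arccos hy.1.ne' hy.2.ne).const_mul (j:ℝ)
      have h2 := (h1.sin).neg.div_const (j:ℝ)
      refine h2.congr_deriv (Eq.symm ?_)
      have hT := Polynomial.Chebyshev.T_real_cos (Real.arccos y) j
      rw [Real.cos_arccos (le_of_lt hy.1) (le_of_lt hy.2)] at hT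
      rw [hT]
      have hjj : (j:ℝ) ≠ 0 := Int.cast_ne_zero.mpr hj
      rw [eq_div_iff hjj]
      ring
    exact hd.hasDerivWithinAt


lemma II_poly (p : Polynomial ℝ) {a b : ℝ} (ha : -1 ≤ a) (hb : b ≤ 1) (hab : a ≤ b) :
    IntervalIntegrable (fun ξ : ℝ => p.eval ξ / Real.sqrt (1 - ξ^2)) volume a b := by
  obtain ⟨M, hM⟩ := (isCompact_Icc (a := (-1:ℝ)) (b := 1)).exists_bound_of_continuousOn
    (p.continuous_aeval.continuousOn)
  simp only [Polynomial.aeval_def, Polynomial.eval, Real.norm_eq_abs] at hM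
  refine II_bound (M := M) ha hb hab ?_ ?_
  · exact ((p.continuous_aeval.measurable).div
      ((measurable_const.sub (measurable_id.pow_const 2)).sqrt)).aestronglyMeasurable
  · intro ξ hξ
    rw [abs_div, abs_of_nonneg (Real.sqrt_nonneg _), mul_one_div]
    exact div_le_div_of_nonneg_right (hM ξ ⟨le_trans ha hξ.1, le_trans hξ.2 hb⟩)
      (Real.sqrt_nonneg _)

noncomputable def qp (x : ℝ) (k : ℤ) : Polynomial ℝ :=
  (T ℝ k - C ((T ℝ k).eval x)) /ₘ (X - C x)

lemma qp_mul (x : ℝ) (k : ℤ) :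
    (X - C x) * qp x k = T ℝ k - C ((T ℝ k).eval x) := by
  rw [qp, mul_divByMonic_eq_iff_isRoot]
  simp [Polynomial.IsRoot]

lemma qp_zero (x : ℝ) : qp x 0 = 0 := by
  have h := qp_mul x 0
  simp at h
  rcases h with h | h
  · exact absurd h (Polynomial.X_sub_C_ne_zero x)
  · exact h

lemma qp_one (x : ℝ) : qp x 1 = 1 := by
  have h := qp_mul x 1
  simp at h
  have : (X - C x) * qp x 1 = (X - C x) * 1 := by rw [h, mul_one]
  exact mul_left_cancel₀ (Polynomial.X_sub_C_ne_zero x) this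

lemma qp_rec (x : ℝ) (k : ℤ) :
    qp x (k+2) = 2 * C x * qp x (k+1) - qp x k + 2 * T ℝ (k+1) := by
  apply mul_left_cancel₀ (Polynomial.X_sub_C_ne_zero x)
  have h0 := qp_mul x k
  have h1 := qp_mul x (k+1)
  have h2 := qp_mul x (k+2)
  have hT : T ℝ (k+2) = 2*X*T ℝ (k+1) - T ℝ k := T_add_two ℝ k
  have hev : ((T ℝ (k+2)).eval x : ℝ) = 2*x*(T ℝ (k+1)).eval x - (T ℝ k).eval x := by
    rw [hT]; simp
  have hevC : (C ((T ℝ (k+2)).eval x) : Polynomial ℝ)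
      = 2 * C x * C ((T ℝ (k+1)).eval x) - C ((T ℝ k).eval x) := by
    rw [hev]; push_cast [map_sub, map_mul, map_ofNat]; ring
  linear_combination h2 - 2*(C x)*h1 + h0 + hT - hevC

lemma J_val (x : ℝ) : ∀ k : ℕ,
    (∫ ξ in (-1:ℝ)..1, (qp x k).eval ξ / Real.sqrt (1-ξ^2))
      = Real.pi * (U ℝ ((k:ℤ)-1)).eval x := by
  have key : ∀ k : ℕ,
      ((∫ ξ in (-1:ℝ)..1, (qp x k).eval ξ / Real.sqrt (1-ξ^2))
        = Real.pi * (U ℝ ((k:ℤ)-1)).eval x) ∧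
      ((∫ ξ in (-1:ℝ)..1, (qp x (k+1)).eval ξ / Real.sqrt (1-ξ^2))
        = Real.pi * (U ℝ ((k:ℤ)+1-1)).eval x) := by
    intro k
    induction k with
    | zero =>
      constructor
      · simp [qp_zero, Polynomial.Chebyshev.U_neg_one]
      · have : ((0:ℕ):ℤ) + 1 = 1 := by norm_num
        rw [this]
        simp only [qp_one]
        simpa [Polynomial.Chebyshev.U_zero] using moment_zero
    | succ k ih =>
      refine ⟨ih.2, ?_⟩
      have hrec := qp_rec x k
      have hcast : ((k+1:ℕ):ℤ) + 1 = (k:ℤ) + 2 := by push_cast; ring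
      rw [hcast, hrec]
      have hint1 := II_poly (qp x ((k:ℤ)+1)) (le_refl (-1:ℝ)) (le_refl (1:ℝ)) (by norm_num)
      have hint0 := II_poly (qp x (k:ℤ)) (le_refl (-1:ℝ)) (le_refl (1:ℝ)) (by norm_num)
      have hintT := II_poly (T ℝ ((k:ℤ)+1)) (le_refl (-1:ℝ)) (le_refl (1:ℝ)) (by norm_num)
      have heval : ∀ ξ : ℝ,
          ((2 * C x * qp x ((k:ℤ)+1) - qp x (k:ℤ) + 2 * T ℝ ((k:ℤ)+1)).eval ξ) / Real.sqrt (1-ξ^2)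
          = (2*x) * ((qp x ((k:ℤ)+1)).eval ξ / Real.sqrt (1-ξ^2))
            - (qp x (k:ℤ)).eval ξ / Real.sqrt (1-ξ^2)
            + 2 * ((T ℝ ((k:ℤ)+1)).eval ξ / Real.sqrt (1-ξ^2)) := by
        intro ξ; simp [Polynomial.eval_add, Polynomial.eval_sub, Polynomial.eval_mul]; ring
      rw [intervalIntegral.integral_congr (g := fun ξ =>
          (2*x) * ((qp x ((k:ℤ)+1)).eval ξ / Real.sqrt (1-ξ^2))
            - (qp x (k:ℤ)).eval ξ / Real.sqrt (1-ξ^2)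
            + 2 * ((T ℝ ((k:ℤ)+1)).eval ξ / Real.sqrt (1-ξ^2)))
          (fun ξ _ => heval ξ)]
      rw [intervalIntegral.integral_add (((hint1.const_mul _).sub hint0)) (hintT.const_mul _),
          intervalIntegral.integral_sub (hint1.const_mul _) hint0,
          intervalIntegral.integral_const_mul, intervalIntegral.integral_const_mul]
      rw [moment_T ((k:ℤ)+1) (by omega)]
      have h1 : ((k:ℤ)+1) = ((k+1:ℕ):ℤ) := by push_cast; ring
      have hU : (U ℝ ((k:ℤ)+2-1)) = 2*X*U ℝ ((k:ℤ)+1-1) - U ℝ ((k:ℤ)-1) := by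
        have h := U_add_two ℝ ((k:ℤ)-1)
        have he : (k:ℤ)-1+2 = (k:ℤ)+2-1 := by ring
        have he2 : (k:ℤ)-1+1 = (k:ℤ)+1-1 := by ring
        rw [he, he2] at h
        exact h
      rw [hU, ih.1, ih.2]
      simp only [Polynomial.eval_sub, Polynomial.eval_mul, Polynomial.eval_ofNat, Polynomial.eval_X]
      ring
  exact fun k => (key k).1


variable {x : ℝ}

noncomputable def Af (x ξ : ℝ) : ℝ := 1 - x*ξ + Real.sqrt (1-x^2) * Real.sqrt (1-ξ^2)
noncomputable def Bf (x ξ : ℝ) : ℝ := 1 - x*ξ - Real.sqrt (1-x^2) * Real.sqrt (1-ξ^2)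
noncomputable def Ff (x ξ : ℝ) : ℝ :=
  (1/(2*Real.sqrt (1-x^2))) * (Real.log (Af x ξ) - Real.log (Bf x ξ))

lemma s_pos (hx1 : -1 < x) (hx2 : x < 1) : 0 < Real.sqrt (1-x^2) :=
  Real.sqrt_pos.mpr (by nlinarith)

lemma s_sq (hx1 : -1 < x) (hx2 : x < 1) : (Real.sqrt (1-x^2))^2 = 1-x^2 :=
  Real.sq_sqrt (by nlinarith)

lemma w_sq {ξ : ℝ} (h1 : -1 ≤ ξ) (h2 : ξ ≤ 1) : (Real.sqrt (1-ξ^2))^2 = 1-ξ^2 :=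
  Real.sq_sqrt (by nlinarith)

lemma Af_pos (hx1 : -1 < x) (hx2 : x < 1) {ξ : ℝ} (h1 : -1 ≤ ξ) (h2 : ξ ≤ 1) :
    0 < Af x ξ := by
  have h3 : x*ξ < 1 := by nlinarith [sq_nonneg (x-ξ), sq_nonneg (x+ξ)]
  have := mul_nonneg (Real.sqrt_nonneg (1-x^2)) (Real.sqrt_nonneg (1-ξ^2))
  unfold Af; linarith

lemma AB_eq (hx1 : -1 < x) (hx2 : x < 1) {ξ : ℝ} (h1 : -1 ≤ ξ) (h2 : ξ ≤ 1) :
    Af x ξ * Bf x ξ = (x - ξ)^2 := by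
  have hs := s_sq hx1 hx2
  have hw := w_sq h1 h2
  unfold Af Bf
  nlinarith [hs, hw]

lemma Bf_pos (hx1 : -1 < x) (hx2 : x < 1) {ξ : ℝ} (h1 : -1 ≤ ξ) (h2 : ξ ≤ 1)
    (hne : ξ ≠ x) : 0 < Bf x ξ := by
  have hA := Af_pos hx1 hx2 h1 h2
  have hAB := AB_eq hx1 hx2 h1 h2
  have hxz : x - ξ ≠ 0 := sub_ne_zero.mpr (Ne.symm hne)
  have : 0 < (x - ξ)^2 := by positivity
  nlinarith

lemma Ff_deriv (hx1 : -1 < x) (hx2 : x < 1) {ξ : ℝ} (h1 : -1 < ξ) (h2 : ξ < 1)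
    (hne : ξ ≠ x) :
    HasDerivAt (Ff x) (1/(Real.sqrt (1-ξ^2) * (x - ξ))) ξ := by
  set s := Real.sqrt (1-x^2) with hsdef
  set w := Real.sqrt (1-ξ^2) with hwdef
  have hs : 0 < s := s_pos hx1 hx2
  have hw : 0 < w := Real.sqrt_pos.mpr (by nlinarith)
  have hs2 := s_sq hx1 hx2
  have hw2 := w_sq h1.le h2.le
  rw [← hsdef] at hs2
  rw [← hwdef] at hw2
  have hA := Af_pos hx1 hx2 h1.le h2.le
  have hB := Bf_pos hx1 hx2 h1.le h2.le hne
  have hAB := AB_eq hx1 hx2 h1.le h2.le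
  -- derivative of w
  have hwd : HasDerivAt (fun t : ℝ => Real.sqrt (1-t^2)) (-ξ/w) ξ := by
    have hin : HasDerivAt (fun t : ℝ => 1 - t^2) (-(2*ξ)) ξ := by
      simpa using ((hasDerivAt_pow 2 ξ).const_sub 1)
    have := hin.sqrt (by nlinarith : 1 - ξ^2 ≠ 0)
    convert this using 1
    rw [← hwdef]
    field_simp
  have hAd : HasDerivAt (fun t => Af x t) (-x + s * (-ξ/w)) ξ := by
    unfold Af
    have hlin : HasDerivAt (fun t : ℝ => 1 - x*t) (-x) ξ := by
      simpa using ((hasDerivAt_id ξ).const_mul x).const_sub 1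
    exact hlin.add (hwd.const_mul s)
  have hBd : HasDerivAt (fun t => Bf x t) (-x - s * (-ξ/w)) ξ := by
    unfold Bf
    have hlin : HasDerivAt (fun t : ℝ => 1 - x*t) (-x) ξ := by
      simpa using ((hasDerivAt_id ξ).const_mul x).const_sub 1
    exact hlin.sub (hwd.const_mul s)
  have hF : HasDerivAt (Ff x)
      ((1/(2*s)) * ((-x + s * (-ξ/w))/Af x ξ - (-x - s * (-ξ/w))/Bf x ξ)) ξ := by
    unfold Ff
    exact ((hAd.log hA.ne').sub (hBd.log hB.ne')).const_mul _
  convert hF using 1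
  have hxne : x - ξ ≠ 0 := sub_ne_zero.mpr (fun h => hne (by linarith [h]))
  rw [div_sub_div _ _ hA.ne' hB.ne', hAB]
  have hnum : (-x + s * (-ξ/w)) * Bf x ξ - Af x ξ * (-x - s * (-ξ/w))
      = 2*s*(x-ξ)/w := by
    unfold Af Bf
    rw [← hsdef, ← hwdef]
    field_simp
    linear_combination (2*s*x) * hw2
  rw [hnum]
  field_simp

lemma Ff_one (hx1 : -1 < x) (hx2 : x < 1) : Ff x 1 = 0 := by
  unfold Ff Af Bf
  norm_num

lemma Ff_negone (hx1 : -1 < x) (hx2 : x < 1) : Ff x (-1) = 0 := by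
  unfold Ff Af Bf
  norm_num

lemma II_f0 (hx1 : -1 < x) (hx2 : x < 1) {a b ε : ℝ} (ha : -1 ≤ a) (hb : b ≤ 1)
    (hab : a ≤ b) (hε : 0 < ε) (hfar : ∀ ξ ∈ Set.Icc a b, ε ≤ |x - ξ|) :
    IntervalIntegrable (fun ξ => 1/(Real.sqrt (1-ξ^2) * (x - ξ))) volume a b := by
  refine II_bound (M := 1/ε) ha hb hab ?_ ?_
  · exact (measurable_const.div
      (((measurable_const.sub (measurable_id.pow_const 2)).sqrt).mul
        (measurable_const.sub measurable_id))).aestronglyMeasurable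
  · intro ξ hξ
    have hfx := hfar ξ hξ
    rcases eq_or_lt_of_le (Real.sqrt_nonneg (1-ξ^2)) with hw | hw
    · rw [← hw]; simp
    · rw [abs_div, abs_one, abs_mul, abs_of_pos hw]
      calc 1 / (Real.sqrt (1-ξ^2) * |x-ξ|) ≤ 1/(Real.sqrt (1-ξ^2) * ε) := by
            apply one_div_le_one_div_of_le (by positivity)
            nlinarith
        _ = (1/ε)*(1/Real.sqrt (1-ξ^2)) := by
            rw [one_div_mul_one_div, mul_comm]

lemma FTC_f0_left (hx1 : -1 < x) (hx2 : x < 1) {ε : ℝ} (hε : 0 < ε) (hεx : ε < 1 + x) :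
    ∫ ξ in (-1:ℝ)..(x-ε), 1/(Real.sqrt (1-ξ^2) * (x - ξ)) = Ff x (x-ε) := by
  have hab : (-1:ℝ) ≤ x - ε := by linarith
  have hcont : ContinuousOn (Ff x) (Set.Icc (-1) (x-ε)) := by
    unfold Ff
    apply ContinuousOn.mul continuousOn_const
    apply ContinuousOn.sub
    · apply ContinuousOn.log
      · unfold Af
        fun_prop
      · intro ξ hξ
        exact (Af_pos hx1 hx2 hξ.1 (by nlinarith [hξ.2])).ne'
    · apply ContinuousOn.log
      · unfold Bf
        fun_prop
      · intro ξ hξ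
        exact (Bf_pos hx1 hx2 hξ.1 (by nlinarith [hξ.2]) (by nlinarith [hξ.2])).ne'
  have hint : IntervalIntegrable (fun ξ => 1/(Real.sqrt (1-ξ^2) * (x - ξ))) volume (-1) (x-ε) := by
    refine II_f0 hx1 hx2 (le_refl _) (by linarith) hab hε ?_
    intro ξ hξ
    rw [abs_of_pos (by linarith [hξ.2] : 0 < x - ξ)]
    linarith [hξ.2]
  rw [integral_eq_sub_of_hasDeriv_right_of_le hab hcont
    (fun ξ hξ => (Ff_deriv hx1 hx2 hξ.1 (by linarith [hξ.2]) (by intro h; simp [h] at hξ; linarith [hξ.2]) ).hasDerivWithinAt)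
    hint, Ff_negone hx1 hx2, sub_zero]

lemma FTC_f0_right (hx1 : -1 < x) (hx2 : x < 1) {ε : ℝ} (hε : 0 < ε) (hεx : ε < 1 - x) :
    ∫ ξ in (x+ε)..(1:ℝ), 1/(Real.sqrt (1-ξ^2) * (x - ξ)) = - Ff x (x+ε) := by
  have hab : x + ε ≤ 1 := by linarith
  have hcont : ContinuousOn (Ff x) (Set.Icc (x+ε) 1) := by
    unfold Ff
    apply ContinuousOn.mul continuousOn_const
    apply ContinuousOn.sub
    · apply ContinuousOn.log
      · unfold Af
        fun_prop
      · intro ξ hξ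
        exact (Af_pos hx1 hx2 (by nlinarith [hξ.1]) hξ.2).ne'
    · apply ContinuousOn.log
      · unfold Bf
        fun_prop
      · intro ξ hξ
        exact (Bf_pos hx1 hx2 (by nlinarith [hξ.1]) hξ.2 (by nlinarith [hξ.1])).ne'
  have hint : IntervalIntegrable (fun ξ => 1/(Real.sqrt (1-ξ^2) * (x - ξ))) volume (x+ε) 1 := by
    refine II_f0 hx1 hx2 (by linarith) (le_refl _) hab hε ?_
    intro ξ hξ
    rw [abs_of_neg (by linarith [hξ.1] : x - ξ < 0)]
    linarith [hξ.1]
  rw [integral_eq_sub_of_hasDeriv_right_of_le hab hcont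
    (fun ξ hξ => (Ff_deriv hx1 hx2 (by linarith [hξ.1]) hξ.2 (by intro h; simp [h] at hξ; linarith [hξ.1])).hasDerivWithinAt)
    hint, Ff_one hx1 hx2, zero_sub]


lemma S_tendsto (hx1 : -1 < x) (hx2 : x < 1) :
    Tendsto (fun ε => Ff x (x-ε) - Ff x (x+ε)) (nhdsWithin 0 (Set.Ioi 0)) (nhds 0) := by
  have hs : 0 < Real.sqrt (1-x^2) := s_pos hx1 hx2
  have hcm : Continuous (fun ε : ℝ => Af x (x-ε)) := by unfold Af; fun_prop
  have hcp : Continuous (fun ε : ℝ => Af x (x+ε)) := by unfold Af; fun_prop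
  have hAx : 0 < Af x x := Af_pos hx1 hx2 hx1.le hx2.le
  have h0m : (fun ε : ℝ => Af x (x-ε)) 0 = Af x x := by norm_num
  have h0p : (fun ε : ℝ => Af x (x+ε)) 0 = Af x x := by norm_num
  have htm : Tendsto (fun ε : ℝ => Af x (x-ε)) (nhds 0) (nhds (Af x x)) := by
    have h := hcm.continuousAt (x := (0:ℝ))
    unfold ContinuousAt at h
    simpa using h
  have htp : Tendsto (fun ε : ℝ => Af x (x+ε)) (nhds 0) (nhds (Af x x)) := by
    have h := hcp.continuousAt (x := (0:ℝ))
    unfold ContinuousAt at h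
    simpa using h
  have hlm : Tendsto (fun ε : ℝ => Real.log (Af x (x-ε))) (nhds 0) (nhds (Real.log (Af x x))) :=
    ((Real.continuousAt_log hAx.ne').tendsto).comp htm
  have hlp : Tendsto (fun ε : ℝ => Real.log (Af x (x+ε))) (nhds 0) (nhds (Real.log (Af x x))) :=
    ((Real.continuousAt_log hAx.ne').tendsto).comp htp
  have hmain : Tendsto (fun ε : ℝ =>
      (1/(2*Real.sqrt (1-x^2))) * (2*Real.log (Af x (x-ε)) - 2*Real.log (Af x (x+ε))))
      (nhdsWithin 0 (Set.Ioi 0)) (nhds 0) := by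
    have h2 := (((hlm.const_mul (2:ℝ)).sub (hlp.const_mul (2:ℝ))).const_mul
      (1/(2*Real.sqrt (1-x^2)))).mono_left (nhdsWithin_le_nhds (s := Set.Ioi (0:ℝ)))
    simpa using h2
  apply hmain.congr'
  have hδ : Set.Ioo (0:ℝ) (min (1+x) (1-x)) ∈ nhdsWithin (0:ℝ) (Set.Ioi 0) :=
    Ioo_mem_nhdsGT_of_mem ⟨le_refl 0, by simp; constructor <;> linarith⟩
  filter_upwards [hδ] with ε hε
  obtain ⟨hε0, hεδ⟩ := hε
  have hε1 : ε < 1 + x := lt_of_lt_of_le hεδ (min_le_left _ _)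
  have hε2 : ε < 1 - x := lt_of_lt_of_le hεδ (min_le_right _ _)
  have hm1 : -1 ≤ x - ε := by linarith
  have hm2 : x - ε ≤ 1 := by linarith
  have hp1 : -1 ≤ x + ε := by linarith
  have hp2 : x + ε ≤ 1 := by linarith
  have hAm := Af_pos hx1 hx2 hm1 hm2
  have hAp := Af_pos hx1 hx2 hp1 hp2
  have hBm : Bf x (x-ε) = ε^2 / Af x (x-ε) := by
    have h := AB_eq hx1 hx2 hm1 hm2
    have : (x - (x-ε))^2 = ε^2 := by ring_nf
    rw [this] at h
    field_simp
    linarith [h]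
  have hBp : Bf x (x+ε) = ε^2 / Af x (x+ε) := by
    have h := AB_eq hx1 hx2 hp1 hp2
    have : (x - (x+ε))^2 = ε^2 := by ring_nf
    rw [this] at h
    field_simp
    linarith [h]
  have hε2ne : (ε^2 : ℝ) ≠ 0 := by positivity
  show (1/(2*Real.sqrt (1-x^2))) * (2*Real.log (Af x (x-ε)) - 2*Real.log (Af x (x+ε)))
      = Ff x (x-ε) - Ff x (x+ε)
  unfold Ff
  rw [hBm, hBp, Real.log_div hε2ne hAm.ne', Real.log_div hε2ne hAp.ne']
  ring


end PVChebAux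

section Main
open Real MeasureTheory Set intervalIntegral Polynomial Polynomial.Chebyshev

/-- For `n ≥ 1` and `x ∈ (-1,1)`, the principal value
`(1/π) P.V. ∫_{-1}^{1} Tₙ(ξ) / (√(1-ξ²)(x-ξ)) dξ` exists and equals `-Uₙ₋₁(x)`. -/
theorem pv_chebyshevT_div_sqrt (n : ℕ) (hn : 1 ≤ n) (x : ℝ) (hx : x ∈ Set.Ioo (-1:ℝ) 1) :
    Tendsto
      (fun ε : ℝ =>
        (1 / Real.pi) *
          ((∫ ξ in (-1:ℝ)..(x - ε),
              (Polynomial.Chebyshev.T ℝ n).eval ξ / (Real.sqrt (1 - ξ ^ 2) * (x - ξ))) +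
           ∫ ξ in (x + ε)..(1:ℝ),
              (Polynomial.Chebyshev.T ℝ n).eval ξ / (Real.sqrt (1 - ξ ^ 2) * (x - ξ))))
      (nhdsWithin 0 (Set.Ioi 0))
      (nhds (-(Polynomial.Chebyshev.U ℝ ((n : ℤ) - 1)).eval x)) := by
  obtain ⟨hx1, hx2⟩ := hx
  have hδ : 0 < min (1+x) (1-x) / 2 := by
    have : 0 < min (1+x) (1-x) := lt_min (by linarith) (by linarith)
    linarith
  set J : ℝ := ∫ ξ in (-1:ℝ)..1, (qp x (n:ℤ)).eval ξ / Real.sqrt (1-ξ^2) with hJdef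
  have hJ : J = Real.pi * (U ℝ ((n:ℤ)-1)).eval x := J_val x n
  -- pointwise decomposition
  have hqe : ∀ ξ : ℝ, (ξ - x) * (qp x (n:ℤ)).eval ξ
      = (T ℝ (n:ℤ)).eval ξ - (T ℝ (n:ℤ)).eval x := by
    intro ξ
    have h := congrArg (Polynomial.eval ξ) (qp_mul x (n:ℤ))
    simpa using h
  have hpt : ∀ ξ : ℝ, ξ ≠ x →
      (T ℝ (n:ℤ)).eval ξ / (Real.sqrt (1 - ξ ^ 2) * (x - ξ))
        = (T ℝ (n:ℤ)).eval x * (1/(Real.sqrt (1-ξ^2) * (x - ξ)))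
          - (qp x (n:ℤ)).eval ξ / Real.sqrt (1-ξ^2) := by
    intro ξ hne
    by_cases hw0 : Real.sqrt (1-ξ^2) = 0
    · rw [show (1 - ξ^2 : ℝ) = 1 - ξ^2 from rfl] at hw0
      rw [hw0]
      simp
    · have hxne : x - ξ ≠ 0 := sub_ne_zero.mpr (Ne.symm hne)
      field_simp
      linear_combination -(hqe ξ)
  -- R tendsto
  obtain ⟨M, hM⟩ := (isCompact_Icc (a := (-1:ℝ)) (b := 1)).exists_bound_of_continuousOn
    ((qp x (n:ℤ)).continuous_aeval.continuousOn)
  simp only [Polynomial.aeval_def, Polynomial.eval, Real.norm_eq_abs] at hM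
  have hM0 : 0 ≤ M := le_trans (abs_nonneg _) (hM 0 (by norm_num))
  set η : ℝ := 1 - ((1+|x|)/2)^2 with hηdef
  have hxabs : |x| < 1 := abs_lt.mpr ⟨hx1, hx2⟩
  have hη : 0 < η := by
    have : ((1+|x|)/2)^2 < 1 := by nlinarith [abs_nonneg x]
    simp only [hηdef]; linarith
  have hwlb : ∀ ξ ∈ Set.Icc (x - min (1+x) (1-x)/2) (x + min (1+x) (1-x)/2),
      Real.sqrt η ≤ Real.sqrt (1-ξ^2) := by
    intro ξ hξ
    apply Real.sqrt_le_sqrt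
    have h1 : ξ ≤ (1+|x|)/2 := by
      have := min_le_right (1+x) (1-x)
      have := le_abs_self x
      obtain ⟨ha, hb⟩ := hξ
      linarith
    have h2 : -((1+|x|)/2) ≤ ξ := by
      have := min_le_left (1+x) (1-x)
      have := neg_abs_le x
      obtain ⟨ha, hb⟩ := hξ
      linarith
    have : ξ^2 ≤ ((1+|x|)/2)^2 := by nlinarith
    simp only [hηdef]; linarith
  have hRtendsto : Tendsto (fun ε : ℝ => ∫ ξ in (x-ε)..(x+ε),
      (qp x (n:ℤ)).eval ξ / Real.sqrt (1-ξ^2)) (nhdsWithin 0 (Set.Ioi 0)) (nhds 0) := by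
    apply squeeze_zero_norm' (a := fun ε => (M / Real.sqrt η) * (2*ε))
    · filter_upwards [Ioo_mem_nhdsGT_of_mem (Set.mem_Ico.mpr ⟨le_refl (0:ℝ), hδ⟩)] with ε hε
      obtain ⟨hε0, hεδ⟩ := hε
      have hb := intervalIntegral.norm_integral_le_of_norm_le_const
        (C := M / Real.sqrt η) (f := fun ξ => (qp x (n:ℤ)).eval ξ / Real.sqrt (1-ξ^2))
        (a := x-ε) (b := x+ε) ?_
      · calc ‖∫ ξ in (x-ε)..(x+ε), (qp x (n:ℤ)).eval ξ / Real.sqrt (1-ξ^2)‖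
            ≤ (M / Real.sqrt η) * |(x+ε) - (x-ε)| := hb
          _ = (M / Real.sqrt η) * (2*ε) := by
              rw [show (x+ε) - (x-ε) = 2*ε by ring, abs_of_pos (by linarith)]
      · intro ξ hξ
        rw [Set.uIoc_of_le (by linarith : x-ε ≤ x+ε)] at hξ
        have hmem : ξ ∈ Set.Icc (x - min (1+x) (1-x)/2) (x + min (1+x) (1-x)/2) :=
          ⟨by linarith [hξ.1], by linarith [hξ.2]⟩
        have hmem2 : ξ ∈ Set.Icc (-1:ℝ) 1 := by
          constructor
          · have := hmem.1; have := min_le_left (1+x) (1-x); simp at hδ ⊢; nlinarith [hδ.1]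
          · have := hmem.2; have := min_le_right (1+x) (1-x); simp at hδ ⊢; nlinarith [hδ.2]
        rw [Real.norm_eq_abs, abs_div, abs_of_nonneg (Real.sqrt_nonneg _)]
        exact div_le_div₀ hM0 (hM ξ hmem2) (Real.sqrt_pos.mpr hη) (hwlb ξ hmem)
    · have hc : Continuous (fun ε : ℝ => (M / Real.sqrt η) * (2*ε)) := by fun_prop
      have := (hc.tendsto 0).mono_left (nhdsWithin_le_nhds (s := Set.Ioi (0:ℝ)))
      simpa using this
  -- main eventual identity
  have hmain : Tendsto (fun ε : ℝ => (1/Real.pi) *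
      ((T ℝ (n:ℤ)).eval x * (Ff x (x-ε) - Ff x (x+ε)) - J
        + ∫ ξ in (x-ε)..(x+ε), (qp x (n:ℤ)).eval ξ / Real.sqrt (1-ξ^2)))
      (nhdsWithin 0 (Set.Ioi 0))
      (nhds ((1/Real.pi) * ((T ℝ (n:ℤ)).eval x * 0 - J + 0))) := by
    exact (((((S_tendsto hx1 hx2).const_mul ((T ℝ (n:ℤ)).eval x)).sub_const J).add
      hRtendsto).const_mul (1/Real.pi))
  have hval : (1/Real.pi) * ((T ℝ (n:ℤ)).eval x * 0 - J + 0)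
      = -(U ℝ ((n:ℤ)-1)).eval x := by
    rw [hJ]
    have hπ : Real.pi ≠ 0 := Real.pi_ne_zero
    field_simp
    ring
  rw [hval] at hmain
  apply hmain.congr'
  filter_upwards [Ioo_mem_nhdsGT_of_mem (Set.mem_Ico.mpr ⟨le_refl (0:ℝ), hδ⟩)] with ε hε
  obtain ⟨hε0, hεδ⟩ := hε
  have hε1 : ε < 1 + x := by have := min_le_left (1+x) (1-x); linarith
  have hε2 : ε < 1 - x := by have := min_le_right (1+x) (1-x); linarith
  -- decomposition of the two integrals
  have hIf0left : IntervalIntegrable (fun ξ => 1/(Real.sqrt (1-ξ^2) * (x - ξ))) volume (-1) (x-ε) := by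
    refine II_f0 hx1 hx2 (le_refl _) (by linarith) (by linarith) hε0 ?_
    intro ξ hξ
    rw [abs_of_pos (by linarith [hξ.2] : (0:ℝ) < x - ξ)]
    linarith [hξ.2]
  have hIf0right : IntervalIntegrable (fun ξ => 1/(Real.sqrt (1-ξ^2) * (x - ξ))) volume (x+ε) 1 := by
    refine II_f0 hx1 hx2 (by linarith) (le_refl _) (by linarith) hε0 ?_
    intro ξ hξ
    rw [abs_of_neg (by linarith [hξ.1] : x - ξ < 0)]
    linarith [hξ.1]
  have hIq1 := II_poly (qp x (n:ℤ)) (le_refl (-1:ℝ)) (by linarith : x-ε ≤ (1:ℝ)) (by linarith)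
  have hIq2 := II_poly (qp x (n:ℤ)) (by linarith : (-1:ℝ) ≤ x+ε) (le_refl (1:ℝ)) (by linarith)
  have hIq3 := II_poly (qp x (n:ℤ)) (by linarith : (-1:ℝ) ≤ x-ε) (by linarith : x+ε ≤ (1:ℝ)) (by linarith)
  have hd1 : (∫ ξ in (-1:ℝ)..(x-ε),
      (T ℝ (n:ℤ)).eval ξ / (Real.sqrt (1 - ξ^2) * (x - ξ)))
      = (T ℝ (n:ℤ)).eval x * Ff x (x-ε)
        - ∫ ξ in (-1:ℝ)..(x-ε), (qp x (n:ℤ)).eval ξ / Real.sqrt (1-ξ^2) := by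
    rw [intervalIntegral.integral_congr (g := fun ξ =>
        (T ℝ (n:ℤ)).eval x * (1/(Real.sqrt (1-ξ^2) * (x - ξ)))
          - (qp x (n:ℤ)).eval ξ / Real.sqrt (1-ξ^2)) ?_]
    · rw [intervalIntegral.integral_sub (hIf0left.const_mul _) hIq1,
        intervalIntegral.integral_const_mul, FTC_f0_left hx1 hx2 hε0 hε1]
    · intro ξ hξ
      rw [Set.uIcc_of_le (by linarith : (-1:ℝ) ≤ x-ε)] at hξ
      exact hpt ξ (by intro h; rw [h] at hξ; linarith [hξ.2])
  have hd2 : (∫ ξ in (x+ε)..(1:ℝ),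
      (T ℝ (n:ℤ)).eval ξ / (Real.sqrt (1 - ξ^2) * (x - ξ)))
      = (T ℝ (n:ℤ)).eval x * (- Ff x (x+ε))
        - ∫ ξ in (x+ε)..(1:ℝ), (qp x (n:ℤ)).eval ξ / Real.sqrt (1-ξ^2) := by
    rw [intervalIntegral.integral_congr (g := fun ξ =>
        (T ℝ (n:ℤ)).eval x * (1/(Real.sqrt (1-ξ^2) * (x - ξ)))
          - (qp x (n:ℤ)).eval ξ / Real.sqrt (1-ξ^2)) ?_]
    · rw [intervalIntegral.integral_sub (hIf0right.const_mul _) hIq2,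
        intervalIntegral.integral_const_mul, FTC_f0_right hx1 hx2 hε0 hε2]
    · intro ξ hξ
      rw [Set.uIcc_of_le (by linarith : x+ε ≤ (1:ℝ))] at hξ
      exact hpt ξ (by intro h; rw [h] at hξ; linarith [hξ.1])
  have hIq4 := II_poly (qp x (n:ℤ)) (le_refl (-1:ℝ)) (by linarith : x+ε ≤ (1:ℝ)) (by linarith)
  have hadj1 := intervalIntegral.integral_add_adjacent_intervals hIq1 hIq3
  have hadj2 := intervalIntegral.integral_add_adjacent_intervals hIq4 hIq2
  have hsum : (∫ ξ in (-1:ℝ)..(x-ε), (qp x (n:ℤ)).eval ξ / Real.sqrt (1-ξ^2))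
      + (∫ ξ in (x+ε)..(1:ℝ), (qp x (n:ℤ)).eval ξ / Real.sqrt (1-ξ^2))
      = J - ∫ ξ in (x-ε)..(x+ε), (qp x (n:ℤ)).eval ξ / Real.sqrt (1-ξ^2) := by
    rw [← hJdef] at hadj2
    linarith [hadj1, hadj2]
  show (1/Real.pi) *
      ((T ℝ (n:ℤ)).eval x * (Ff x (x-ε) - Ff x (x+ε)) - J
        + ∫ ξ in (x-ε)..(x+ε), (qp x (n:ℤ)).eval ξ / Real.sqrt (1-ξ^2))
    = (1/Real.pi) *
      ((∫ ξ in (-1:ℝ)..(x - ε), (T ℝ (n:ℤ)).eval ξ / (Real.sqrt (1 - ξ^2) * (x - ξ)))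
        + ∫ ξ in (x + ε)..(1:ℝ), (T ℝ (n:ℤ)).eval ξ / (Real.sqrt (1 - ξ^2) * (x - ξ)))
  rw [hd1, hd2]
  linear_combination (1/Real.pi) * hsum


end Main
end

section
/- For every x ∈ (-1,1), the principal value P.V. ∫_{-1}^{1} 1 / (√(1-ξ^2) (x-ξ)) dξ exists and equals 0. -/
open Filter

/-- Integrability of the PV integrand away from the singularity, left piece. -/
lemma pv_aux_int_left (x ε : ℝ) (hx2 : x < 1) (hε : 0 < ε) (hε1 : -1 < x - ε) :
    IntervalIntegrable (fun ξ : ℝ => 1 / (Real.sqrt (1 - ξ ^ 2) * (x - ξ)))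
      MeasureTheory.volume (-1) (x - ε) := by
  set C : ℝ := 1 / (Real.sqrt (1 - x + ε) * ε) with hC
  have hg0 : IntervalIntegrable (fun t : ℝ => t ^ (-(1/2) : ℝ))
      MeasureTheory.volume 0 (x - ε + 1) := intervalIntegral.intervalIntegrable_rpow' (by norm_num)
  have hg1 := (hg0.comp_add_right 1).const_mul C
  have hg : IntervalIntegrable (fun ξ : ℝ => C * (ξ + 1) ^ (-(1/2) : ℝ))
      MeasureTheory.volume (-1) (x - ε) := by
    simpa using hg1
  apply hg.mono_fun
  · apply Measurable.aestronglyMeasurable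
    apply Measurable.div measurable_const
    exact (((continuous_const.sub (continuous_pow 2)).sqrt).mul
      (continuous_const.sub continuous_id)).measurable
  · rw [Set.uIoc_of_le (by linarith)]
    refine (MeasureTheory.ae_restrict_iff' measurableSet_Ioc).mpr (Filter.Eventually.of_forall ?_)
    intro ξ hξ
    obtain ⟨hξ1, hξ2⟩ := hξ
    have h1ξ : 0 < 1 + ξ := by linarith
    have hxe : 0 < 1 - x + ε := by linarith
    have htfac : Real.sqrt (1 - ξ ^ 2) = Real.sqrt (1 - ξ) * Real.sqrt (1 + ξ) := by
      rw [← Real.sqrt_mul (by linarith)]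
      ring_nf
    have htpos : 0 < Real.sqrt (1 - ξ ^ 2) := Real.sqrt_pos.mpr (by nlinarith)
    have hxξ : 0 < x - ξ := by linarith
    have hrpow : (ξ + 1) ^ (-(1/2) : ℝ) = 1 / Real.sqrt (ξ + 1) := by
      rw [Real.rpow_neg (by linarith), Real.sqrt_eq_rpow]
      exact (one_div _).symm
    have hCpos : 0 < C := one_div_pos.mpr (mul_pos (Real.sqrt_pos.mpr hxe) hε)
    have hsq1 : 0 < Real.sqrt (ξ + 1) := Real.sqrt_pos.mpr (by linarith)
    show ‖1 / (Real.sqrt (1 - ξ ^ 2) * (x - ξ))‖ ≤ ‖C * (ξ + 1) ^ (-(1/2) : ℝ)‖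
    rw [Real.norm_eq_abs, Real.norm_eq_abs,
      abs_of_nonneg (le_of_lt (one_div_pos.mpr (mul_pos htpos hxξ))),
      abs_of_nonneg (le_of_lt (by rw [hrpow]; exact mul_pos hCpos (one_div_pos.mpr hsq1))),
      hrpow, hC]
    rw [div_mul_div_comm, one_mul]
    apply one_div_le_one_div_of_le
      (mul_pos (mul_pos (Real.sqrt_pos.mpr hxe) hε) hsq1)
    have h1 : Real.sqrt (1 - x + ε) ≤ Real.sqrt (1 - ξ) :=
      Real.sqrt_le_sqrt (by linarith)
    have h2 : Real.sqrt (ξ + 1) = Real.sqrt (1 + ξ) := by ring_nf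
    rw [htfac, h2]
    calc Real.sqrt (1 - x + ε) * ε * Real.sqrt (1 + ξ)
        ≤ Real.sqrt (1 - ξ) * (x - ξ) * Real.sqrt (1 + ξ) := by
          apply mul_le_mul_of_nonneg_right _ (Real.sqrt_nonneg _)
          exact mul_le_mul h1 (by linarith) hε.le (Real.sqrt_nonneg _)
      _ = Real.sqrt (1 - ξ) * Real.sqrt (1 + ξ) * (x - ξ) := by ring

/-- Integrability of the PV integrand away from the singularity, right piece. -/
lemma pv_aux_int_right (x ε : ℝ) (hx1 : -1 < x) (hε : 0 < ε) (hε1 : x + ε < 1) :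
    IntervalIntegrable (fun ξ : ℝ => 1 / (Real.sqrt (1 - ξ ^ 2) * (x - ξ)))
      MeasureTheory.volume (x + ε) 1 := by
  set C : ℝ := 1 / (Real.sqrt (1 + x + ε) * ε) with hC
  have hg0 : IntervalIntegrable (fun t : ℝ => t ^ (-(1/2) : ℝ))
      MeasureTheory.volume (1 - (x + ε)) 0 := intervalIntegral.intervalIntegrable_rpow' (by norm_num)
  have hg1 := (hg0.comp_sub_left 1).const_mul C
  have hg : IntervalIntegrable (fun ξ : ℝ => C * (1 - ξ) ^ (-(1/2) : ℝ))
      MeasureTheory.volume (x + ε) 1 := by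
    simpa using hg1
  apply hg.mono_fun
  · apply Measurable.aestronglyMeasurable
    apply Measurable.div measurable_const
    exact (((continuous_const.sub (continuous_pow 2)).sqrt).mul
      (continuous_const.sub continuous_id)).measurable
  · rw [Set.uIoc_of_le (by linarith)]
    refine (MeasureTheory.ae_restrict_iff' measurableSet_Ioc).mpr (Filter.Eventually.of_forall ?_)
    intro ξ hξ
    obtain ⟨hξ1, hξ2⟩ := hξ
    have h1ξ : 0 < 1 - ξ ∨ 0 ≤ 1 - ξ := Or.inr (by linarith)
    have hxe : 0 < 1 + x + ε := by linarith
    have htfac : Real.sqrt (1 - ξ ^ 2) = Real.sqrt (1 - ξ) * Real.sqrt (1 + ξ) := by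
      rw [← Real.sqrt_mul (by linarith)]
      ring_nf
    have hξx : ξ - x ≥ ε := by linarith
    have hrpow : (1 - ξ) ^ (-(1/2) : ℝ) = 1 / Real.sqrt (1 - ξ) := by
      rw [Real.rpow_neg (by linarith), Real.sqrt_eq_rpow]
      exact (one_div _).symm
    have hCpos : 0 < C := one_div_pos.mpr (mul_pos (Real.sqrt_pos.mpr hxe) hε)
    show ‖1 / (Real.sqrt (1 - ξ ^ 2) * (x - ξ))‖ ≤ ‖C * (1 - ξ) ^ (-(1/2) : ℝ)‖
    have habs : |1 / (Real.sqrt (1 - ξ ^ 2) * (x - ξ))|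
        = 1 / (Real.sqrt (1 - ξ ^ 2) * (ξ - x)) := by
      rw [abs_div, abs_one, abs_mul, abs_of_nonneg (Real.sqrt_nonneg _),
        abs_of_neg (by nlinarith : x - ξ < 0)]
      ring_nf
    rw [Real.norm_eq_abs, Real.norm_eq_abs, habs,
      abs_of_nonneg (mul_nonneg hCpos.le (Real.rpow_nonneg (by linarith) _)), hrpow]
    rw [div_mul_div_comm, one_mul]
    by_cases hξone : ξ = 1
    · subst hξone
      norm_num [Real.sqrt_eq_zero']
    · have hξlt : ξ < 1 := lt_of_le_of_ne hξ2 hξone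
      apply one_div_le_one_div_of_le
      · exact mul_pos (mul_pos (Real.sqrt_pos.mpr hxe) hε)
          (Real.sqrt_pos.mpr (by linarith))
      · have h1 : Real.sqrt (1 + x + ε) ≤ Real.sqrt (1 + ξ) :=
          Real.sqrt_le_sqrt (by linarith)
        rw [htfac]
        calc Real.sqrt (1 + x + ε) * ε * Real.sqrt (1 - ξ)
            ≤ Real.sqrt (1 + ξ) * (ξ - x) * Real.sqrt (1 - ξ) := by
              apply mul_le_mul_of_nonneg_right _ (Real.sqrt_nonneg _)
              exact mul_le_mul h1 hξx hε.le (Real.sqrt_nonneg _)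
          _ = Real.sqrt (1 - ξ) * Real.sqrt (1 + ξ) * (ξ - x) := by ring

/-- For `x ∈ (-1,1)`, the principal value
`P.V. ∫_{-1}^{1} 1 / (√(1-ξ²)(x-ξ)) dξ` exists and equals `0`. -/
theorem pv_one_div_sqrt (x : ℝ) (hx : x ∈ Set.Ioo (-1:ℝ) 1) :
    Tendsto
      (fun ε : ℝ =>
        (∫ ξ in (-1:ℝ)..(x - ε), 1 / (Real.sqrt (1 - ξ ^ 2) * (x - ξ))) +
        ∫ ξ in (x + ε)..(1:ℝ), 1 / (Real.sqrt (1 - ξ ^ 2) * (x - ξ)))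
      (nhdsWithin 0 (Set.Ioi 0)) (nhds 0) := by
  obtain ⟨hx1, hx2⟩ := hx
  have hx2' : (0:ℝ) < 1 - x ^ 2 := by nlinarith
  set s : ℝ := Real.sqrt (1 - x ^ 2) with hs
  have hspos : 0 < s := Real.sqrt_pos.mpr hx2'
  have hs2 : s ^ 2 = 1 - x ^ 2 := Real.sq_sqrt hx2'.le
  set N : ℝ → ℝ := fun ξ => 1 - x * ξ + s * Real.sqrt (1 - ξ ^ 2) with hN
  have hNcont : Continuous N := by
    apply Continuous.add
    · exact continuous_const.sub (continuous_const.mul continuous_id)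
    · exact continuous_const.mul (continuous_const.sub (continuous_pow 2)).sqrt
  have hNpos : ∀ ξ ∈ Set.Icc (-1:ℝ) 1, 0 < N ξ := by
    intro ξ hξ
    obtain ⟨h1, h2⟩ := hξ
    have hax : |x| < 1 := abs_lt.mpr ⟨hx1, hx2⟩
    have h3 : x * ξ ≤ |x| := by
      calc x * ξ ≤ |x * ξ| := le_abs_self _
        _ = |x| * |ξ| := abs_mul _ _
        _ ≤ |x| * 1 := by
            apply mul_le_mul_of_nonneg_left _ (abs_nonneg _)
            exact abs_le.mpr ⟨h1, h2⟩
        _ = |x| := mul_one _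
    have h4 : 0 ≤ s * Real.sqrt (1 - ξ ^ 2) :=
      mul_nonneg hspos.le (Real.sqrt_nonneg _)
    simp only [hN]
    nlinarith
  set F : ℝ → ℝ := fun ξ => s⁻¹ * (Real.log (N ξ) - Real.log (x - ξ)) with hF
  -- derivative of F
  have hFderiv : ∀ ξ ∈ Set.Ioo (-1:ℝ) 1, ξ ≠ x →
      HasDerivAt F (1 / (Real.sqrt (1 - ξ ^ 2) * (x - ξ))) ξ := by
    intro ξ hξ hne
    have hξ2' : (0:ℝ) < 1 - ξ ^ 2 := by nlinarith [hξ.1, hξ.2]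
    set t : ℝ := Real.sqrt (1 - ξ ^ 2) with ht
    have htpos : 0 < t := Real.sqrt_pos.mpr hξ2'
    have ht2 : t ^ 2 = 1 - ξ ^ 2 := Real.sq_sqrt hξ2'.le
    have h1 : HasDerivAt (fun u : ℝ => 1 - u ^ 2) (-(2 * ξ)) ξ := by
      simpa using (hasDerivAt_pow 2 ξ).const_sub 1
    have hsqrt : HasDerivAt (fun u : ℝ => Real.sqrt (1 - u ^ 2))
        (1 / (2 * t) * -(2 * ξ)) ξ :=
      (Real.hasDerivAt_sqrt hξ2'.ne').comp ξ h1
    have hNd : HasDerivAt N (-x + s * (1 / (2 * t) * -(2 * ξ))) ξ := by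
      have ha : HasDerivAt (fun u : ℝ => 1 - x * u) (-x) ξ := by
        simpa using ((hasDerivAt_id ξ).const_mul x).const_sub 1
      exact ha.add (hsqrt.const_mul s)
    have hNne : N ξ ≠ 0 := (hNpos ξ ⟨hξ.1.le, hξ.2.le⟩).ne'
    have hlogN : HasDerivAt (fun u => Real.log (N u))
        ((-x + s * (1 / (2 * t) * -(2 * ξ))) / N ξ) ξ := hNd.log hNne
    have hxξ : x - ξ ≠ 0 := sub_ne_zero.mpr (Ne.symm hne)
    have hlog2 : HasDerivAt (fun u => Real.log (x - u)) ((-1) / (x - ξ)) ξ := by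
      have hb : HasDerivAt (fun u : ℝ => x - u) (-1) ξ := by
        simpa using (hasDerivAt_id ξ).const_sub x
      exact hb.log hxξ
    have hmain := (hlogN.sub hlog2).const_mul s⁻¹
    refine hmain.congr_deriv (Eq.symm ?_)
    have hNval : N ξ = 1 - x * ξ + s * t := rfl
    rw [hNval]
    have hNne' : 1 - x * ξ + s * t ≠ 0 := by rwa [hNval] at hNne
    field_simp
    field_simp
    linear_combination t * hs2 - s * ht2
  set δ : ℝ := min (1 + x) (1 - x) with hδ
  have hδpos : 0 < δ := lt_min (by linarith) (by linarith)
  have key : ∀ ε ∈ Set.Ioo (0:ℝ) δ,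
      ((∫ ξ in (-1:ℝ)..(x - ε), 1 / (Real.sqrt (1 - ξ ^ 2) * (x - ξ))) +
        ∫ ξ in (x + ε)..(1:ℝ), 1 / (Real.sqrt (1 - ξ ^ 2) * (x - ξ)))
      = s⁻¹ * (Real.log (N (x - ε)) - Real.log (N (x + ε))) := by
    intro ε hε
    obtain ⟨hε0, hεδ⟩ := hε
    have hεa : ε < 1 + x := lt_of_lt_of_le hεδ (min_le_left _ _)
    have hεb : ε < 1 - x := lt_of_lt_of_le hεδ (min_le_right _ _)
    have h1 : -1 < x - ε := by linarith
    have h2 : x + ε < 1 := by linarith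
    have hxsub : Continuous fun ξ : ℝ => x - ξ := continuous_const.sub continuous_id
    have hcont1 : ContinuousOn F (Set.Icc (-1:ℝ) (x - ε)) := by
      apply ContinuousOn.mul continuousOn_const
      apply ContinuousOn.sub
      · exact hNcont.continuousOn.log fun ξ hξ =>
          (hNpos ξ ⟨hξ.1, by linarith [hξ.2]⟩).ne'
      · exact hxsub.continuousOn.log fun ξ hξ =>
          (show (0:ℝ) < x - ξ by linarith [hξ.2]).ne'
    have hcont2 : ContinuousOn F (Set.Icc (x + ε) (1:ℝ)) := by
      apply ContinuousOn.mul continuousOn_const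
      apply ContinuousOn.sub
      · exact hNcont.continuousOn.log fun ξ hξ =>
          (hNpos ξ ⟨by linarith [hξ.1], hξ.2⟩).ne'
      · exact hxsub.continuousOn.log fun ξ hξ =>
          (show x - ξ < 0 by linarith [hξ.1]).ne
    have hderiv1 : ∀ ξ ∈ Set.Ioo (-1:ℝ) (x - ε),
        HasDerivAt F (1 / (Real.sqrt (1 - ξ ^ 2) * (x - ξ))) ξ := fun ξ hξ =>
      hFderiv ξ ⟨hξ.1, by linarith [hξ.2]⟩ (by linarith [hξ.2] : ξ ≠ x)
    have hderiv2 : ∀ ξ ∈ Set.Ioo (x + ε) (1:ℝ),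
        HasDerivAt F (1 / (Real.sqrt (1 - ξ ^ 2) * (x - ξ))) ξ := fun ξ hξ =>
      hFderiv ξ ⟨by linarith [hξ.1], hξ.2⟩ (by linarith [hξ.1] : ξ ≠ x)
    have I1 : (∫ ξ in (-1:ℝ)..(x - ε), 1 / (Real.sqrt (1 - ξ ^ 2) * (x - ξ)))
        = F (x - ε) - F (-1) :=
      intervalIntegral.integral_eq_sub_of_hasDeriv_right_of_le (by linarith)
        hcont1 (fun ξ hξ => (hderiv1 ξ hξ).hasDerivWithinAt) (pv_aux_int_left x ε hx2 hε0 h1)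
    have I2 : (∫ ξ in (x + ε)..(1:ℝ), 1 / (Real.sqrt (1 - ξ ^ 2) * (x - ξ)))
        = F 1 - F (x + ε) :=
      intervalIntegral.integral_eq_sub_of_hasDeriv_right_of_le (by linarith)
        hcont2 (fun ξ hξ => (hderiv2 ξ hξ).hasDerivWithinAt) (pv_aux_int_right x ε hx1 hε0 h2)
    have Fm1 : F (-1) = 0 := by
      show s⁻¹ * (Real.log (N (-1)) - Real.log (x - (-1))) = 0
      have hNm1 : N (-1) = x + 1 := by
        show 1 - x * (-1) + s * Real.sqrt (1 - (-1:ℝ) ^ 2) = x + 1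
        have h0 : Real.sqrt (1 - (-1:ℝ) ^ 2) = 0 := by norm_num
        rw [h0]; ring
      rw [hNm1, show x - (-1:ℝ) = x + 1 by ring, sub_self, mul_zero]
    have F1 : F 1 = 0 := by
      show s⁻¹ * (Real.log (N 1) - Real.log (x - 1)) = 0
      have hN1 : N 1 = 1 - x := by
        show 1 - x * 1 + s * Real.sqrt (1 - (1:ℝ) ^ 2) = 1 - x
        have h0 : Real.sqrt (1 - (1:ℝ) ^ 2) = 0 := by norm_num
        rw [h0]; ring
      rw [hN1, show x - (1:ℝ) = -(1 - x) by ring, Real.log_neg_eq_log, sub_self, mul_zero]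
    have Fl : F (x - ε) = s⁻¹ * (Real.log (N (x - ε)) - Real.log ε) := by
      show s⁻¹ * (Real.log (N (x - ε)) - Real.log (x - (x - ε))) = _
      rw [show x - (x - ε) = ε by ring]
    have Fr : F (x + ε) = s⁻¹ * (Real.log (N (x + ε)) - Real.log ε) := by
      show s⁻¹ * (Real.log (N (x + ε)) - Real.log (x - (x + ε))) = _
      rw [show x - (x + ε) = -ε by ring, Real.log_neg_eq_log]
    rw [I1, I2, Fm1, F1, Fl, Fr]
    ring
  have hlim : Tendsto (fun ε : ℝ => s⁻¹ * (Real.log (N (x - ε)) - Real.log (N (x + ε))))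
      (nhds 0) (nhds 0) := by
    have hNx : N x ≠ 0 := (hNpos x ⟨hx1.le, hx2.le⟩).ne'
    have g1 : Continuous fun ε : ℝ => N (x - ε) :=
      hNcont.comp (continuous_const.sub continuous_id)
    have g2 : Continuous fun ε : ℝ => N (x + ε) :=
      hNcont.comp (continuous_const.add continuous_id)
    have c1 : ContinuousAt (fun ε : ℝ => Real.log (N (x - ε))) 0 :=
      g1.continuousAt.log (by simpa using hNx)
    have c2 : ContinuousAt (fun ε : ℝ => Real.log (N (x + ε))) 0 :=
      g2.continuousAt.log (by simpa using hNx)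
    have c3 : ContinuousAt (fun ε : ℝ => s⁻¹ * (Real.log (N (x - ε)) - Real.log (N (x + ε)))) 0 :=
      (c1.sub c2).const_mul s⁻¹
    have := c3.tendsto
    simpa using this
  refine Tendsto.congr' ?_ (hlim.mono_left nhdsWithin_le_nhds)
  filter_upwards [Ioo_mem_nhdsGT_of_mem (Set.left_mem_Ico.mpr hδpos)] with ε hε
  exact (key ε hε).symm
end

section
/- For every integer n ≥ 1 and every x ∈ (-1,1), the principal value (1/π) P.V. ∫_{-1}^{1} √(1-ξ^2) U_{n-1}(ξ) / (x-ξ) dξ exists and equals T_n(x). -/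
open Polynomial Polynomial.Chebyshev intervalIntegral Set Filter Real

noncomputable def Fb (x : ℝ) : ℝ → ℝ := fun ξ =>
  Real.sqrt (1-x^2) * (Real.log (1 - x*ξ + Real.sqrt (1-x^2) * Real.sqrt (1-ξ^2))
    - Real.log (x - ξ)) + x * Real.arcsin ξ - Real.sqrt (1-ξ^2)

lemma hasDerivAt_sqrt_one_sub_sq' {t : ℝ} (h : t ∈ Set.Ioo (-1:ℝ) 1) :
    HasDerivAt (fun u : ℝ => Real.sqrt (1 - u^2)) (-t / Real.sqrt (1 - t^2)) t := by
  have h1 : (0:ℝ) < 1 - t^2 := by nlinarith [h.1, h.2]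
  have hs : Real.sqrt (1 - t^2) ≠ 0 := by positivity
  have hinner : HasDerivAt (fun u : ℝ => (1:ℝ) - u^2) (-(2*t)) t := by
    simpa using ((hasDerivAt_pow 2 t).const_sub 1)
  have := (Real.hasDerivAt_sqrt h1.ne').comp t hinner
  refine this.congr_deriv (Eq.symm ?_)
  field_simp

lemma A_pos {x ξ : ℝ} (hx : x ∈ Set.Ioo (-1:ℝ) 1) (hξ1 : -1 ≤ ξ) (hξ2 : ξ ≤ 1) :
    0 < 1 - x*ξ + Real.sqrt (1-x^2) * Real.sqrt (1-ξ^2) := by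
  have h1 : x*ξ < 1 := by
    have h2 : |x| < 1 := abs_lt.mpr ⟨hx.1, hx.2⟩
    have h3 : |ξ| ≤ 1 := abs_le.mpr ⟨hξ1, hξ2⟩
    calc x*ξ ≤ |x*ξ| := le_abs_self _
      _ = |x| * |ξ| := abs_mul x ξ
      _ ≤ |x| * 1 := mul_le_mul_of_nonneg_left h3 (abs_nonneg x)
      _ < 1 := by rw [mul_one]; exact h2
  nlinarith [mul_nonneg (Real.sqrt_nonneg (1-x^2)) (Real.sqrt_nonneg (1-ξ^2))]

lemma Fb_deriv {x ξ : ℝ} (hx : x ∈ Set.Ioo (-1:ℝ) 1) (hξ : ξ ∈ Set.Ioo (-1:ℝ) 1) (hne : ξ ≠ x) :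
    HasDerivAt (Fb x) (Real.sqrt (1-ξ^2) / (x - ξ)) ξ := by
  obtain ⟨hx1, hx2⟩ := hx
  obtain ⟨hξ1, hξ2⟩ := hξ
  set s := Real.sqrt (1-x^2) with hsdef
  set u := Real.sqrt (1-ξ^2) with hudef
  have hx2pos : (0:ℝ) < 1 - x^2 := by nlinarith
  have hξ2pos : (0:ℝ) < 1 - ξ^2 := by nlinarith
  have hs : s^2 = 1 - x^2 := Real.sq_sqrt hx2pos.le
  have hu : u^2 = 1 - ξ^2 := Real.sq_sqrt hξ2pos.le
  have hspos : 0 < s := Real.sqrt_pos.mpr hx2pos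
  have hupos : 0 < u := Real.sqrt_pos.mpr hξ2pos
  have hxξ : x - ξ ≠ 0 := sub_ne_zero.mpr (Ne.symm hne)
  have hA : 0 < 1 - x*ξ + s * u := A_pos ⟨hx1, hx2⟩ hξ1.le hξ2.le
  -- derivative of inner A
  have hdA : HasDerivAt (fun t : ℝ => 1 - x*t + s * Real.sqrt (1-t^2))
      (-x + s * (-ξ/u)) ξ := by
    have h1 : HasDerivAt (fun t : ℝ => 1 - x*t) (-x) ξ := by
      simpa using ((hasDerivAt_id ξ).const_mul x).const_sub 1
    exact h1.add (((hasDerivAt_sqrt_one_sub_sq' ⟨hξ1, hξ2⟩)).const_mul s)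
  have hlogA : HasDerivAt (fun t : ℝ => Real.log (1 - x*t + s * Real.sqrt (1-t^2)))
      ((1 - x*ξ + s*u)⁻¹ * (-x + s * (-ξ/u))) ξ := by
    exact (Real.hasDerivAt_log hA.ne').comp ξ hdA
  have hlogB : HasDerivAt (fun t : ℝ => Real.log (x - t)) ((x - ξ)⁻¹ * (-1)) ξ := by
    have h1 : HasDerivAt (fun t : ℝ => x - t) (-1) ξ := by
      simpa using (hasDerivAt_id ξ).const_sub x
    exact (Real.hasDerivAt_log hxξ).comp ξ h1
  have harcsin : HasDerivAt Real.arcsin (1 / Real.sqrt (1-ξ^2)) ξ :=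
    Real.hasDerivAt_arcsin (by linarith) (by linarith)
  have hd : HasDerivAt (Fb x)
      (s * ((1 - x*ξ + s*u)⁻¹ * (-x + s * (-ξ/u)) - (x - ξ)⁻¹ * (-1))
        + x * (1/u) - (-ξ/u)) ξ := by
    exact (((hlogA.sub hlogB).const_mul s).add (harcsin.const_mul x)).sub
      (hasDerivAt_sqrt_one_sub_sq' ⟨hξ1, hξ2⟩)
  convert hd using 1
  have hAkey : (x-ξ)*(-x*u - s*ξ) = (s - u)*(1 - x*ξ + s*u) := by
    linear_combination s*hu - u*hs
  have hA' : 1 - x*ξ + u*s ≠ 0 := by rw [mul_comm u s]; exact hA.ne'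
  field_simp
  linear_combination (1 - x*ξ + u*s - s^2)*hu + (x*ξ - 1)*hs

noncomputable def Gb (x : ℝ) : ℝ → ℝ := fun ξ =>
  Real.sqrt (1-x^2) * Real.log (1 - x*ξ + Real.sqrt (1-x^2) * Real.sqrt (1-ξ^2))
    + x * Real.arcsin ξ - Real.sqrt (1-ξ^2)

lemma Fb_eq (x ξ : ℝ) : Fb x ξ = Gb x ξ - Real.sqrt (1-x^2) * Real.log (x - ξ) := by
  simp only [Fb, Gb]; ring

lemma cont_sqrt_one_sub_sq : Continuous (fun t : ℝ => Real.sqrt (1 - t^2)) :=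
  Real.continuous_sqrt.comp (by continuity)

lemma Gb_contAt {x ξ : ℝ} (hx : x ∈ Set.Ioo (-1:ℝ) 1) (hξ1 : -1 ≤ ξ) (hξ2 : ξ ≤ 1) :
    ContinuousAt (Gb x) ξ := by
  have hA := A_pos hx hξ1 hξ2
  have h1 : ContinuousAt (fun t : ℝ => 1 - x*t + Real.sqrt (1-x^2) * Real.sqrt (1-t^2)) ξ := by
    exact ((continuous_const.sub (continuous_const.mul continuous_id)).add
      (continuous_const.mul cont_sqrt_one_sub_sq)).continuousAt
  have hlog : ContinuousAt (fun t : ℝ =>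
      Real.log (1 - x*t + Real.sqrt (1-x^2) * Real.sqrt (1-t^2))) ξ :=
    h1.log hA.ne'
  exact ((hlog.const_mul _).add ((Real.continuous_arcsin.continuousAt).const_mul x)).sub
    cont_sqrt_one_sub_sq.continuousAt

lemma Fb_contAt {x ξ : ℝ} (hx : x ∈ Set.Ioo (-1:ℝ) 1) (hξ1 : -1 ≤ ξ) (hξ2 : ξ ≤ 1)
    (hne : ξ ≠ x) : ContinuousAt (Fb x) ξ := by
  have h0 : Fb x = fun ξ => Gb x ξ - Real.sqrt (1-x^2) * Real.log (x - ξ) :=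
    funext (Fb_eq x)
  rw [h0]
  have hlog : ContinuousAt (fun t : ℝ => Real.log (x - t)) ξ :=
    ((continuous_const.sub continuous_id).continuousAt (x := ξ)).log
      (sub_ne_zero.mpr (Ne.symm hne))
  exact (Gb_contAt hx hξ1 hξ2).sub (hlog.const_mul _)

lemma base_left {x : ℝ} (hx : x ∈ Set.Ioo (-1:ℝ) 1) {ε : ℝ} (hε : 0 < ε) (hε2 : ε < x+1) :
    ∫ ξ in (-1:ℝ)..(x-ε), Real.sqrt (1-ξ^2)/(x-ξ) = Fb x (x-ε) - Fb x (-1) := by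
  obtain ⟨hx1, hx2⟩ := hx
  apply integral_eq_sub_of_hasDeriv_right_of_le (by linarith)
  · intro t ht
    exact (Fb_contAt ⟨hx1, hx2⟩ ht.1 (by linarith [ht.2]) (by linarith [ht.2])).continuousWithinAt
  · intro t ht
    exact (Fb_deriv ⟨hx1, hx2⟩ ⟨ht.1, by linarith [ht.2]⟩ (by linarith [ht.2])).hasDerivWithinAt
  · apply ContinuousOn.intervalIntegrable
    apply ContinuousOn.div cont_sqrt_one_sub_sq.continuousOn
      (by continuity : Continuous fun t : ℝ => x - t).continuousOn
    intro t ht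
    rw [Set.uIcc_of_le (by linarith : (-1:ℝ) ≤ x-ε)] at ht
    have h2 := ht.2
    intro h
    have : x = t := by linarith [sub_eq_zero.mp h]
    linarith

lemma base_right {x : ℝ} (hx : x ∈ Set.Ioo (-1:ℝ) 1) {ε : ℝ} (hε : 0 < ε) (hε2 : ε < 1-x) :
    ∫ ξ in (x+ε)..(1:ℝ), Real.sqrt (1-ξ^2)/(x-ξ) = Fb x 1 - Fb x (x+ε) := by
  obtain ⟨hx1, hx2⟩ := hx
  apply integral_eq_sub_of_hasDeriv_right_of_le (by linarith)
  · intro t ht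
    exact (Fb_contAt ⟨hx1, hx2⟩ (by linarith [ht.1]) ht.2 (by linarith [ht.1])).continuousWithinAt
  · intro t ht
    exact (Fb_deriv ⟨hx1, hx2⟩ ⟨by linarith [ht.1], ht.2⟩ (by linarith [ht.1])).hasDerivWithinAt
  · apply ContinuousOn.intervalIntegrable
    apply ContinuousOn.div cont_sqrt_one_sub_sq.continuousOn
      (by continuity : Continuous fun t : ℝ => x - t).continuousOn
    intro t ht
    rw [Set.uIcc_of_le (by linarith : x+ε ≤ (1:ℝ))] at ht
    have h2 := ht.1
    intro h
    have : x = t := by linarith [sub_eq_zero.mp h]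
    linarith

lemma Fb_one {x : ℝ} (hx : x ∈ Set.Ioo (-1:ℝ) 1) : Fb x 1 = x * (Real.pi/2) := by
  have h0 : (1:ℝ) - 1^2 = 0 := by norm_num
  have h1 : Real.log (x - 1) = Real.log (1 - x) := by
    rw [show x - 1 = -(1-x) by ring, Real.log_neg_eq_log]
  simp only [Fb, h0, Real.sqrt_zero, mul_zero, add_zero, mul_one, Real.arcsin_one, h1,
    sub_zero, sub_self, mul_zero, zero_add]

lemma Fb_neg_one {x : ℝ} (hx : x ∈ Set.Ioo (-1:ℝ) 1) : Fb x (-1) = -(x * (Real.pi/2)) := by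
  have h0 : (1:ℝ) - (-1)^2 = 0 := by norm_num
  have h1 : x - (-1) = 1 - x*(-1) := by ring
  simp only [Fb, h0, Real.sqrt_zero, mul_zero, add_zero, Real.arcsin_neg_one, h1,
    sub_zero, sub_self, mul_zero, zero_add, mul_neg]

lemma base_tendsto {x : ℝ} (hx : x ∈ Set.Ioo (-1:ℝ) 1) :
    Tendsto (fun ε : ℝ => (∫ ξ in (-1:ℝ)..(x-ε), Real.sqrt (1-ξ^2)/(x-ξ))
      + ∫ ξ in (x+ε)..(1:ℝ), Real.sqrt (1-ξ^2)/(x-ξ))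
      (nhdsWithin 0 (Set.Ioi 0)) (nhds (Real.pi * x)) := by
  obtain ⟨hx1, hx2⟩ := hx
  set δ : ℝ := min (x+1) (1-x) with hδdef
  have hδ : 0 < δ := lt_min (by linarith) (by linarith)
  have hev : ∀ᶠ ε in nhdsWithin (0:ℝ) (Set.Ioi 0), ε ∈ Set.Ioo 0 δ :=
    Ioo_mem_nhdsGT hδ
  have hGx : ContinuousAt (Gb x) x := Gb_contAt ⟨hx1, hx2⟩ (by linarith) (by linarith)
  have htm : Tendsto (fun ε : ℝ => x - ε) (nhdsWithin 0 (Set.Ioi 0)) (nhds x) := by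
    have : Tendsto (fun ε : ℝ => x - ε) (nhds 0) (nhds (x - 0)) :=
      (continuous_const.sub continuous_id).tendsto 0
    simpa using this.mono_left nhdsWithin_le_nhds
  have htp : Tendsto (fun ε : ℝ => x + ε) (nhdsWithin 0 (Set.Ioi 0)) (nhds x) := by
    have : Tendsto (fun ε : ℝ => x + ε) (nhds 0) (nhds (x + 0)) :=
      (continuous_const.add continuous_id).tendsto 0
    simpa using this.mono_left nhdsWithin_le_nhds
  have hΦ : Tendsto (fun ε : ℝ => Real.pi * x + (Gb x (x-ε) - Gb x (x+ε)))
      (nhdsWithin 0 (Set.Ioi 0)) (nhds (Real.pi * x)) := by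
    have := ((hGx.tendsto.comp htm).sub (hGx.tendsto.comp htp)).const_add (Real.pi * x)
    simpa using this
  apply Tendsto.congr' _ hΦ
  filter_upwards [hev] with ε hε
  obtain ⟨hε0, hεδ⟩ := hε
  have hεa : ε < x + 1 := lt_of_lt_of_le hεδ (min_le_left _ _)
  have hεb : ε < 1 - x := lt_of_lt_of_le hεδ (min_le_right _ _)
  rw [base_left ⟨hx1, hx2⟩ hε0 hεa, base_right ⟨hx1, hx2⟩ hε0 hεb,
    Fb_one ⟨hx1, hx2⟩, Fb_neg_one ⟨hx1, hx2⟩, Fb_eq, Fb_eq]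
  have e1 : x - (x - ε) = ε := by ring
  have e2 : Real.log (x - (x + ε)) = Real.log ε := by
    rw [show x - (x+ε) = -ε by ring, Real.log_neg_eq_log]
  rw [e1, e2]
  ring

noncomputable def Sx (x : ℝ) (p : ℝ[X]) (ε : ℝ) : ℝ :=
  (∫ ξ in (-1:ℝ)..(x-ε), Real.sqrt (1-ξ^2) * p.eval ξ / (x-ξ)) +
  ∫ ξ in (x+ε)..(1:ℝ), Real.sqrt (1-ξ^2) * p.eval ξ / (x-ξ)

lemma ne_left {x ε t : ℝ} (hx : x ∈ Set.Ioo (-1:ℝ) 1) (hε : 0 < ε)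
    (ht : t ∈ Set.uIcc (-1:ℝ) (x-ε)) : x - t ≠ 0 := by
  have h1 : t ≤ max (-1) (x-ε) := (Set.mem_uIcc.mp ht).elim (fun h => le_max_of_le_right h.2)
    (fun h => le_max_of_le_left h.2)
  have h2 : max (-1:ℝ) (x-ε) < x := max_lt (by linarith [hx.1]) (by linarith)
  intro h
  have : x = t := sub_eq_zero.mp h
  linarith

lemma ne_right {x ε t : ℝ} (hx : x ∈ Set.Ioo (-1:ℝ) 1) (hε : 0 < ε)
    (ht : t ∈ Set.uIcc (x+ε) (1:ℝ)) : x - t ≠ 0 := by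
  have h1 : min (x+ε) (1:ℝ) ≤ t := (Set.mem_uIcc.mp ht).elim (fun h => le_trans (min_le_left _ _) h.1)
    (fun h => le_trans (min_le_right _ _) h.1)
  have h2 : x < min (x+ε) (1:ℝ) := lt_min (by linarith) (by linarith [hx.2])
  intro h
  have : x = t := sub_eq_zero.mp h
  linarith

lemma intg_left {x ε : ℝ} (hx : x ∈ Set.Ioo (-1:ℝ) 1) (hε : 0 < ε) (p : ℝ[X]) :
    IntervalIntegrable (fun t => Real.sqrt (1-t^2) * p.eval t / (x-t))
      MeasureTheory.volume (-1) (x-ε) := by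
  apply ContinuousOn.intervalIntegrable
  exact ContinuousOn.div (cont_sqrt_one_sub_sq.mul p.continuous).continuousOn
    (by continuity : Continuous fun t : ℝ => x - t).continuousOn
    (fun t ht => ne_left hx hε ht)

lemma intg_right {x ε : ℝ} (hx : x ∈ Set.Ioo (-1:ℝ) 1) (hε : 0 < ε) (p : ℝ[X]) :
    IntervalIntegrable (fun t => Real.sqrt (1-t^2) * p.eval t / (x-t))
      MeasureTheory.volume (x+ε) 1 := by
  apply ContinuousOn.intervalIntegrable
  exact ContinuousOn.div (cont_sqrt_one_sub_sq.mul p.continuous).continuousOn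
    (by continuity : Continuous fun t : ℝ => x - t).continuousOn
    (fun t ht => ne_right hx hε ht)

lemma piece_eq {x t : ℝ} (n : ℤ) (h : x - t ≠ 0) :
    Real.sqrt (1-t^2) * (U ℝ (n+2)).eval t / (x-t)
      = 2*x*(Real.sqrt (1-t^2) * (U ℝ (n+1)).eval t / (x-t))
        - Real.sqrt (1-t^2) * (U ℝ n).eval t / (x-t)
        - 2*(Real.sqrt (1-t^2) * (U ℝ (n+1)).eval t) := by
  have hu := congr_arg (Polynomial.eval t) (U_add_two ℝ n)
  simp only [eval_mul, eval_sub, eval_add, eval_ofNat, eval_X] at hu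
  rw [hu]
  field_simp
  ring

lemma Sx_rec {x : ℝ} (hx : x ∈ Set.Ioo (-1:ℝ) 1) (n : ℤ) {ε : ℝ} (hε : 0 < ε) :
    Sx x (U ℝ (n+2)) ε = 2*x*Sx x (U ℝ (n+1)) ε - Sx x (U ℝ n) ε
      - 2*((∫ ξ in (-1:ℝ)..(x-ε), Real.sqrt (1-ξ^2) * (U ℝ (n+1)).eval ξ)
         + ∫ ξ in (x+ε)..(1:ℝ), Real.sqrt (1-ξ^2) * (U ℝ (n+1)).eval ξ) := by
  have hg : Continuous fun t : ℝ => Real.sqrt (1-t^2) * (U ℝ (n+1)).eval t :=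
    cont_sqrt_one_sub_sq.mul (U ℝ (n+1)).continuous
  have hL : (∫ ξ in (-1:ℝ)..(x-ε), Real.sqrt (1-ξ^2) * (U ℝ (n+2)).eval ξ / (x-ξ))
      = 2*x*(∫ ξ in (-1:ℝ)..(x-ε), Real.sqrt (1-ξ^2) * (U ℝ (n+1)).eval ξ / (x-ξ))
        - (∫ ξ in (-1:ℝ)..(x-ε), Real.sqrt (1-ξ^2) * (U ℝ n).eval ξ / (x-ξ))
        - 2*(∫ ξ in (-1:ℝ)..(x-ε), Real.sqrt (1-ξ^2) * (U ℝ (n+1)).eval ξ) := by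
    rw [← intervalIntegral.integral_const_mul, ← intervalIntegral.integral_const_mul,
      ← intervalIntegral.integral_sub ((intg_left hx hε _).const_mul _) (intg_left hx hε _),
      ← intervalIntegral.integral_sub (((intg_left hx hε _).const_mul _).sub (intg_left hx hε _))
        ((hg.intervalIntegrable _ _).const_mul _)]
    apply intervalIntegral.integral_congr
    intro t ht
    exact piece_eq n (ne_left hx hε ht)
  have hR : (∫ ξ in (x+ε)..(1:ℝ), Real.sqrt (1-ξ^2) * (U ℝ (n+2)).eval ξ / (x-ξ))
      = 2*x*(∫ ξ in (x+ε)..(1:ℝ), Real.sqrt (1-ξ^2) * (U ℝ (n+1)).eval ξ / (x-ξ))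
        - (∫ ξ in (x+ε)..(1:ℝ), Real.sqrt (1-ξ^2) * (U ℝ n).eval ξ / (x-ξ))
        - 2*(∫ ξ in (x+ε)..(1:ℝ), Real.sqrt (1-ξ^2) * (U ℝ (n+1)).eval ξ) := by
    rw [← intervalIntegral.integral_const_mul, ← intervalIntegral.integral_const_mul,
      ← intervalIntegral.integral_sub ((intg_right hx hε _).const_mul _) (intg_right hx hε _),
      ← intervalIntegral.integral_sub (((intg_right hx hε _).const_mul _).sub (intg_right hx hε _))
        ((hg.intervalIntegrable _ _).const_mul _)]
    apply intervalIntegral.integral_congr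
    intro t ht
    exact piece_eq n (ne_right hx hε ht)
  simp only [Sx, hL, hR]
  ring

lemma J_tendsto {x : ℝ} (hx : x ∈ Set.Ioo (-1:ℝ) 1) {g : ℝ → ℝ} (hg : Continuous g) :
    Tendsto (fun ε : ℝ => (∫ t in (-1:ℝ)..(x-ε), g t) + ∫ t in (x+ε)..(1:ℝ), g t)
      (nhdsWithin 0 (Set.Ioi 0)) (nhds (∫ t in (-1:ℝ)..1, g t)) := by
  have hint : ∀ a b : ℝ, IntervalIntegrable g MeasureTheory.volume a b :=
    fun a b => hg.intervalIntegrable a b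
  have hsplit : ∀ ε : ℝ, ∫ t in (x+ε)..(1:ℝ), g t
      = (∫ t in (-1:ℝ)..1, g t) - ∫ t in (-1:ℝ)..(x+ε), g t := by
    intro ε
    rw [← intervalIntegral.integral_add_adjacent_intervals (hint (-1) (x+ε)) (hint (x+ε) 1)]
    ring
  have hcont : Continuous fun y : ℝ => ∫ t in (-1:ℝ)..y, g t :=
    intervalIntegral.continuous_primitive hint (-1)
  have htm : Tendsto (fun ε : ℝ => x - ε) (nhdsWithin 0 (Set.Ioi 0)) (nhds x) := by
    have : Tendsto (fun ε : ℝ => x - ε) (nhds 0) (nhds (x - 0)) :=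
      (continuous_const.sub continuous_id).tendsto 0
    simpa using this.mono_left nhdsWithin_le_nhds
  have htp : Tendsto (fun ε : ℝ => x + ε) (nhdsWithin 0 (Set.Ioi 0)) (nhds x) := by
    have : Tendsto (fun ε : ℝ => x + ε) (nhds 0) (nhds (x + 0)) :=
      (continuous_const.add continuous_id).tendsto 0
    simpa using this.mono_left nhdsWithin_le_nhds
  have : Tendsto (fun ε : ℝ => (∫ t in (-1:ℝ)..(x-ε), g t)
      + ((∫ t in (-1:ℝ)..1, g t) - ∫ t in (-1:ℝ)..(x+ε), g t))
      (nhdsWithin 0 (Set.Ioi 0))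
      (nhds ((∫ t in (-1:ℝ)..x, g t) + ((∫ t in (-1:ℝ)..1, g t) - ∫ t in (-1:ℝ)..x, g t))) := by
    exact ((hcont.continuousAt.tendsto.comp htm)).add
      (tendsto_const_nhds.sub (hcont.continuousAt.tendsto.comp htp))
  simp only [hsplit]
  convert this using 2
  ring

lemma cheb_q (n : ℤ) :
    (1 - X^2) * derivative ((n:ℝ[X]) * U ℝ (n+1) - ((n:ℝ[X])+2) * U ℝ (n-1))
      - X * ((n:ℝ[X]) * U ℝ (n+1) - ((n:ℝ[X])+2) * U ℝ (n-1))
    = 2*(n:ℝ[X])*((n:ℝ[X])+2)*((1-X^2)*U ℝ n) := by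
  have H1 := add_one_mul_T_eq_poly_in_U (R:=ℝ) (n+1)
  have H2 := add_one_mul_T_eq_poly_in_U (R:=ℝ) (n-1)
  have H3 := one_sub_X_sq_mul_U_eq_pol_in_T ℝ n
  have H4 := T_add_two ℝ n
  have e1 : n + 1 + 1 = n + 2 := by ring
  have e2 : n - 1 + 1 = (n:ℤ) := by ring
  rw [e1] at H1
  rw [e2] at H2
  simp only [derivative_sub, derivative_mul, derivative_intCast, derivative_add,
    derivative_ofNat, zero_mul, zero_add, add_zero] at *
  push_cast at H1 H2 ⊢
  linear_combination (norm := ring_nf) (n:ℝ[X])*H1 - ((n:ℝ[X])+2)*H2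
    - 2*(n:ℝ[X])*((n:ℝ[X])+2)*H3 + (n:ℝ[X])*((n:ℝ[X])+2)*H4

lemma integral_sqrt_U_eq_zero' (m : ℤ) (hm : 1 ≤ m) :
    ∫ t in (-1:ℝ)..1, Real.sqrt (1 - t^2) * (U ℝ m).eval t = 0 := by
  set q : ℝ[X] := (m:ℝ[X]) * U ℝ (m+1) - ((m:ℝ[X])+2) * U ℝ (m-1) with hq
  set G : ℝ → ℝ := fun t => Real.sqrt (1 - t^2) * q.eval t with hG
  have hcontf : Continuous fun t : ℝ => Real.sqrt (1 - t^2) * (U ℝ m).eval t := by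
    exact (Real.continuous_sqrt.comp (by continuity)).mul (U ℝ m).continuous
  have hcont : Continuous G := by
    exact (Real.continuous_sqrt.comp (by continuity)).mul q.continuous
  have key : ∀ t ∈ Set.Ioo (-1:ℝ) 1, HasDerivAt G
      ((2*(m:ℝ)*((m:ℝ)+2)) * (Real.sqrt (1-t^2) * (U ℝ m).eval t)) t := by
    intro t ht
    have h1 : (0:ℝ) < 1 - t^2 := by nlinarith [ht.1, ht.2]
    have hu : Real.sqrt (1-t^2) ^ 2 = 1 - t^2 := Real.sq_sqrt h1.le
    have hune : Real.sqrt (1-t^2) ≠ 0 := by positivity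
    have hd := (hasDerivAt_sqrt_one_sub_sq' ht).mul (q.hasDerivAt t)
    refine hd.congr_deriv (Eq.symm ?_)
    have hkey := congr_arg (Polynomial.eval t) (cheb_q m)
    simp only [eval_mul, eval_sub, eval_add, eval_pow, eval_X, eval_one, eval_intCast,
      eval_ofNat, Int.cast_ofNat] at hkey
    have hqe : Polynomial.eval t q = (m:ℝ)*Polynomial.eval t (U ℝ (m+1)) - ((m:ℝ)+2)*Polynomial.eval t (U ℝ (m-1)) := by
      simp [hq]
    field_simp
    linear_combination (-1:ℝ)*hkey + (2*(m:ℝ)*((m:ℝ)+2)*Polynomial.eval t (U ℝ m) - Polynomial.eval t (derivative q))*hu + t*hqe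
  have hint : IntervalIntegrable
      (fun t => (2*(m:ℝ)*((m:ℝ)+2)) * (Real.sqrt (1-t^2) * (U ℝ m).eval t)) MeasureTheory.volume (-1) 1 :=
    (continuous_const.mul hcontf).intervalIntegrable _ _
  have hftc := integral_eq_sub_of_hasDeriv_right_of_le (by norm_num : (-1:ℝ) ≤ 1)
    hcont.continuousOn (fun t ht => (key t ht).hasDerivWithinAt) hint
  have hG1 : G 1 = 0 := by simp [hG]
  have hGm1 : G (-1) = 0 := by simp [hG]
  rw [hG1, hGm1, sub_zero, intervalIntegral.integral_const_mul] at hftc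
  have hne : (2*(m:ℝ)*((m:ℝ)+2)) ≠ 0 := by
    have : (1:ℝ) ≤ (m:ℝ) := by exact_mod_cast hm
    positivity
  exact (mul_eq_zero.mp hftc).resolve_left hne

lemma main_aux {x : ℝ} (hx : x ∈ Set.Ioo (-1:ℝ) 1) : ∀ k : ℕ,
    (Tendsto (fun ε : ℝ => Sx x (U ℝ (k:ℤ)) ε) (nhdsWithin 0 (Set.Ioi 0))
      (nhds (Real.pi * (T ℝ ((k:ℤ)+1)).eval x)))
    ∧ (Tendsto (fun ε : ℝ => Sx x (U ℝ ((k:ℤ)+1)) ε) (nhdsWithin 0 (Set.Ioi 0))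
      (nhds (Real.pi * (T ℝ ((k:ℤ)+2)).eval x))) := by
  have hP0 : Tendsto (fun ε : ℝ => Sx x (U ℝ 0) ε) (nhdsWithin 0 (Set.Ioi 0))
      (nhds (Real.pi * (T ℝ 1).eval x)) := by
    have he : (fun ε : ℝ => Sx x (U ℝ 0) ε)
        = fun ε : ℝ => (∫ ξ in (-1:ℝ)..(x-ε), Real.sqrt (1-ξ^2)/(x-ξ))
          + ∫ ξ in (x+ε)..(1:ℝ), Real.sqrt (1-ξ^2)/(x-ξ) := by
      funext ε
      simp [Sx, U_zero]
    rw [he]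
    have hT1 : (T ℝ 1).eval x = x := by simp [T_one]
    rw [hT1]
    exact base_tendsto hx
  have hP1 : Tendsto (fun ε : ℝ => Sx x (U ℝ 1) ε) (nhdsWithin 0 (Set.Ioi 0))
      (nhds (Real.pi * (T ℝ 2).eval x)) := by
    have hg : Continuous fun t : ℝ => Real.sqrt (1-t^2) * (U ℝ 0).eval t :=
      cont_sqrt_one_sub_sq.mul (U ℝ 0).continuous
    have hJ := (J_tendsto hx hg).const_mul 2
    have hlim := (hP0.const_mul (2*x)).sub hJ
    have hval : 2*x*(Real.pi * (T ℝ 1).eval x)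
        - 2*(∫ t in (-1:ℝ)..1, Real.sqrt (1-t^2) * (U ℝ 0).eval t)
        = Real.pi * (T ℝ 2).eval x := by
      have hI : (∫ t in (-1:ℝ)..1, Real.sqrt (1-t^2) * (U ℝ 0).eval t)
          = Real.pi / 2 := by
        simp only [U_zero, eval_one, mul_one]
        exact integral_sqrt_one_sub_sq
      rw [hI]
      simp [T_one, T_two]
      ring
    rw [hval] at hlim
    apply hlim.congr'
    filter_upwards [self_mem_nhdsWithin] with ε hε
    have hrec := Sx_rec hx (-1) hε
    have hm1 : Sx x (U ℝ (-1)) ε = 0 := by simp [Sx, U_neg_one]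
    have e1 : (-1:ℤ) + 2 = 1 := by ring
    have e2 : (-1:ℤ) + 1 = 0 := by ring
    rw [e1, e2, hm1] at hrec
    rw [hrec]
    ring
  intro k
  induction k with
  | zero =>
    constructor
    · simp only [Nat.cast_zero, zero_add]
      exact hP0
    · simp only [Nat.cast_zero, zero_add]
      exact hP1
  | succ k ih =>
    obtain ⟨hk, hk1⟩ := ih
    have ec : ((k+1:ℕ):ℤ) = (k:ℤ)+1 := by push_cast; ring
    constructor
    · rw [ec, show (k:ℤ)+1+1 = (k:ℤ)+2 by ring]
      exact hk1
    · rw [ec, show (k:ℤ)+1+1 = (k:ℤ)+2 by ring, show (k:ℤ)+1+2 = (k:ℤ)+3 by ring]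
      have hg : Continuous fun t : ℝ => Real.sqrt (1-t^2) * (U ℝ ((k:ℤ)+1)).eval t :=
        cont_sqrt_one_sub_sq.mul (U ℝ ((k:ℤ)+1)).continuous
      have hJ0 : (∫ t in (-1:ℝ)..1, Real.sqrt (1-t^2) * (U ℝ ((k:ℤ)+1)).eval t) = 0 :=
        integral_sqrt_U_eq_zero' ((k:ℤ)+1) (by omega)
      have hJ := (J_tendsto hx hg).const_mul 2
      rw [hJ0, mul_zero] at hJ
      have hlim := ((hk1.const_mul (2*x)).sub hk).sub hJ
      have hval : 2*x*(Real.pi * (T ℝ ((k:ℤ)+2)).eval x) - Real.pi * (T ℝ ((k:ℤ)+1)).eval x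
          - 0 = Real.pi * (T ℝ ((k:ℤ)+3)).eval x := by
        have hT := congr_arg (Polynomial.eval x) (T_add_two ℝ ((k:ℤ)+1))
        simp only [eval_mul, eval_sub, eval_add, eval_ofNat, eval_X] at hT
        rw [show (k:ℤ)+3 = (k:ℤ)+1+2 by ring, hT]
        ring
      rw [hval] at hlim
      apply hlim.congr'
      filter_upwards [self_mem_nhdsWithin] with ε hε
      have hrec := Sx_rec hx (k:ℤ) hε
      rw [hrec]

/-- For `n ≥ 1` and `x ∈ (-1,1)`, the principal value
`(1/π) P.V. ∫_{-1}^{1} √(1-ξ²) Uₙ₋₁(ξ) / (x-ξ) dξ` exists and equals `Tₙ(x)`. -/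
theorem pv_sqrt_chebyshevU (n : ℕ) (hn : 1 ≤ n) (x : ℝ) (hx : x ∈ Set.Ioo (-1:ℝ) 1) :
    Tendsto
      (fun ε : ℝ =>
        (1 / Real.pi) *
          ((∫ ξ in (-1:ℝ)..(x - ε),
              Real.sqrt (1 - ξ ^ 2) * (Polynomial.Chebyshev.U ℝ ((n : ℤ) - 1)).eval ξ / (x - ξ)) +
           ∫ ξ in (x + ε)..(1:ℝ),
              Real.sqrt (1 - ξ ^ 2) * (Polynomial.Chebyshev.U ℝ ((n : ℤ) - 1)).eval ξ / (x - ξ)))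
      (nhdsWithin 0 (Set.Ioi 0))
      (nhds ((Polynomial.Chebyshev.T ℝ n).eval x)) := by
  obtain ⟨m, rfl⟩ : ∃ m, n = m + 1 := ⟨n-1, (Nat.succ_pred_eq_of_pos hn).symm⟩
  have h := ((main_aux hx m).1).const_mul (1/Real.pi)
  have hπ : (1/Real.pi) * (Real.pi * (T ℝ ((m:ℤ)+1)).eval x) = (T ℝ ((m:ℤ)+1)).eval x := by
    field_simp
  rw [hπ] at h
  have e1 : ((m+1:ℕ):ℤ) - 1 = (m:ℤ) := by push_cast; ring
  have e2 : ((m+1:ℕ):ℤ) = (m:ℤ)+1 := by push_cast; ring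
  rw [e1, e2]
  exact h.congr (fun ε => by rw [Sx])
end

section
/- Let (a_n)_{n≥0} be a real sequence with ∑_{n≥1} a_n^2 < ∞, and define φ̄ := a_0 + (1/2) ∑_{n≥1} a_n ∫_{-1}^{1} T_n(x) dx (the series converges absolutely by the Cauchy–Schwarz inequality). Then a_0^2 ≤ ((π^2 − 8)/8) ∑_{n≥1} a_n^2 + 2 φ̄^2. -/
set_option maxHeartbeats 1000000

open Polynomial Polynomial.Chebyshev Real

lemma two_T_aux (n : ℤ) : (2 : ℝ[X]) * T ℝ n = U ℝ n - U ℝ (n - 2) := by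
  linear_combination 2 * T_eq_U_sub_X_mul_U ℝ n + U_eq ℝ n

lemma T_eval_one_aux (n : ℤ) : (T ℝ n).eval 1 = 1 := by
  have h := T_real_cos (θ := 0) (n := n)
  simpa using h

lemma T_eval_neg_one_aux (n : ℤ) : (T ℝ n).eval (-1) = (-1) ^ n := by
  have h := T_real_cos (θ := π) (n := n)
  have h2 := Real.cos_add_int_mul_pi 0 n
  simp only [Real.cos_pi] at h
  simpa using h.trans (by simpa using h2)

lemma integral_T_aux (n : ℕ) :
    ∫ x in (-1:ℝ)..1, (T ℝ ((n : ℤ) + 2)).eval x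
      = -(1 + (-1:ℝ)^n) / ((n+1) * (n+3)) := by
  have h1 : ((n : ℝ) + 3) ≠ 0 := by positivity
  have h2 : ((n : ℝ) + 1) ≠ 0 := by positivity
  set F : ℝ → ℝ := fun y =>
    (T ℝ ((n : ℤ) + 3)).eval y / (2*(n+3)) - (T ℝ ((n : ℤ) + 1)).eval y / (2*(n+1)) with hF
  have key : ∀ x : ℝ, HasDerivAt F ((T ℝ ((n : ℤ) + 2)).eval x) x := by
    intro x
    have hA := ((T ℝ ((n : ℤ) + 3)).hasDerivAt x).div_const (2*(n+3))
    have hB := ((T ℝ ((n : ℤ) + 1)).hasDerivAt x).div_const (2*(n+1))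
    have := hA.sub hB
    refine this.congr_deriv ?_
    rw [T_derivative_eq_U, T_derivative_eq_U]
    have hid := two_T_aux ((n : ℤ) + 2)
    have := congrArg (fun p : ℝ[X] => p.eval x) hid
    simp only [eval_mul, eval_sub, eval_ofNat, eval_intCast] at this ⊢
    push_cast at this ⊢
    have hsimp : ∀ (c A : ℝ), c ≠ 0 → c * A / (2 * c) = A / 2 := by
      intro c A hc; field_simp
    rw [hsimp _ _ h1, hsimp _ _ h2]
    simp only [show ((n:ℤ)+3-1)=(n:ℤ)+2 from by ring, show ((n:ℤ)+2-2)=(n:ℤ) from by ring,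
      show ((n:ℤ)+1-1)=(n:ℤ) from by ring] at this ⊢
    linarith [this]
  have hcont : IntervalIntegrable (fun x => (T ℝ ((n : ℤ) + 2)).eval x)
      MeasureTheory.volume (-1) 1 :=
    ((T ℝ ((n : ℤ) + 2)).continuous_aeval).intervalIntegrable _ _
  rw [intervalIntegral.integral_eq_sub_of_hasDerivAt (fun x _ => key x) hcont]
  have e1 : ((n : ℤ) + 3) = ((n + 3 : ℕ) : ℤ) := by push_cast; ring
  have e2 : ((n : ℤ) + 1) = ((n + 1 : ℕ) : ℤ) := by push_cast; ring
  simp only [hF, T_eval_one_aux, T_eval_neg_one_aux, e1, e2, zpow_natCast]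
  have p1 : ((-1:ℝ)) ^ (n + 3) = -(-1:ℝ)^n := by rw [pow_add]; ring
  have p2 : ((-1:ℝ)) ^ (n + 1) = -(-1:ℝ)^n := by rw [pow_add]; ring
  rw [p1, p2]
  field_simp
  ring

lemma hasSum_odd_sq : HasSum (fun j : ℕ => (1:ℝ)/(2*(j:ℝ)+1)^2) (π^2/8) := by
  have hz : HasSum (fun n : ℕ => (1:ℝ)/(n:ℝ)^2) (π^2/6) := hasSum_zeta_two
  have he : HasSum (fun j : ℕ => (1:ℝ)/((2*j : ℕ):ℝ)^2) (π^2/24) := by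
    have h := hz.mul_left ((1:ℝ)/4)
    have e : (fun j : ℕ => (1:ℝ)/((2*j:ℕ):ℝ)^2) = fun j : ℕ => (1/4) * ((1:ℝ)/(j:ℝ)^2) := by
      funext j
      push_cast
      rw [mul_pow, one_div_mul_one_div]
      norm_num
    rw [e]
    convert h using 1
    · rfl
    · ring
  have h0 : Summable (fun j : ℕ => (1:ℝ)/((j:ℝ)+1)^2) := by
    have := (summable_nat_add_iff 1).2 hz.summable
    apply this.congr
    intro j; push_cast; ring_nf
  have hsummable : Summable (fun j : ℕ => (1:ℝ)/((2*j+1 : ℕ):ℝ)^2) := by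
    refine Summable.of_nonneg_of_le (fun j => by positivity) (fun j => ?_) h0
    apply one_div_le_one_div_of_le (by positivity)
    push_cast
    nlinarith [Nat.cast_nonneg (α := ℝ) j]
  obtain ⟨S, hS⟩ := hsummable
  have key : π^2/24 + S = π^2/6 :=
    (HasSum.even_add_odd (f := fun n : ℕ => (1:ℝ)/(n:ℝ)^2) he hS).unique hz
  have hSval : S = π^2/8 := by linarith
  rw [hSval] at hS
  have e2 : (fun j : ℕ => (1:ℝ)/(2*(j:ℝ)+1)^2) = fun j : ℕ => 1/((2*j+1:ℕ):ℝ)^2 := by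
    funext j; push_cast; ring
  rw [e2]; exact hS

lemma hasSum_odd_sq_shift : HasSum (fun j : ℕ => (1:ℝ)/(2*(j:ℝ)+3)^2) (π^2/8 - 1) := by
  have h0 : HasSum (fun j : ℕ => (1:ℝ)/(2*(j:ℝ)+1)^2)
      ((π^2/8 - 1) + ∑ i ∈ Finset.range 1, (1:ℝ)/(2*(i:ℝ)+1)^2) := by
    convert hasSum_odd_sq using 1
    norm_num
  have h := (hasSum_nat_add_iff (f := fun j : ℕ => (1:ℝ)/(2*(j:ℝ)+1)^2) 1).mpr h0
  have e : (fun j : ℕ => (1:ℝ)/(2*(j:ℝ)+3)^2)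
      = fun j : ℕ => (1:ℝ)/(2*((j+1 : ℕ):ℝ)+1)^2 := by
    funext j; push_cast; ring_nf
  rw [e]; exact h

lemma hasSum_tele : HasSum (fun j : ℕ => (1:ℝ)/(2*(j:ℝ)+1) - 1/(2*(j:ℝ)+3)) 1 := by
  rw [hasSum_iff_tendsto_nat_of_nonneg]
  · have hsum : ∀ N : ℕ, ∑ j ∈ Finset.range N, ((1:ℝ)/(2*(j:ℝ)+1) - 1/(2*(j:ℝ)+3))
        = 1 - 1/(2*(N:ℝ)+1) := by
      intro N
      induction N with
      | zero => simp
      | succ N ih =>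
        rw [Finset.sum_range_succ, ih]
        have h1 : (0:ℝ) < 2*(N:ℝ)+1 := by positivity
        have h3 : (0:ℝ) < 2*(N:ℝ)+3 := by positivity
        push_cast
        field_simp
        ring
    simp only [hsum]
    have ht : Filter.Tendsto (fun N : ℕ => (2*(N:ℝ)+1)) Filter.atTop Filter.atTop := by
      apply Filter.tendsto_atTop_add_const_right
      exact (tendsto_natCast_atTop_atTop (R := ℝ)).const_mul_atTop (by norm_num)
    have := ht.inv_tendsto_atTop
    simp only [one_div]
    simpa using Filter.Tendsto.sub (tendsto_const_nhds (x := (1:ℝ))) this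
  · intro j
    have h1 : (0:ℝ) < 2*(j:ℝ)+1 := by positivity
    have h3 : (0:ℝ) < 2*(j:ℝ)+3 := by positivity
    have := one_div_le_one_div_of_le h1 (by linarith : 2*(j:ℝ)+1 ≤ 2*(j:ℝ)+3)
    linarith

lemma hasSum_D : HasSum (fun j : ℕ => ((1:ℝ)/(2*(j:ℝ)+1) - 1/(2*(j:ℝ)+3))^2) (π^2/4 - 2) := by
  have h := (hasSum_odd_sq.add hasSum_odd_sq_shift).sub hasSum_tele
  have e : (fun j : ℕ => ((1:ℝ)/(2*(j:ℝ)+1) - 1/(2*(j:ℝ)+3))^2)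
      = fun j : ℕ => ((1:ℝ)/(2*(j:ℝ)+1)^2 + 1/(2*(j:ℝ)+3)^2)
        - ((1:ℝ)/(2*(j:ℝ)+1) - 1/(2*(j:ℝ)+3)) := by
    funext j
    have h1 : (2*(j:ℝ)+1) ≠ 0 := by positivity
    have h3 : (2*(j:ℝ)+3) ≠ 0 := by positivity
    field_simp
    ring
  rw [e]
  convert h using 1
  · rfl
  · ring

/-- If `∑_{n≥1} aₙ² < ∞` and `φ̄ = a₀ + (1/2) ∑_{n≥1} aₙ ∫_{-1}^{1} Tₙ(x) dx`, then
`a₀² ≤ ((π² − 8)/8) ∑_{n≥1} aₙ² + 2 φ̄²`. -/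
theorem coeff_zero_sq_le (a : ℕ → ℝ)
    (ha : Summable fun n : ℕ => (a (n + 1)) ^ 2)
    (φbar : ℝ)
    (hφbar : φbar = a 0 + (1 / 2) *
      ∑' n : ℕ, a (n + 1) * ∫ x in (-1:ℝ)..1, (Polynomial.Chebyshev.T ℝ (n + 1)).eval x) :
    (a 0) ^ 2 ≤ (Real.pi ^ 2 - 8) / 8 * (∑' n : ℕ, (a (n + 1)) ^ 2) + 2 * φbar ^ 2 := by
  classical
  set d : ℕ → ℝ := fun n : ℕ =>
    ∫ x in (-1:ℝ)..1, (Polynomial.Chebyshev.T ℝ (n + 1)).eval x with hd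
  have hd0 : d 0 = 0 := by
    have e : d 0 = ∫ x in (-1:ℝ)..1, x := by
      simp only [hd]
      norm_num
    rw [e, integral_id]
    norm_num
  have hdk : ∀ k : ℕ, d (k+1) = -(1 + (-1:ℝ)^k) / (((k:ℝ)+1) * ((k:ℝ)+3)) := by
    intro k
    have e : (((k+1:ℕ)) : ℤ) + 1 = (k:ℤ) + 2 := by push_cast; ring
    have e2 : d (k+1) = ∫ x in (-1:ℝ)..1, (Polynomial.Chebyshev.T ℝ ((k:ℤ)+2)).eval x := by
      simp only [hd, e]
    rw [e2, integral_T_aux]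
  have hodd : ∀ j : ℕ, d (2*j+1) ^ 2 = ((1:ℝ)/(2*(j:ℝ)+1) - 1/(2*(j:ℝ)+3))^2 := by
    intro j
    rw [hdk (2*j)]
    have hp : ((-1:ℝ))^(2*j) = 1 := by rw [pow_mul]; norm_num
    rw [hp]
    have h1 : (2*(j:ℝ)+1) ≠ 0 := by positivity
    have h3 : (2*(j:ℝ)+3) ≠ 0 := by positivity
    push_cast
    field_simp
    ring
  have heven0 : ∀ j : ℕ, d (2*j+2) = 0 := by
    intro j
    rw [hdk (2*j+1)]
    have hp : ((-1:ℝ))^(2*j+1) = -1 := by rw [pow_succ, pow_mul]; norm_num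
    rw [hp]
    norm_num
  have h1 : HasSum (fun k : ℕ => d (k+1)^2) (π^2/4 - 2 + 0) := by
    refine HasSum.even_add_odd (f := fun k : ℕ => d (k+1)^2) ?_ ?_
    · have e : (fun j : ℕ => d (2*j+1)^2)
          = fun j : ℕ => ((1:ℝ)/(2*(j:ℝ)+1) - 1/(2*(j:ℝ)+3))^2 := funext hodd
      exact e ▸ hasSum_D
    · have e : (fun j : ℕ => d (2*j+1+1)^2) = fun _ : ℕ => (0:ℝ) := by
        funext j
        rw [show 2*j+1+1 = 2*j+2 from rfl, heven0 j]
        norm_num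
      rw [e]
      exact hasSum_zero
  have htotal : HasSum (fun n : ℕ => d n ^ 2) (π^2/4 - 2) := by
    have h2 := HasSum.zero_add (f := fun n : ℕ => d n ^ 2) h1
    convert h2 using 1
    show _ = d 0 ^ 2 + _
    rw [hd0]
    ring
  have hDsummable : Summable (fun n : ℕ => d n ^ 2) := htotal.summable
  have habs : ∀ n : ℕ, |a (n+1) * d n| ≤ (a (n+1)^2 + d n ^2)/2 := by
    intro n
    rw [abs_mul]
    nlinarith [sq_nonneg (|a (n+1)| - |d n|), sq_abs (a (n+1)), sq_abs (d n),
      abs_nonneg (a (n+1)), abs_nonneg (d n)]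
  have hW : Summable (fun n : ℕ => a (n+1) * d n) := by
    apply Summable.of_abs
    exact Summable.of_nonneg_of_le (fun n => abs_nonneg _) habs ((ha.add hDsummable).div_const 2)
  set W := ∑' n : ℕ, a (n+1) * d n with hWdef
  have hCS : W^2 ≤ (∑' n : ℕ, a (n+1)^2) * (π^2/4 - 2) := by
    have hten : Filter.Tendsto (fun N : ℕ => (∑ n ∈ Finset.range N, a (n+1) * d n)^2)
        Filter.atTop (nhds (W^2)) := (hW.hasSum.tendsto_sum_nat).pow 2
    refine le_of_tendsto hten (Filter.Eventually.of_forall fun N => ?_)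
    calc (∑ n ∈ Finset.range N, a (n+1) * d n)^2
        ≤ (∑ n ∈ Finset.range N, a (n+1)^2) * (∑ n ∈ Finset.range N, d n ^2) :=
          Finset.sum_mul_sq_le_sq_mul_sq _ _ _
      _ ≤ (∑' n : ℕ, a (n+1)^2) * (π^2/4 - 2) := by
          apply mul_le_mul
          · exact Summable.sum_le_tsum _ (fun i _ => sq_nonneg _) ha
          · rw [← htotal.tsum_eq]
            exact Summable.sum_le_tsum _ (fun i _ => sq_nonneg _) hDsummable
          · positivity
          · exact tsum_nonneg fun i => sq_nonneg _
  have hφ : φbar = a 0 + (1/2) * W := hφbar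
  have hS0 : 0 ≤ ∑' n : ℕ, a (n+1)^2 := tsum_nonneg fun i => sq_nonneg _
  rw [show a 0 = φbar - W/2 from by linarith]
  nlinarith [sq_nonneg (φbar + W/2), hCS, hS0]
end

section
/- (Poincaré-type inequality for the nonlocal operator 𝒜, in Chebyshev-coefficient form.) Let (a_n)_{n≥0} be a real sequence with ∑_{n≥1} n a_n^2 < ∞, and define φ̄ := a_0 + (1/2) ∑_{n≥1} a_n ∫_{-1}^{1} T_n(x) dx. Then π a_0^2 + (π/2) ∑_{n≥1} a_n^2 ≤ ((π^2 − 4)/4) · (π/2) ∑_{n≥1} n a_n^2 + 2π φ̄^2. -/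
open Polynomial Polynomial.Chebyshev

noncomputable def chebInt (n : ℕ) : ℝ :=
  ∫ x in (-1:ℝ)..1, (Polynomial.Chebyshev.T ℝ (n + 1)).eval x

lemma chebInt_zero : chebInt 0 = 0 := by
  have h : ((0:ℕ):ℤ) + 1 = 1 := by norm_num
  simp [chebInt, h, T_one]

lemma U_sub_U' (m : ℤ) : U ℝ m - U ℝ (m-2) = 2 * T ℝ m := by
  linear_combination - U_eq ℝ m - 2 * T_eq_U_sub_X_mul_U ℝ m

lemma T_eval_one_ (k : ℤ) : (T ℝ k).eval 1 = 1 := by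
  induction k using Polynomial.Chebyshev.induct with
  | zero => simp
  | one => simp
  | add_two n h1 h2 => rw [T_add_two]; simp [h1, h2]; ring
  | neg_add_one n h1 h2 =>
      have := T_sub_two ℝ (-(n:ℤ) + 1)
      rw [show (-(n:ℤ) - 1) = (-(n:ℤ) + 1) - 2 by ring, this]
      simp only [show (-(n:ℤ) + 1 - 1) = -(n:ℤ) by ring, eval_sub, eval_mul, eval_ofNat, eval_X,
        h1, h2]
      ring

lemma T_eval_neg_one_ (k : ℤ) : (T ℝ k).eval (-1) = if Even k then 1 else -1 := by
  induction k using Polynomial.Chebyshev.induct with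
  | zero => simp
  | one => norm_num [Int.even_iff]
  | add_two n h1 h2 =>
      rw [T_add_two]
      have e1 : Even ((n:ℤ) + 2) ↔ Even (n:ℤ) := by simp [Int.even_add_one, parity_simps]
      have e2 : Even ((n:ℤ) + 1) ↔ ¬ Even (n:ℤ) := by simp [Int.even_add_one]
      simp only [eval_sub, eval_mul, eval_ofNat, eval_X, h1, h2, e1]
      by_cases h : Even (n:ℤ) <;> simp [h, e2.mpr, e2] <;> ring
  | neg_add_one n h1 h2 =>
      have := T_sub_two ℝ (-(n:ℤ) + 1)
      rw [show (-(n:ℤ) - 1) = (-(n:ℤ) + 1) - 2 by ring, this]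
      have e2 : Even (-(n:ℤ) + 1) ↔ ¬ Even (-(n:ℤ)) := by simp [Int.even_add_one]
      simp only [show (-(n:ℤ) + 1 - 1) = -(n:ℤ) by ring, eval_sub, eval_mul, eval_ofNat, eval_X,
        h1, h2]
      by_cases h : Even (-(n:ℤ))
      · have hodd : ¬ Even (-1 - (n:ℤ)) := fun hc => by simpa using hc.sub h
        simp [h, e2]
        norm_num
      · have heven : Even (-1 - (n:ℤ)) := by
          rw [show (-1 - (n:ℤ)) = (-(n:ℤ)+1) - 2 by ring]
          exact (e2.mpr h).sub even_two
        simp [h, e2]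
        norm_num

lemma chebInt_bound (n : ℕ) (hn : 1 ≤ n) : |chebInt n| ≤ 2 / (((n:ℝ)+1)^2 - 1) := by
  set m : ℤ := (n:ℤ) + 1 with hm
  set M : ℝ := (n:ℝ) + 1 with hM
  have hn1 : (1:ℝ) ≤ (n:ℝ) := by exact_mod_cast hn
  have hM1 : (0:ℝ) < M - 1 := by rw [hM]; linarith
  have hM2 : (0:ℝ) < M + 1 := by rw [hM]; positivity
  have hMne1 : M - 1 ≠ 0 := ne_of_gt hM1
  have hMne2 : M + 1 ≠ 0 := ne_of_gt hM2
  set F : ℝ → ℝ := fun x =>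
    ((M+1)⁻¹ * (T ℝ (m+1)).eval x - (M-1)⁻¹ * (T ℝ (m-1)).eval x)/2 with hF
  have hderiv : ∀ x ∈ Set.uIcc (-1:ℝ) 1, HasDerivAt F ((T ℝ m).eval x) x := by
    intro x _
    have h1 : HasDerivAt (fun y => (T ℝ (m+1)).eval y)
        ((derivative (T ℝ (m+1))).eval x) x := (T ℝ (m+1)).hasDerivAt x
    have h2 : HasDerivAt (fun y => (T ℝ (m-1)).eval y)
        ((derivative (T ℝ (m-1))).eval x) x := (T ℝ (m-1)).hasDerivAt x
    have hd := ((h1.const_mul ((M+1)⁻¹)).sub (h2.const_mul ((M-1)⁻¹))).div_const 2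
    have e1 : (derivative (T ℝ (m+1))).eval x = (M+1) * (U ℝ m).eval x := by
      rw [T_derivative_eq_U, show m+1-1 = m from by ring]
      simp only [eval_mul, eval_intCast]
      have hcast : ((m+1 : ℤ) : ℝ) = M + 1 := by rw [hm, hM]; push_cast; ring
      rw [hcast]
    have e2 : (derivative (T ℝ (m-1))).eval x = (M-1) * (U ℝ (m-2)).eval x := by
      rw [T_derivative_eq_U, show m-1-1 = m-2 from by ring]
      simp only [eval_mul, eval_intCast]
      have hcast : ((m-1 : ℤ) : ℝ) = M - 1 := by rw [hm, hM]; push_cast; ring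
      rw [hcast]
    have e3 : (U ℝ m).eval x - (U ℝ (m-2)).eval x = 2 * (T ℝ m).eval x := by
      have := congrArg (eval x) (U_sub_U' m)
      simpa using this
    have heq : ((M+1)⁻¹ * (derivative (T ℝ (m+1))).eval x
        - (M-1)⁻¹ * (derivative (T ℝ (m-1))).eval x)/2 = (T ℝ m).eval x := by
      rw [e1, e2, inv_mul_cancel_left₀ hMne2, inv_mul_cancel_left₀ hMne1]
      linarith [e3]
    rw [← heq]
    exact hd
  have hint : IntervalIntegrable (fun x => (T ℝ m).eval x) MeasureTheory.volume (-1) 1 :=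
    (Polynomial.continuous _).intervalIntegrable (-1) 1
  have hFTC := intervalIntegral.integral_eq_sub_of_hasDerivAt hderiv hint
  have hInt : chebInt n = F 1 - F (-1) := hFTC
  have hpar : Even (m+1) ↔ Even (m-1) := by
    constructor <;> intro h
    · have := h.sub (even_two (α := ℤ)); simpa [show m+1-2 = m-1 from by ring] using this
    · have := h.add (even_two (α := ℤ)); simpa [show m-1+2 = m+1 from by ring] using this
  set t : ℝ := if Even (m+1) then 1 else -1 with ht
  have hev1 : (T ℝ (m+1)).eval (-1) = t := T_eval_neg_one_ (m+1)
  have hev2 : (T ℝ (m-1)).eval (-1) = t := by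
    rw [T_eval_neg_one_ (m-1), ht]
    by_cases h : Even (m+1)
    · rw [if_pos (hpar.mp h), if_pos h]
    · rw [if_neg (fun hc => h (hpar.mpr hc)), if_neg h]
  have hval : F 1 - F (-1) = ((1 - t)/2) * ((M+1)⁻¹ - (M-1)⁻¹) := by
    rw [hF]
    simp only [T_eval_one_ (m+1), T_eval_one_ (m-1), hev1, hev2]
    ring
  have habs_t : |1 - t| ≤ 2 := by
    rw [ht]; by_cases h : Even (m+1) <;> simp [h] <;> norm_num
  have hM2pos : (0:ℝ) < M^2 - 1 := by nlinarith
  have hfrac : (M-1)⁻¹ - (M+1)⁻¹ = 2/(M^2-1) := by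
    rw [inv_sub_inv hMne1 hMne2]
    congr 1
    · ring
    · ring
  rw [hInt, hval, abs_mul]
  have h1 : |(M+1)⁻¹ - (M-1)⁻¹| = 2/(M^2-1) := by
    rw [abs_sub_comm, abs_of_nonneg (by rw [hfrac]; positivity), hfrac]
  rw [h1]
  have h2 : |(1-t)/2| ≤ 1 := by
    rw [abs_div, abs_of_pos (by norm_num : (0:ℝ) < 2)]
    linarith [habs_t]
  calc |(1-t)/2| * (2/(M^2-1)) ≤ 1 * (2/(M^2-1)) :=
        mul_le_mul_of_nonneg_right h2 (by positivity)
    _ = 2/(M^2 - 1) := one_mul _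

/- Poincaré-type inequality for the nonlocal operator `𝒜` in Chebyshev-coefficient form. -/
set_option maxHeartbeats 1600000 in
/-- Poincaré-type inequality for the nonlocal operator `𝒜` in Chebyshev-coefficient
form: if `∑_{n≥1} n aₙ² < ∞` and `φ̄ = a₀ + (1/2) ∑_{n≥1} aₙ ∫_{-1}^{1} Tₙ(x) dx`, then
`π a₀² + (π/2) ∑_{n≥1} aₙ² ≤ ((π² − 4)/4) (π/2) ∑_{n≥1} n aₙ² + 2π φ̄²`. -/
theorem poincare_type_inequality (a : ℕ → ℝ)
    (ha : Summable fun n : ℕ => ((n : ℝ) + 1) * (a (n + 1)) ^ 2)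
    (φbar : ℝ)
    (hφbar : φbar = a 0 + (1 / 2) *
      ∑' n : ℕ, a (n + 1) * ∫ x in (-1:ℝ)..1, (Polynomial.Chebyshev.T ℝ (n + 1)).eval x) :
    Real.pi * (a 0) ^ 2 + Real.pi / 2 * (∑' n : ℕ, (a (n + 1)) ^ 2)
      ≤ (Real.pi ^ 2 - 4) / 4 * (Real.pi / 2 * ∑' n : ℕ, ((n : ℝ) + 1) * (a (n + 1)) ^ 2)
        + 2 * Real.pi * φbar ^ 2 := by
  have hrw : (∑' n : ℕ, a (n + 1) * ∫ x in (-1:ℝ)..1,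
      (Polynomial.Chebyshev.T ℝ (n + 1)).eval x) = ∑' n : ℕ, a (n + 1) * chebInt n := rfl
  rw [hrw] at hφbar
  set Tm := ∑' n : ℕ, a (n + 1) * chebInt n with hTm
  set Q := ∑' n : ℕ, ((n : ℝ) + 1) * a (n + 1) ^ 2 with hQdef
  set S := ∑' n : ℕ, a (n + 1) ^ 2 with hSdef
  set d : ℕ → ℝ := fun n => chebInt n ^ 2 / ((n:ℝ)+1) with hd
  set E : ℕ → ℝ := fun N => if N = 0 then (5/16 : ℝ)
    else (1/4) * (((N:ℝ))⁻¹^2 + (((N:ℝ)+1))⁻¹^2) with hE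
  have hE0 : ∀ N, 0 ≤ E N := by
    intro N; by_cases h : N = 0 <;> simp [hE, h] <;> positivity
  have hstep : ∀ N, d N ≤ E N - E (N+1) := by
    intro N
    rcases Nat.eq_zero_or_pos N with h0 | h1
    · subst h0
      simp [hd, hE, chebInt_zero]
      norm_num
    · have hx : (1:ℝ) ≤ (N:ℝ) := by exact_mod_cast h1
      have px : (0:ℝ) < (N:ℝ) := by linarith
      have p1 : (0:ℝ) < (N:ℝ) + 1 := by linarith
      have p2 : (0:ℝ) < (N:ℝ) + 2 := by linarith
      have hb := chebInt_bound N h1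
      have hsq : chebInt N ^ 2 ≤ (2/(((N:ℝ)+1)^2 - 1))^2 := by
        rw [← sq_abs (chebInt N)]
        exact pow_le_pow_left₀ (abs_nonneg _) hb 2
      have hden : (0:ℝ) < ((N:ℝ)+1)^2 - 1 := by nlinarith
      have hdN : d N ≤ (2/(((N:ℝ)+1)^2-1))^2 / ((N:ℝ)+1) := by
        rw [hd]
        exact div_le_div_of_nonneg_right hsq p1.le
      have hEsub : E N - E (N+1) = (1/4) * (((N:ℝ))⁻¹^2 - (((N:ℝ)+2))⁻¹^2) := by
        rw [hE]
        simp only [Nat.pos_iff_ne_zero.mp h1, Nat.succ_ne_zero N, if_neg, ite_false]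
        push_cast
        ring
      have hx0 : (N:ℝ) ≠ 0 := ne_of_gt px
      have hx1 : (N:ℝ) + 1 ≠ 0 := ne_of_gt p1
      have hx2 : (N:ℝ) + 2 ≠ 0 := ne_of_gt p2
      have e1 : (2/(((N:ℝ)+1)^2-1))^2/((N:ℝ)+1)
          = 4/(((N:ℝ)*((N:ℝ)+2))^2*((N:ℝ)+1)) := by
        rw [show (((N:ℝ)+1)^2 - 1) = (N:ℝ)*((N:ℝ)+2) from by ring, div_pow, div_div]
        norm_num
      have e2 : (1/4) * (((N:ℝ))⁻¹^2 - (((N:ℝ)+2))⁻¹^2)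
          = ((N:ℝ)+1)/((N:ℝ)^2*((N:ℝ)+2)^2) := by
        field_simp
        ring
      rw [hEsub, e2]
      refine le_trans hdN ?_
      rw [e1, div_le_div_iff₀ (by positivity) (by positivity)]
      nlinarith [mul_nonneg (mul_nonneg (sub_nonneg.mpr hx)
        (show (0:ℝ) ≤ (N:ℝ) + 3 by linarith))
        (mul_nonneg (sq_nonneg (N:ℝ)) (sq_nonneg ((N:ℝ)+2)))]
  have hpartial : ∀ N : ℕ, ∑ i ∈ Finset.range N, d i ≤ 5/16 - E N := by
    intro N
    induction N with
    | zero => simp [hE]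
    | succ k ih =>
        rw [Finset.sum_range_succ]
        have := hstep k
        linarith
  have hd0 : ∀ n, 0 ≤ d n := by
    intro n; rw [hd]; positivity
  have hdsum : Summable d :=
    summable_of_sum_range_le (c := 5/16) hd0 (fun N => by linarith [hpartial N, hE0 N])
  have hD : ∑' n, d n ≤ 5/16 :=
    Real.tsum_le_of_sum_range_le hd0 (fun N => by linarith [hpartial N, hE0 N])
  have hone : ∀ n : ℕ, (1:ℝ) ≤ (n:ℝ) + 1 := fun n => by
    have := Nat.cast_nonneg (α := ℝ) n; linarith
  have hS_sum : Summable (fun n : ℕ => a (n+1)^2) :=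
    Summable.of_nonneg_of_le (fun n => sq_nonneg _)
      (fun n => le_mul_of_one_le_left (sq_nonneg _) (hone n)) ha
  have habs : ∀ n : ℕ, |a (n+1) * chebInt n| ≤ (((n:ℝ)+1) * a (n+1)^2 + d n)/2 := by
    intro n
    have hx : (0:ℝ) < (n:ℝ)+1 := by positivity
    have ht : Real.sqrt ((n:ℝ)+1)^2 = (n:ℝ)+1 := Real.sq_sqrt hx.le
    have hts : Real.sqrt ((n:ℝ)+1) ≠ 0 := by positivity
    have h2 := two_mul_le_add_sq (Real.sqrt ((n:ℝ)+1) * |a (n+1)|)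
      (|chebInt n| / Real.sqrt ((n:ℝ)+1))
    have e1 : (Real.sqrt ((n:ℝ)+1) * |a (n+1)|) * (|chebInt n| / Real.sqrt ((n:ℝ)+1))
        = |a (n+1)| * |chebInt n| := by
      field_simp
    have e2 : (Real.sqrt ((n:ℝ)+1) * |a (n+1)|)^2 = ((n:ℝ)+1) * a (n+1)^2 := by
      rw [mul_pow, ht, sq_abs]
    have e3 : (|chebInt n| / Real.sqrt ((n:ℝ)+1))^2 = d n := by
      rw [div_pow, ht, sq_abs, hd]
    have hkey : 2 * (|a (n+1)| * |chebInt n|) ≤ ((n:ℝ)+1) * a (n+1)^2 + d n := by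
      rw [← e1, ← e2, ← e3]
      linarith [h2]
    rw [abs_mul]
    linarith
  have huc : Summable (fun n : ℕ => a (n+1) * chebInt n) := by
    refine Summable.of_abs (Summable.of_nonneg_of_le (fun n => abs_nonneg _) habs ?_)
    exact (ha.add hdsum).div_const 2
  have hQ0 : 0 ≤ Q := by
    rw [hQdef]; exact tsum_nonneg (fun n => by positivity)
  have hCSfin : ∀ s : Finset ℕ, (∑ n ∈ s, a (n+1) * chebInt n)^2 ≤ Q * (∑' n, d n) := by
    intro s
    have hcs := Finset.sum_mul_sq_le_sq_mul_sq s
      (fun n => Real.sqrt ((n:ℝ)+1) * a (n+1)) (fun n => chebInt n / Real.sqrt ((n:ℝ)+1))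
    have e1 : ∀ n ∈ s, (Real.sqrt ((n:ℝ)+1) * a (n+1)) * (chebInt n / Real.sqrt ((n:ℝ)+1))
        = a (n+1) * chebInt n := by
      intro n _
      have hts : Real.sqrt ((n:ℝ)+1) ≠ 0 := by positivity
      field_simp
    have e2 : ∀ n ∈ s, (Real.sqrt ((n:ℝ)+1) * a (n+1))^2 = ((n:ℝ)+1) * a (n+1)^2 := by
      intro n _; rw [mul_pow, Real.sq_sqrt (by positivity)]
    have e3 : ∀ n ∈ s, (chebInt n / Real.sqrt ((n:ℝ)+1))^2 = d n := by
      intro n _; rw [div_pow, Real.sq_sqrt (by positivity), hd]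
    rw [Finset.sum_congr rfl e1, Finset.sum_congr rfl e2, Finset.sum_congr rfl e3] at hcs
    have b1 : ∑ n ∈ s, ((n:ℝ)+1) * a (n+1)^2 ≤ Q :=
      Summable.sum_le_tsum s (fun i _ => by positivity) ha
    have b2 : ∑ n ∈ s, d n ≤ ∑' n, d n := Summable.sum_le_tsum s (fun i _ => hd0 i) hdsum
    have c1 : 0 ≤ ∑ n ∈ s, d n := Finset.sum_nonneg (fun i _ => hd0 i)
    calc (∑ n ∈ s, a (n+1) * chebInt n)^2
        ≤ (∑ n ∈ s, ((n:ℝ)+1) * a (n+1)^2) * (∑ n ∈ s, d n) := hcs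
      _ ≤ Q * (∑' n, d n) := mul_le_mul b1 b2 c1 hQ0
  have hT2 : Tm^2 ≤ Q * (∑' n, d n) := by
    have htend : Filter.Tendsto (fun s : Finset ℕ => (∑ n ∈ s, a (n+1) * chebInt n)^2)
        Filter.atTop (nhds (Tm^2)) := huc.hasSum.pow 2
    exact le_of_tendsto' htend hCSfin
  have hD0 : 0 ≤ ∑' n, d n := tsum_nonneg hd0
  have hT2' : Tm^2 ≤ (5/16) * Q := by
    calc Tm^2 ≤ Q * (∑' n, d n) := hT2
      _ ≤ Q * (5/16) := mul_le_mul_of_nonneg_left hD hQ0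
      _ = 5/16 * Q := by ring
  have hSQ : S ≤ Q :=
    Summable.tsum_le_tsum (fun n => le_mul_of_one_le_left (sq_nonneg _) (hone n)) hS_sum ha
  have hpi := Real.pi_gt_d6
  have hpi2 : (0:ℝ) ≤ Real.pi^2 - 4 - 21/4 := by nlinarith
  have hkey : S + Tm^2 ≤ (Real.pi^2 - 4)/4 * Q := by
    have := mul_nonneg hpi2 hQ0
    nlinarith
  rw [hφbar]
  have h1 : Real.pi/2 * (S + Tm^2) ≤ Real.pi/2 * ((Real.pi^2 - 4)/4 * Q) :=
    mul_le_mul_of_nonneg_left hkey (by positivity)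
  have h2 : 0 ≤ Real.pi * (a 0 + Tm)^2 :=
    mul_nonneg Real.pi_pos.le (sq_nonneg _)
  nlinarith [h1, h2]
end

section
/- (Coercivity of the bilinear form a(φ,φ) = ‖φ‖²_{L²} + (𝒜φ,φ).) Let (a_n)_{n≥0} be a real sequence with ∑_{n≥0} |a_n| < ∞ and ∑_{n≥1} n a_n^2 < ∞, and define φ(x) := ∑_{n≥0} a_n T_n(x) for x ∈ [-1,1]. Then ∫_{-1}^{1} φ(x)^2 dx + (π/2) ∑_{n≥1} n a_n^2 ≥ (1/π) ( ∫_{-1}^{1} φ(x)^2 (1-x^2)^{-1/2} dx + (π/2) ∑_{n≥1} n a_n^2 ). -/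
open Real MeasureTheory

lemma cosIntR (c : ℝ) (hc : c ≠ 0) : ∫ θ in (0:ℝ)..π, Real.cos (c*θ) = Real.sin (c*π)/c := by
  have := intervalIntegral.integral_comp_mul_left (fun x => Real.cos x) hc (a := (0:ℝ)) (b := π)
  simp at this
  rw [this]; ring

lemma cosIntInt (k : ℤ) (hk : k ≠ 0) : ∫ θ in (0:ℝ)..π, Real.cos (k*θ) = 0 := by
  rw [cosIntR _ (by exact_mod_cast hk), Real.sin_int_mul_pi]; simp

lemma cosInt (n : ℕ) : ∫ θ in (0:ℝ)..π, Real.cos (n*θ) = if n = 0 then π else 0 := by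
  rcases eq_or_ne n 0 with h | h
  · simp [h]
  · rw [if_neg h]
    exact_mod_cast cosIntInt n (by exact_mod_cast h)

lemma cosInt2 (m n : ℕ) : ∫ θ in (0:ℝ)..π, Real.cos (m*θ) * Real.cos (n*θ)
    = if m = n then (if m = 0 then π else π/2) else 0 := by
  have key : ∀ θ : ℝ, Real.cos (m*θ) * Real.cos (n*θ)
      = (Real.cos ((m+n)*θ) + Real.cos ((m-n:ℝ)*θ))/2 := by
    intro θ
    have h1 := Real.cos_add (m*θ) (n*θ)
    have h2 := Real.cos_sub (m*θ) (n*θ)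
    have e1 : ((m:ℝ)+n)*θ = m*θ + n*θ := by ring
    have e2 : ((m:ℝ)-n)*θ = m*θ - n*θ := by ring
    rw [e1, e2, h1, h2]; ring
  rw [intervalIntegral.integral_congr (fun θ _ => key θ)]
  have i1 : IntervalIntegrable (fun θ => Real.cos ((m+n:ℕ)*θ)) volume 0 π :=
    (Real.continuous_cos.comp (continuous_const.mul continuous_id)).intervalIntegrable _ _
  have i2 : IntervalIntegrable (fun θ => Real.cos ((m-n:ℝ)*θ)) volume 0 π :=
    (Real.continuous_cos.comp (continuous_const.mul continuous_id)).intervalIntegrable _ _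
  have expand : (fun θ => (Real.cos ((m+n:ℝ)*θ) + Real.cos ((m-n:ℝ)*θ))/2)
      = fun θ => (2:ℝ)⁻¹ * (Real.cos ((m+n:ℕ)*θ) + Real.cos ((m-n:ℝ)*θ)) := by
    funext θ; push_cast; ring
  rw [intervalIntegral.integral_congr (fun θ _ => congrFun expand θ)]
  rw [intervalIntegral.integral_const_mul, intervalIntegral.integral_add i1 i2]
  rcases eq_or_ne m n with h | h
  · subst h
    rcases eq_or_ne m 0 with h0 | h0
    · simp [h0]; ring
    · rw [if_pos rfl, if_neg h0]
      have e0 : ((m:ℝ) - m) = 0 := by ring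
      rw [e0, cosInt (m+m), if_neg (by omega)]
      simp
      ring
  · rw [if_neg h]
    have hmn : m + n ≠ 0 := by omega
    have e1 : ∫ θ in (0:ℝ)..π, Real.cos ((m+n:ℕ)*θ) = 0 := by
      rw [cosInt (m+n), if_neg hmn]
    have e2 : ∫ θ in (0:ℝ)..π, Real.cos ((m-n:ℝ)*θ) = 0 := by
      have : ((m:ℝ) - n) = ((m - n : ℤ) : ℝ) := by push_cast; ring
      rw [this]
      exact cosIntInt _ (by omega)
    rw [e1, e2]; ring


section
variable (a : ℕ → ℝ) (ha : Summable fun n : ℕ => |a n|)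

lemma sumsq (ha : Summable fun n : ℕ => |a n|) : Summable fun n : ℕ => (a n)^2 := by
  apply Summable.of_nonneg_of_le (fun n => sq_nonneg _)
    (fun n => ?_) (ha.mul_left (∑' n, |a n|))
  have h1 : |a n| ≤ ∑' n, |a n| := Summable.le_tsum ha n (fun m _ => abs_nonneg _)
  calc (a n)^2 = |a n| * |a n| := by rw [abs_mul_abs_self]; exact sq (a n)
  _ ≤ (∑' n, |a n|) * |a n| := by
      apply mul_le_mul_of_nonneg_right h1 (abs_nonneg _)

lemma contG (ha : Summable fun n : ℕ => |a n|) :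
    Continuous (fun θ : ℝ => ∑' n : ℕ, a n * Real.cos (n*θ)) := by
  apply continuous_tsum
    (fun n => continuous_const.mul (Real.continuous_cos.comp (continuous_const.mul continuous_id)))
    ha
  intro n θ
  show ‖a n * Real.cos (n*θ)‖ ≤ |a n|
  rw [Real.norm_eq_abs, abs_mul]
  exact mul_le_of_le_one_right (abs_nonneg _) (Real.abs_cos_le_one _)

lemma summableG (θ : ℝ) (ha : Summable fun n : ℕ => |a n|) :
    Summable fun n : ℕ => ‖a n * Real.cos (n*θ)‖ := by
  apply Summable.of_nonneg_of_le (fun n => norm_nonneg _) (fun n => ?_) ha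
  rw [Real.norm_eq_abs, abs_mul]
  exact mul_le_of_le_one_right (abs_nonneg _) (Real.abs_cos_le_one _)

lemma intG (ha : Summable fun n : ℕ => |a n|) :
    ∫ θ in (0:ℝ)..π, (∑' n : ℕ, a n * Real.cos (n*θ)) = π * a 0 := by
  have hInt : ∀ n : ℕ, IntegrableOn (fun θ => a n * Real.cos (n*θ)) (Set.Ioc 0 π) volume :=
    fun n => (continuous_const.mul
      (Real.continuous_cos.comp (continuous_const.mul continuous_id))).integrableOn_Ioc
  have hNorm : ∀ n : ℕ, (∫ θ in Set.Ioc (0:ℝ) π, ‖a n * Real.cos (n*θ)‖) ≤ π * |a n| := by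
    intro n
    calc (∫ θ in Set.Ioc (0:ℝ) π, ‖a n * Real.cos (n*θ)‖)
        ≤ ∫ _ in Set.Ioc (0:ℝ) π, |a n| := by
          apply integral_mono_of_nonneg (Filter.Eventually.of_forall fun θ => norm_nonneg _)
            (integrable_const _)
          apply Filter.Eventually.of_forall
          intro θ
          show ‖a n * Real.cos (n*θ)‖ ≤ |a n|
          rw [Real.norm_eq_abs, abs_mul]
          exact mul_le_of_le_one_right (abs_nonneg _) (Real.abs_cos_le_one _)
      _ = π * |a n| := by
          rw [setIntegral_const]
          simp [Real.volume_Ioc, ENNReal.toReal_ofReal Real.pi_pos.le]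
          exact Or.inl Real.pi_pos.le
  have swap : ∑' n : ℕ, (∫ θ in Set.Ioc (0:ℝ) π, a n * Real.cos (n*θ))
      = ∫ θ in Set.Ioc (0:ℝ) π, (∑' n : ℕ, a n * Real.cos (n*θ)) := by
    apply integral_tsum_of_summable_integral_norm hInt
    apply Summable.of_nonneg_of_le (fun n => integral_nonneg fun θ => norm_nonneg _)
      hNorm ((ha.mul_left π))
  rw [intervalIntegral.integral_of_le Real.pi_pos.le, ← swap]
  have term : ∀ n : ℕ, (∫ θ in Set.Ioc (0:ℝ) π, a n * Real.cos (n*θ))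
      = a n * if n = 0 then π else 0 := by
    intro n
    rw [← intervalIntegral.integral_of_le Real.pi_pos.le,
      intervalIntegral.integral_const_mul, cosInt n]
  rw [tsum_congr term, tsum_eq_single 0 (fun b hb => by simp [hb])]
  simp [mul_comm]

lemma intG2 (ha : Summable fun n : ℕ => |a n|) :
    ∫ θ in (0:ℝ)..π, (∑' n : ℕ, a n * Real.cos (n*θ))^2
      = π/2 * (a 0)^2 + π/2 * ∑' n : ℕ, (a n)^2 := by
  set F : ℕ × ℕ → ℝ → ℝ := fun p θ => (a p.1 * Real.cos (p.1*θ)) * (a p.2 * Real.cos (p.2*θ))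
    with hF
  have hbd : ∀ p : ℕ × ℕ, ∀ θ : ℝ, ‖F p θ‖ ≤ |a p.1| * |a p.2| := by
    intro p θ
    rw [Real.norm_eq_abs, abs_mul, abs_mul, abs_mul]
    apply mul_le_mul
    · exact mul_le_of_le_one_right (abs_nonneg _) (Real.abs_cos_le_one _)
    · exact mul_le_of_le_one_right (abs_nonneg _) (Real.abs_cos_le_one _)
    · positivity
    · exact abs_nonneg _
  have hsum2 : Summable fun p : ℕ × ℕ => |a p.1| * |a p.2| := by
    simpa using ha.mul_of_nonneg ha (fun n => abs_nonneg _) (fun n => abs_nonneg _)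
  have hptwise : ∀ θ : ℝ, (∑' n : ℕ, a n * Real.cos (n*θ))^2 = ∑' p : ℕ × ℕ, F p θ := by
    intro θ
    rw [sq]
    exact tsum_mul_tsum_of_summable_norm (summableG a θ ha) (summableG a θ ha)
  have hInt : ∀ p : ℕ × ℕ, IntegrableOn (F p) (Set.Ioc 0 π) volume := by
    intro p
    exact ((continuous_const.mul
      (Real.continuous_cos.comp (continuous_const.mul continuous_id))).mul
      (continuous_const.mul
      (Real.continuous_cos.comp (continuous_const.mul continuous_id)))).integrableOn_Ioc
  have hNorm : ∀ p : ℕ × ℕ, (∫ θ in Set.Ioc (0:ℝ) π, ‖F p θ‖) ≤ π * (|a p.1| * |a p.2|) := by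
    intro p
    calc (∫ θ in Set.Ioc (0:ℝ) π, ‖F p θ‖)
        ≤ ∫ _ in Set.Ioc (0:ℝ) π, |a p.1| * |a p.2| := by
          apply integral_mono_of_nonneg (Filter.Eventually.of_forall fun θ => norm_nonneg _)
            (integrable_const _)
          exact Filter.Eventually.of_forall fun θ => hbd p θ
      _ = π * (|a p.1| * |a p.2|) := by
          rw [setIntegral_const]
          simp [Real.volume_Ioc, ENNReal.toReal_ofReal Real.pi_pos.le]
          exact Or.inl Real.pi_pos.le
  have swap : ∑' p : ℕ × ℕ, (∫ θ in Set.Ioc (0:ℝ) π, F p θ)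
      = ∫ θ in Set.Ioc (0:ℝ) π, (∑' p : ℕ × ℕ, F p θ) := by
    apply integral_tsum_of_summable_integral_norm hInt
    exact Summable.of_nonneg_of_le (fun p => integral_nonneg fun θ => norm_nonneg _)
      hNorm (hsum2.mul_left π)
  have term : ∀ p : ℕ × ℕ, (∫ θ in Set.Ioc (0:ℝ) π, F p θ)
      = a p.1 * a p.2 * if p.1 = p.2 then (if p.1 = 0 then π else π/2) else 0 := by
    intro p
    rw [← intervalIntegral.integral_of_le Real.pi_pos.le]
    have : ∀ θ : ℝ, F p θ = (a p.1 * a p.2) * (Real.cos (p.1*θ) * Real.cos (p.2*θ)) := by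
      intro θ; rw [hF]; ring
    rw [intervalIntegral.integral_congr (fun θ _ => this θ),
      intervalIntegral.integral_const_mul, cosInt2]
  have hsummable : Summable fun p : ℕ × ℕ => (∫ θ in Set.Ioc (0:ℝ) π, F p θ) := by
    apply Summable.of_norm
    apply Summable.of_nonneg_of_le (fun p => norm_nonneg _) (fun p => ?_) (hsum2.mul_left π)
    calc ‖∫ θ in Set.Ioc (0:ℝ) π, F p θ‖ ≤ ∫ θ in Set.Ioc (0:ℝ) π, ‖F p θ‖ :=
        norm_integral_le_integral_norm _
      _ ≤ π * (|a p.1| * |a p.2|) := hNorm p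
  rw [intervalIntegral.integral_of_le Real.pi_pos.le]
  rw [integral_congr_ae (Filter.Eventually.of_forall fun θ => hptwise θ)]
  have hinner : ∀ m : ℕ, Summable fun n : ℕ => (∫ θ in Set.Ioc (0:ℝ) π, F (m, n) θ) := by
    intro m
    apply summable_of_ne_finset_zero (s := {m})
    intro b hb
    simp only [Finset.mem_singleton] at hb
    rw [term (m, b)]
    simp [Ne.symm hb]
  rw [← swap, Summable.tsum_prod' hsummable hinner]
  have inner : ∀ m : ℕ, (∑' n : ℕ, (∫ θ in Set.Ioc (0:ℝ) π, F (m, n) θ))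
      = (π/2) * (a m)^2 + (if m = 0 then (π/2) * (a 0)^2 else 0) := by
    intro m
    have : ∀ n : ℕ, (∫ θ in Set.Ioc (0:ℝ) π, F (m, n) θ)
        = if n = m then a m * a m * (if m = 0 then π else π/2) else 0 := by
      intro n
      rw [term (m, n)]
      rcases eq_or_ne n m with h | h
      · subst h; simp
      · simp [Ne.symm h, h]
    rw [tsum_congr this, tsum_eq_single m (fun b hb => by rw [if_neg hb])]
    rw [if_pos rfl]
    rcases eq_or_ne m 0 with h | h
    · subst h; simp; ring
    · simp [h]; ring
  rw [tsum_congr inner]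
  have s1 : Summable fun m : ℕ => (π/2) * (a m)^2 := (sumsq a ha).mul_left _
  have s2 : Summable fun m : ℕ => (if m = 0 then (π/2) * (a 0)^2 else 0) := by
    apply summable_of_ne_finset_zero (s := {0})
    intro b hb
    simp at hb
    simp [hb]
  rw [Summable.tsum_add s1 s2, tsum_mul_left, tsum_ite_eq]
  ring

end

lemma cos_image : Real.cos '' Set.Ioo 0 π = Set.Ioo (-1 : ℝ) 1 := by
  ext x
  constructor
  · rintro ⟨θ, hθ, rfl⟩
    constructor
    · have := Real.strictAntiOn_cos ⟨hθ.1.le, hθ.2.le⟩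
        ⟨Real.pi_pos.le, le_rfl⟩ hθ.2
      simpa [Real.cos_pi] using this
    · have := Real.strictAntiOn_cos ⟨le_rfl, Real.pi_pos.le⟩ ⟨hθ.1.le, hθ.2.le⟩ hθ.1
      simpa [Real.cos_zero] using this
  · intro hx
    refine ⟨Real.arccos x, ⟨?_, ?_⟩, Real.cos_arccos hx.1.le hx.2.le⟩
    · exact Real.arccos_pos.2 hx.2
    · have h := Real.arccos_eq_pi (x := x)
      rcases lt_or_eq_of_le (Real.arccos_le_pi x) with h' | h'
      · exact h'
      · exact absurd (h.1 h') (by linarith [hx.1])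

lemma substCos (u : ℝ → ℝ) :
    ∫ x in Set.Ioo (-1:ℝ) 1, u x = ∫ θ in Set.Ioo (0:ℝ) π, |(-Real.sin θ)| • u (Real.cos θ) := by
  rw [← cos_image]
  exact integral_image_eq_integral_abs_deriv_smul measurableSet_Ioo
    (fun θ _ => (Real.hasDerivAt_cos θ).hasDerivWithinAt)
    (Real.injOn_cos.mono Set.Ioo_subset_Icc_self) u

lemma sin_min {l u x : ℝ} (hl : 0 ≤ l) (hu : u ≤ π) (h1 : l ≤ x) (h2 : x ≤ u) :
    min (Real.sin l) (Real.sin u) ≤ Real.sin x := by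
  rcases le_or_gt x (π/2) with hx | hx
  · refine le_trans (min_le_left _ _) ?_
    apply Real.strictMonoOn_sin.monotoneOn ⟨by linarith [Real.pi_pos], by linarith⟩
      ⟨by linarith, hx⟩ h1
  · refine le_trans (min_le_right _ _) ?_
    rw [← Real.sin_pi_sub x, ← Real.sin_pi_sub u]
    apply Real.strictMonoOn_sin.monotoneOn
      ⟨by linarith [Real.pi_pos], by linarith⟩ ⟨by linarith, by linarith⟩ (by linarith)

lemma contOn : ∀ l u : ℝ, 0 ≤ l → u ≤ π → l ≤ u → IntervalIntegrable
    (fun θ : ℝ => 1/(1+3*Real.sin θ)) volume l u := by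
  intro l u hl hu hlu
  apply ContinuousOn.intervalIntegrable
  apply ContinuousOn.div continuousOn_const
    (continuousOn_const.add (continuousOn_const.mul Real.continuous_sin.continuousOn))
  intro x hx
  rw [Set.uIcc_of_le hlu] at hx
  have : 0 ≤ Real.sin x := Real.sin_nonneg_of_nonneg_of_le_pi (by linarith [hx.1])
    (by linarith [hx.2])
  show (1:ℝ) + 3 * Real.sin x ≠ 0
  exact ne_of_gt (by linarith)

lemma piece {l u m : ℝ} (hl : 0 ≤ l) (hu : u ≤ π) (hlu : l ≤ u) (hm : 0 ≤ m)
    (h1 : m ≤ Real.sin l) (h2 : m ≤ Real.sin u) :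
    ∫ θ in l..u, 1/(1+3*Real.sin θ) ≤ (u - l) * (1/(1+3*m)) := by
  have key : ∀ x ∈ Set.Icc l u, 1/(1+3*Real.sin x) ≤ 1/(1+3*m) := by
    intro x hx
    have hs : m ≤ Real.sin x :=
      le_trans (le_min h1 h2) (sin_min hl hu hx.1 hx.2)
    apply one_div_le_one_div_of_le (by linarith)
    linarith
  calc ∫ θ in l..u, 1/(1+3*Real.sin θ) ≤ ∫ _ in l..u, 1/(1+3*m) :=
      intervalIntegral.integral_mono_on hlu (contOn l u hl hu hlu)
        intervalIntegrable_const key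
    _ = (u - l) * (1/(1+3*m)) := by rw [intervalIntegral.integral_const, smul_eq_mul]

set_option maxHeartbeats 2000000 in
lemma Ibound : ∫ θ in (0:ℝ)..π, 1/(1+3*Real.sin θ) ≤ 31/20 := by
  have pi_gt := Real.pi_gt_d6
  have pi_lt := Real.pi_lt_d2
  have h2 : (1.4142:ℝ) ≤ Real.sqrt 2 := by
    rw [show (1.4142:ℝ) = Real.sqrt (1.4142^2) by rw [Real.sqrt_sq (by norm_num)]]
    apply Real.sqrt_le_sqrt; norm_num
  have b1 : (0:ℝ) ≤ 1/4 := by norm_num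
  have b2 : (1/4:ℝ) ≤ π/6 := by linarith
  have b3 : (π/6:ℝ) ≤ π/4 := by linarith
  have b4 : (π/4:ℝ) ≤ 3*π/4 := by linarith
  have b5 : (3*π/4:ℝ) ≤ 5*π/6 := by linarith
  have b6 : (5*π/6:ℝ) ≤ π - 1/4 := by linarith
  have b7 : (π - 1/4:ℝ) ≤ π := by linarith
  have hsin14 : (63/256:ℝ) ≤ Real.sin (1/4) := by
    have := Real.sin_gt_sub_cube (x := 1/4) (by norm_num)
    nlinarith
  have hsin14' : Real.sin (1/4) ≤ 1 := Real.sin_le_one _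
  have e34 : Real.sin (3*π/4) = Real.sqrt 2 / 2 := by
    rw [show (3*π/4:ℝ) = π - π/4 by ring, Real.sin_pi_sub, Real.sin_pi_div_four]
  have e56 : Real.sin (5*π/6) = 1/2 := by
    rw [show (5*π/6:ℝ) = π - π/6 by ring, Real.sin_pi_sub, Real.sin_pi_div_six]
  have e14 : Real.sin (π - 1/4) = Real.sin (1/4) := Real.sin_pi_sub _
  -- the seven pieces
  have p1 : ∫ θ in (0:ℝ)..(1/4), 1/(1+3*Real.sin θ) ≤ (1/4 - 0) * (1/(1+3*0)) :=
    piece (le_refl 0) (by linarith) b1 (le_refl 0) (by simp) (by positivity)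
  have p2 : ∫ θ in (1/4:ℝ)..(π/6), 1/(1+3*Real.sin θ) ≤ (π/6 - 1/4) * (1/(1+3*(63/256))) :=
    piece (by norm_num) (by linarith) b2 (by norm_num) hsin14
      (by rw [Real.sin_pi_div_six]; norm_num)
  have p3 : ∫ θ in (π/6:ℝ)..(π/4), 1/(1+3*Real.sin θ) ≤ (π/4 - π/6) * (1/(1+3*(1/2))) :=
    piece (by linarith) (by linarith) b3 (by norm_num)
      (by rw [Real.sin_pi_div_six]) (by rw [Real.sin_pi_div_four]; nlinarith)
  have p4 : ∫ θ in (π/4:ℝ)..(3*π/4), 1/(1+3*Real.sin θ)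
      ≤ (3*π/4 - π/4) * (1/(1+3*(Real.sqrt 2/2))) :=
    piece (by linarith) (by linarith) b4 (by positivity)
      (by rw [Real.sin_pi_div_four]) (by rw [e34])
  have p5 : ∫ θ in (3*π/4:ℝ)..(5*π/6), 1/(1+3*Real.sin θ) ≤ (5*π/6 - 3*π/4) * (1/(1+3*(1/2))) :=
    piece (by linarith) (by linarith) b5 (by norm_num)
      (by rw [e34]; nlinarith) (by rw [e56])
  have p6 : ∫ θ in (5*π/6:ℝ)..(π-1/4), 1/(1+3*Real.sin θ)
      ≤ (π - 1/4 - 5*π/6) * (1/(1+3*(63/256))) :=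
    piece (by linarith) (by linarith) b6 (by norm_num)
      (by rw [e56]; norm_num) (by rw [e14]; exact hsin14)
  have p7 : ∫ θ in (π-1/4:ℝ)..π, 1/(1+3*Real.sin θ) ≤ (π - (π - 1/4)) * (1/(1+3*0)) :=
    piece (by linarith) (le_refl π) b7 (le_refl 0)
      (by rw [e14]; linarith) (by rw [Real.sin_pi])
  have i1 := contOn 0 (1/4) (le_refl 0) (by linarith) b1
  have i2 := contOn (1/4) (π/6) (by norm_num) (by linarith) b2
  have i3 := contOn (π/6) (π/4) (by linarith) (by linarith) b3
  have i4 := contOn (π/4) (3*π/4) (by linarith) (by linarith) b4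
  have i5 := contOn (3*π/4) (5*π/6) (by linarith) (by linarith) b5
  have i6 := contOn (5*π/6) (π-1/4) (by linarith) (by linarith) b6
  have i7 := contOn (π-1/4) π (by linarith) (le_refl π) b7
  have e6 := intervalIntegral.integral_add_adjacent_intervals i6 i7
  have e5 := intervalIntegral.integral_add_adjacent_intervals i5 (i6.trans i7)
  have e4 := intervalIntegral.integral_add_adjacent_intervals i4 (i5.trans (i6.trans i7))
  have e3 := intervalIntegral.integral_add_adjacent_intervals i3 (i4.trans (i5.trans (i6.trans i7)))
  have e2 := intervalIntegral.integral_add_adjacent_intervals i2 (i3.trans (i4.trans (i5.trans (i6.trans i7))))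
  have e1 := intervalIntegral.integral_add_adjacent_intervals i1 (i2.trans (i3.trans (i4.trans (i5.trans (i6.trans i7)))))
  have hs4 : 1/(1+3*(Real.sqrt 2/2)) ≤ (0.3204:ℝ) := by
    rw [div_le_iff₀ (by nlinarith)]
    nlinarith
  nlinarith [p1, p2, p3, p4, p5, p6, p7, hs4, e1, e2, e3, e4, e5, e6]


lemma CS (G : ℝ → ℝ) (hG : Continuous G) :
    (∫ θ in (0:ℝ)..π, G θ)^2 ≤ (31/20) * ∫ θ in (0:ℝ)..π, (G θ)^2 * (1+3*Real.sin θ) := by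
  set B := ∫ θ in (0:ℝ)..π, (G θ)^2 * (1+3*Real.sin θ) with hB
  set I := ∫ θ in (0:ℝ)..π, 1/(1+3*Real.sin θ) with hI
  have hf1 : IntervalIntegrable (fun θ : ℝ => (G θ)^2 * (1+3*Real.sin θ)) volume 0 π :=
    (((hG.pow 2).mul (continuous_const.add (continuous_const.mul Real.continuous_sin)))).intervalIntegrable _ _
  have hf2 := contOn 0 π (le_refl 0) (le_refl π) Real.pi_pos.le
  have hI0 : 0 ≤ I := by
    rw [hI]
    apply intervalIntegral.integral_nonneg Real.pi_pos.le
    intro x hx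
    have : 0 ≤ Real.sin x := Real.sin_nonneg_of_nonneg_of_le_pi hx.1 hx.2
    positivity
  have hB0 : 0 ≤ B := by
    rw [hB]
    apply intervalIntegral.integral_nonneg Real.pi_pos.le
    intro x hx
    have : 0 ≤ Real.sin x := Real.sin_nonneg_of_nonneg_of_le_pi hx.1 hx.2
    positivity
  have key : ∀ t : ℝ, 0 < t → |∫ θ in (0:ℝ)..π, G θ| ≤ (t*B + (31/20)/t)/2 := by
    intro t ht
    have ptw : ∀ s : ℝ, ∀ x ∈ Set.Icc (0:ℝ) π,
        s * G x ≤ (t/2) * ((G x)^2 * (1+3*Real.sin x)) + (1/(2*t)) * (1/(1+3*Real.sin x)) →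
        True := fun _ _ _ _ => trivial
    have bound : ∀ (g : ℝ → ℝ), (∀ x, g x = G x ∨ g x = - G x) → Continuous g →
        (∫ θ in (0:ℝ)..π, g θ) ≤ (t*B + I/t)/2 := by
      intro g hg hgc
      have step : (∫ θ in (0:ℝ)..π, g θ)
          ≤ ∫ θ in (0:ℝ)..π, ((t/2) * ((G θ)^2 * (1+3*Real.sin θ))
              + (1/(2*t)) * (1/(1+3*Real.sin θ))) := by
        apply intervalIntegral.integral_mono_on Real.pi_pos.le
          (hgc.intervalIntegrable _ _)
          (((hf1.const_mul (t/2))).add (hf2.const_mul (1/(2*t))))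
        intro x hx
        have hs : 0 ≤ Real.sin x := Real.sin_nonneg_of_nonneg_of_le_pi hx.1 hx.2
        have hw : (0:ℝ) < 1+3*Real.sin x := by linarith
        set y := |G x| with hyd
        have habs : g x ≤ y := by
          rcases hg x with h | h
          · rw [h, hyd]; exact le_abs_self (G x)
          · rw [h, hyd]; exact neg_le_abs (G x)
        have hy2 : y^2 = (G x)^2 := sq_abs (G x)
        have expand : (t/2) * (y^2 * (1+3*Real.sin x)) + (1/(2*t)) * (1/(1+3*Real.sin x))
            - y = (t*(1+3*Real.sin x)*y - 1)^2/(2*t*(1+3*Real.sin x)) := by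
          field_simp
          ring
        rw [show (G x)^2 = y^2 from hy2.symm]
        nlinarith [div_nonneg (sq_nonneg (t*(1+3*Real.sin x)*y - 1)) (by positivity : (0:ℝ) ≤ 2*t*(1+3*Real.sin x)), expand, habs]
      have lin : (∫ θ in (0:ℝ)..π, ((t/2) * ((G θ)^2 * (1+3*Real.sin θ))
              + (1/(2*t)) * (1/(1+3*Real.sin θ)))) = (t*B + I/t)/2 := by
        rw [intervalIntegral.integral_add (hf1.const_mul (t/2)) (hf2.const_mul (1/(2*t))),
          intervalIntegral.integral_const_mul, intervalIntegral.integral_const_mul,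
          ← hB, ← hI]
        ring
      linarith [step, lin ▸ step]
    have h1 := bound G (fun x => Or.inl rfl) hG
    have h2 := bound (fun x => - G x) (fun x => Or.inr rfl) hG.neg
    rw [intervalIntegral.integral_neg] at h2
    have : |∫ θ in (0:ℝ)..π, G θ| ≤ (t*B + I/t)/2 := abs_le.2 ⟨by linarith, h1⟩
    have hIc : I/t ≤ (31/20)/t := by
      gcongr
      exact Ibound
    linarith
  rcases eq_or_lt_of_le hB0 with hB1 | hB1
  · have hz : |∫ θ in (0:ℝ)..π, G θ| ≤ 0 := by
      apply le_of_forall_pos_le_add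
      intro ε hε
      have := key ((31/20)/(2*ε)) (by positivity)
      rw [← hB1] at this
      calc |∫ θ in (0:ℝ)..π, G θ| ≤ (((31/20)/(2*ε))*0 + (31/20)/((31/20)/(2*ε)))/2 := this
        _ = ε := by field_simp; ring
        _ ≤ 0 + ε := by linarith
    have : (∫ θ in (0:ℝ)..π, G θ) = 0 := abs_eq_zero.1 (le_antisymm hz (abs_nonneg _))
    rw [this, ← hB1]
    norm_num
  · set s := Real.sqrt ((31/20)*B) with hs
    have hs0 : 0 < s := Real.sqrt_pos.2 (by positivity)
    have hs2 : s^2 = (31/20)*B := Real.sq_sqrt (by positivity)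
    have := key (s/B) (by positivity)
    have e1 : (s/B)*B = s := by field_simp
    have e2 : (31/20)/(s/B) = s := by
      rw [div_div_eq_mul_div]
      rw [eq_comm, eq_div_iff (ne_of_gt hs0)]
      nlinarith
    rw [e1, e2] at this
    calc (∫ θ in (0:ℝ)..π, G θ)^2 = |∫ θ in (0:ℝ)..π, G θ|^2 := (sq_abs _).symm
      _ ≤ s^2 := by nlinarith [abs_nonneg (∫ θ in (0:ℝ)..π, G θ)]
      _ = (31/20)*B := hs2

set_option maxHeartbeats 2000000 in
/-- Coercivity of the bilinear form `a(φ,φ) = ‖φ‖²_{L²} + (𝒜φ,φ)`: for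
`φ = ∑ aₙ Tₙ` with `∑ |aₙ| < ∞` and `∑ n aₙ² < ∞`,
`∫ φ² dx + (π/2) ∑_{n≥1} n aₙ² ≥ (1/π)(∫ φ²/√(1-x²) dx + (π/2) ∑_{n≥1} n aₙ²)`. -/
theorem coercivity (a : ℕ → ℝ)
    (ha : Summable fun n : ℕ => |a n|)
    (ha' : Summable fun n : ℕ => (n : ℝ) * (a n) ^ 2)
    (φ : ℝ → ℝ)
    (hφ : ∀ x : ℝ, φ x = ∑' n : ℕ, a n * (Polynomial.Chebyshev.T ℝ n).eval x) :
    (∫ x in (-1:ℝ)..1, (φ x) ^ 2) + Real.pi / 2 * (∑' n : ℕ, (n : ℝ) * (a n) ^ 2)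
      ≥ (1 / Real.pi) *
          ((∫ x in (-1:ℝ)..1, (φ x) ^ 2 / Real.sqrt (1 - x ^ 2))
            + Real.pi / 2 * ∑' n : ℕ, (n : ℝ) * (a n) ^ 2) := by
  set G : ℝ → ℝ := fun θ => ∑' n : ℕ, a n * Real.cos (n*θ) with hGdef
  have hG : Continuous G := contG a ha
  have hφG : ∀ θ : ℝ, φ (Real.cos θ) = G θ := by
    intro θ
    rw [hφ, hGdef]
    apply tsum_congr
    intro n
    rw [Polynomial.Chebyshev.T_real_cos θ n]
    norm_num
  -- substitution identities
  have hsinpos : ∀ θ ∈ Set.Ioo (0:ℝ) π, 0 < Real.sin θ := fun θ hθ =>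
    Real.sin_pos_of_pos_of_lt_pi hθ.1 hθ.2
  have hP : (∫ x in (-1:ℝ)..1, (φ x)^2) = ∫ θ in (0:ℝ)..π, (G θ)^2 * Real.sin θ := by
    rw [intervalIntegral.integral_of_le (by norm_num : (-1:ℝ) ≤ 1),
      MeasureTheory.integral_Ioc_eq_integral_Ioo,
      substCos (fun x => (φ x)^2),
      intervalIntegral.integral_of_le Real.pi_pos.le,
      MeasureTheory.integral_Ioc_eq_integral_Ioo]
    apply setIntegral_congr_fun measurableSet_Ioo
    intro θ hθ
    have hs := hsinpos θ hθ
    show |(-Real.sin θ)| • (φ (Real.cos θ))^2 = (G θ)^2 * Real.sin θ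
    rw [hφG θ, abs_neg, abs_of_pos hs, smul_eq_mul]
    ring
  have hW : (∫ x in (-1:ℝ)..1, (φ x)^2 / Real.sqrt (1 - x^2))
      = ∫ θ in (0:ℝ)..π, (G θ)^2 := by
    rw [intervalIntegral.integral_of_le (by norm_num : (-1:ℝ) ≤ 1),
      MeasureTheory.integral_Ioc_eq_integral_Ioo,
      substCos (fun x => (φ x)^2 / Real.sqrt (1 - x^2)),
      intervalIntegral.integral_of_le Real.pi_pos.le,
      MeasureTheory.integral_Ioc_eq_integral_Ioo]
    apply setIntegral_congr_fun measurableSet_Ioo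
    intro θ hθ
    have hs := hsinpos θ hθ
    have h1 : 1 - Real.cos θ ^ 2 = Real.sin θ ^ 2 := by
      have := Real.sin_sq_add_cos_sq θ; linarith
    show |(-Real.sin θ)| • ((φ (Real.cos θ))^2 / Real.sqrt (1 - Real.cos θ ^ 2)) = (G θ)^2
    rw [hφG θ, h1, Real.sqrt_sq hs.le, abs_neg, abs_of_pos hs, smul_eq_mul]
    field_simp
  -- the three integral computations
  have hIG : ∫ θ in (0:ℝ)..π, G θ = π * a 0 := intG a ha
  have hIG2 : ∫ θ in (0:ℝ)..π, (G θ)^2 = π/2 * (a 0)^2 + π/2 * ∑' n : ℕ, (a n)^2 :=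
    intG2 a ha
  have hCS := CS G hG
  have hsplit : (∫ θ in (0:ℝ)..π, (G θ)^2 * (1+3*Real.sin θ))
      = (∫ θ in (0:ℝ)..π, (G θ)^2) + 3 * ∫ θ in (0:ℝ)..π, (G θ)^2 * Real.sin θ := by
    have i1 : IntervalIntegrable (fun θ => (G θ)^2) volume 0 π :=
      (hG.pow 2).intervalIntegrable _ _
    have i2 : IntervalIntegrable (fun θ => (G θ)^2 * Real.sin θ) volume 0 π :=
      ((hG.pow 2).mul Real.continuous_sin).intervalIntegrable _ _
    have : ∀ θ : ℝ, (G θ)^2 * (1+3*Real.sin θ) = (G θ)^2 + 3 * ((G θ)^2 * Real.sin θ) := by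
      intro θ; ring
    rw [intervalIntegral.integral_congr (fun θ _ => this θ),
      intervalIntegral.integral_add i1 (i2.const_mul 3),
      intervalIntegral.integral_const_mul]
  -- notation
  set P := ∫ x in (-1:ℝ)..1, (φ x)^2 with hPdef
  set Wx := ∫ x in (-1:ℝ)..1, (φ x)^2 / Real.sqrt (1 - x^2) with hWdef
  set S := ∑' n : ℕ, (n:ℝ) * (a n)^2 with hSdef
  set A := ∑' n : ℕ, (a n)^2 with hAdef
  have hS0 : 0 ≤ S := tsum_nonneg (fun n => by positivity)
  have hP0 : 0 ≤ P := intervalIntegral.integral_nonneg (by norm_num) (fun x _ => sq_nonneg _)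
  have f1 : Wx = π/2 * (a 0)^2 + π/2 * A := by rw [hW, hIG2]
  have f2 : (π * a 0)^2 ≤ (31/20) * (Wx + 3*P) := by
    calc (π * a 0)^2 = (∫ θ in (0:ℝ)..π, G θ)^2 := by rw [hIG]
      _ ≤ (31/20) * ∫ θ in (0:ℝ)..π, (G θ)^2 * (1+3*Real.sin θ) := hCS
      _ = (31/20) * (Wx + 3*P) := by rw [hsplit, ← hW, ← hP]
  have f3 : A ≤ (a 0)^2 + S := by
    have hs1 : Summable fun n : ℕ => (if n = 0 then (a 0)^2 else 0) := by
      apply summable_of_ne_finset_zero (s := {0})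
      intro b hb
      simp only [Finset.mem_singleton] at hb
      simp [hb]
    have hle : ∀ n : ℕ, (a n)^2 ≤ (if n = 0 then (a 0)^2 else 0) + (n:ℝ) * (a n)^2 := by
      intro n
      rcases eq_or_ne n 0 with h | h
      · subst h; simp
      · rw [if_neg h]
        have : (1:ℝ) ≤ n := by exact_mod_cast Nat.one_le_iff_ne_zero.2 h
        nlinarith [sq_nonneg (a n)]
    calc A ≤ ∑' n : ℕ, ((if n = 0 then (a 0)^2 else 0) + (n:ℝ) * (a n)^2) :=
        Summable.tsum_le_tsum hle (sumsq a ha) (hs1.add ha')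
      _ = (a 0)^2 + S := by rw [Summable.tsum_add hs1 ha', tsum_ite_eq]
  -- final numeric assembly
  have pi_gt := Real.pi_gt_d6
  have pi_lt := Real.pi_lt_d2
  have hπ : (0:ℝ) < π := Real.pi_pos
  rw [ge_iff_le, one_div, inv_mul_le_iff₀ hπ]
  have hQ0 : (0:ℝ) ≤ (a 0)^2 := sq_nonneg _
  have h6 : Wx ≤ π * (a 0)^2 + π/2 * S := by nlinarith [f1, f3]
  have h7 : π^2 * (a 0)^2 ≤ (31/20) * (Wx + 3*P) := by nlinarith [f2]
  have key : Wx * (π - 31/20) ≤ (93/20)*P + (π^2/2)*S := by nlinarith [h6, h7]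
  nlinarith [key, hP0, hS0, mul_nonneg hP0 (by linarith : (0:ℝ) ≤ π - 31/20),
    mul_nonneg hS0 (by linarith : (0:ℝ) ≤ π - 31/20)]
end

section
/- For every integer n ≥ 1 and every y ∈ (0,π), the principal value (1/π) P.V. ∫_{0}^{π} sin(z) sin(nz) / (cos y − cos z) dz exists and equals cos(ny). -/
open Filter Real Set intervalIntegral MeasureTheory

noncomputable def If (y : ℝ) (n : ℕ) (ε : ℝ) : ℝ :=
  (∫ z in (0:ℝ)..(y - ε), Real.sin z * Real.sin (n * z) / (Real.cos y - Real.cos z)) +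
  ∫ z in (y + ε)..Real.pi, Real.sin z * Real.sin (n * z) / (Real.cos y - Real.cos z)

noncomputable def L (y : ℝ) (n : ℕ) : ℝ := if n = 0 then 0 else Real.pi * Real.cos (n * y)

lemma left_ne {y : ℝ} (hy2 : y < Real.pi) {ε : ℝ} (hε : 0 < ε) (hεy : ε < y) :
    ∀ z ∈ Set.uIcc (0:ℝ) (y - ε), Real.cos y - Real.cos z ≠ 0 := by
  intro z hz
  rw [Set.uIcc_of_le (by linarith)] at hz
  have : Real.cos y < Real.cos z :=
    Real.cos_lt_cos_of_nonneg_of_le_pi hz.1 hy2.le (by linarith [hz.2])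
  linarith

lemma right_ne {y : ℝ} (hy1 : 0 < y) {ε : ℝ} (hε : 0 < ε) (hεπ : ε < Real.pi - y) :
    ∀ z ∈ Set.uIcc (y + ε) Real.pi, Real.cos y - Real.cos z ≠ 0 := by
  intro z hz
  rw [Set.uIcc_of_le (by linarith)] at hz
  have : Real.cos z < Real.cos y :=
    Real.cos_lt_cos_of_nonneg_of_le_pi hy1.le hz.2 (by linarith [hz.1])
  linarith

lemma intInt {y a b : ℝ} (hne : ∀ z ∈ Set.uIcc a b, Real.cos y - Real.cos z ≠ 0)
    (f : ℝ → ℝ) (hf : Continuous f) :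
    IntervalIntegrable (fun z => f z / (Real.cos y - Real.cos z)) volume a b :=
  (ContinuousOn.div hf.continuousOn
    ((continuous_const.sub Real.continuous_cos).continuousOn) hne).intervalIntegrable

lemma tendsto_both (y : ℝ) (f : ℝ → ℝ) (hf : Continuous f) :
    Tendsto (fun ε => (∫ z in (0:ℝ)..(y - ε), f z) + ∫ z in (y + ε)..Real.pi, f z)
      (nhdsWithin 0 (Set.Ioi 0)) (nhds (∫ z in (0:ℝ)..Real.pi, f z)) := by
  have hint : ∀ a b : ℝ, IntervalIntegrable f volume a b := fun a b => hf.intervalIntegrable a b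
  have hG : Continuous (fun b : ℝ => ∫ z in (0:ℝ)..b, f z) :=
    intervalIntegral.continuous_primitive hint 0
  have h1 : Tendsto (fun ε : ℝ => y - ε) (nhdsWithin 0 (Set.Ioi 0)) (nhds y) := by
    have hc : Continuous (fun ε : ℝ => y - ε) := by fun_prop
    have := (hc.tendsto 0).mono_left (nhdsWithin_le_nhds (s := Set.Ioi (0:ℝ)))
    simpa using this
  have h2 : Tendsto (fun ε : ℝ => y + ε) (nhdsWithin 0 (Set.Ioi 0)) (nhds y) := by
    have hc : Continuous (fun ε : ℝ => y + ε) := by fun_prop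
    have := (hc.tendsto 0).mono_left (nhdsWithin_le_nhds (s := Set.Ioi (0:ℝ)))
    simpa using this
  have key : ∀ ε : ℝ, (∫ z in (y + ε)..Real.pi, f z)
      = (∫ z in (0:ℝ)..Real.pi, f z) - ∫ z in (0:ℝ)..(y + ε), f z := by
    intro ε
    rw [eq_sub_iff_add_eq, add_comm]
    exact intervalIntegral.integral_add_adjacent_intervals (hint 0 (y+ε)) (hint (y+ε) Real.pi)
  have hT := ((hG.tendsto y).comp h1).add
    ((tendsto_const_nhds (x := (∫ z in (0:ℝ)..Real.pi, f z))
      (f := nhdsWithin (0:ℝ) (Set.Ioi 0))).sub ((hG.tendsto y).comp h2))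
  have hval : (∫ z in (0:ℝ)..y, f z) + ((∫ z in (0:ℝ)..Real.pi, f z) - ∫ z in (0:ℝ)..y, f z)
      = ∫ z in (0:ℝ)..Real.pi, f z := by ring
  rw [← hval]
  exact Tendsto.congr (fun ε => by simp only [Function.comp]; rw [← key ε]) hT

lemma hasDerivAt_F (y t : ℝ) (h1 : Real.sin ((t - y)/2) ≠ 0) (h2 : Real.sin ((t + y)/2) ≠ 0)
    (hs : Real.sin y ≠ 0) :
    HasDerivAt (fun z => (Real.log (Real.sin ((z - y)/2)) - Real.log (Real.sin ((z + y)/2))) / Real.sin y)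
      (1 / (Real.cos y - Real.cos t)) t := by
  have hA : HasDerivAt (fun z : ℝ => (z - y)/2) (1/2) t := by
    simpa using ((hasDerivAt_id t).sub_const y).div_const 2
  have hB : HasDerivAt (fun z : ℝ => (z + y)/2) (1/2) t := by
    simpa using ((hasDerivAt_id t).add_const y).div_const 2
  have hsA : HasDerivAt (fun z : ℝ => Real.sin ((z - y)/2)) (Real.cos ((t - y)/2) * (1/2)) t :=
    by have := (Real.hasDerivAt_sin ((t - y)/2)).comp t hA; exact this
  have hsB : HasDerivAt (fun z : ℝ => Real.sin ((z + y)/2)) (Real.cos ((t + y)/2) * (1/2)) t :=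
    by have := (Real.hasDerivAt_sin ((t + y)/2)).comp t hB; exact this
  have hlA : HasDerivAt (fun z : ℝ => Real.log (Real.sin ((z - y)/2)))
      ((Real.sin ((t - y)/2))⁻¹ * (Real.cos ((t - y)/2) * (1/2))) t :=
    by have := (Real.hasDerivAt_log h1).comp t hsA; exact this
  have hlB : HasDerivAt (fun z : ℝ => Real.log (Real.sin ((z + y)/2)))
      ((Real.sin ((t + y)/2))⁻¹ * (Real.cos ((t + y)/2) * (1/2))) t :=
    by have := (Real.hasDerivAt_log h2).comp t hsB; exact this
  have h := (hlA.sub hlB).div_const (Real.sin y)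
  convert h using 1
  · rfl
  · rfl
  · rfl
  have e1 : Real.sin y = Real.sin ((t + y)/2) * Real.cos ((t - y)/2)
      - Real.cos ((t + y)/2) * Real.sin ((t - y)/2) := by
    rw [← Real.sin_sub]; congr 1; ring
  have e2 : Real.cos y - Real.cos t = 2 * Real.sin ((t + y)/2) * Real.sin ((t - y)/2) := by
    rw [Real.cos_sub_cos, show (y + t)/2 = (t + y)/2 from by ring,
      show (y - t)/2 = -((t - y)/2) from by ring, Real.sin_neg]; ring
  rw [e2]
  field_simp
  linear_combination e1

lemma tendsto_J {y : ℝ} (hy1 : 0 < y) (hy2 : y < Real.pi) :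
    Tendsto (fun ε => (∫ z in (0:ℝ)..(y - ε), 1 / (Real.cos y - Real.cos z)) +
        ∫ z in (y + ε)..Real.pi, 1 / (Real.cos y - Real.cos z))
      (nhdsWithin 0 (Set.Ioi 0)) (nhds 0) := by
  have hs : 0 < Real.sin y := Real.sin_pos_of_pos_of_lt_pi hy1 hy2
  have hδ0 : 0 < min y (Real.pi - y) := lt_min hy1 (by linarith)
  set F := fun z => (Real.log (Real.sin ((z - y)/2)) - Real.log (Real.sin ((z + y)/2))) / Real.sin y
    with hF
  have key : ∀ ε ∈ Set.Ioo (0:ℝ) (min y (Real.pi - y)),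
      (∫ z in (0:ℝ)..(y - ε), 1 / (Real.cos y - Real.cos z)) +
        (∫ z in (y + ε)..Real.pi, 1 / (Real.cos y - Real.cos z))
      = (Real.log (Real.sin (y + ε/2)) - Real.log (Real.sin (y - ε/2))) / Real.sin y := by
    intro ε hε
    obtain ⟨hε0, hεδ⟩ := hε
    have hεy : ε < y := lt_of_lt_of_le hεδ (min_le_left _ _)
    have hεπ : ε < Real.pi - y := lt_of_lt_of_le hεδ (min_le_right _ _)
    have hL : (∫ z in (0:ℝ)..(y - ε), 1 / (Real.cos y - Real.cos z)) = F (y - ε) - F 0 := by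
      apply intervalIntegral.integral_eq_sub_of_hasDerivAt
      · intro t ht
        rw [Set.uIcc_of_le (by linarith)] at ht
        apply hasDerivAt_F y t ?_ ?_ hs.ne'
        · have ha : -Real.pi < (t - y)/2 := by nlinarith [Real.pi_pos, ht.1]
          have hb : (t - y)/2 < 0 := by nlinarith [ht.2]
          exact (Real.sin_neg_of_neg_of_neg_pi_lt hb ha).ne
        · have ha : 0 < (t + y)/2 := by nlinarith [ht.1]
          have hb : (t + y)/2 < Real.pi := by nlinarith [ht.2, Real.pi_pos]
          exact (Real.sin_pos_of_pos_of_lt_pi ha hb).ne'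
      · exact intInt (left_ne hy2 hε0 hεy) _ continuous_const
    have hR : (∫ z in (y + ε)..Real.pi, 1 / (Real.cos y - Real.cos z)) = F Real.pi - F (y + ε) := by
      apply intervalIntegral.integral_eq_sub_of_hasDerivAt
      · intro t ht
        rw [Set.uIcc_of_le (by linarith)] at ht
        apply hasDerivAt_F y t ?_ ?_ hs.ne'
        · have ha : 0 < (t - y)/2 := by nlinarith [ht.1]
          have hb : (t - y)/2 < Real.pi := by nlinarith [ht.2, Real.pi_pos]
          exact (Real.sin_pos_of_pos_of_lt_pi ha hb).ne'
        · have ha : 0 < (t + y)/2 := by nlinarith [ht.1]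
          have hb : (t + y)/2 < Real.pi := by nlinarith [ht.2, Real.pi_pos]
          exact (Real.sin_pos_of_pos_of_lt_pi ha hb).ne'
      · exact intInt (right_ne hy1 hε0 hεπ) _ continuous_const
    rw [hL, hR]
    have F0 : F 0 = 0 := by
      rw [hF]
      simp only []
      rw [show ((0:ℝ) - y)/2 = -(y/2) from by ring, Real.sin_neg, Real.log_neg_eq_log,
        show ((0:ℝ) + y)/2 = y/2 from by ring, sub_self, zero_div]
    have Fpi : F Real.pi = 0 := by
      rw [hF]
      simp only []
      rw [show (Real.pi + y)/2 = Real.pi - (Real.pi - y)/2 from by ring, Real.sin_pi_sub,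
        sub_self, zero_div]
    have FL : F (y - ε) = (Real.log (Real.sin (ε/2)) - Real.log (Real.sin (y - ε/2))) / Real.sin y := by
      rw [hF]
      simp only []
      rw [show (y - ε - y)/2 = -(ε/2) from by ring, Real.sin_neg, Real.log_neg_eq_log,
        show (y - ε + y)/2 = y - ε/2 from by ring]
    have FR : F (y + ε) = (Real.log (Real.sin (ε/2)) - Real.log (Real.sin (y + ε/2))) / Real.sin y := by
      rw [hF]
      simp only []
      rw [show (y + ε - y)/2 = ε/2 from by ring, show (y + ε + y)/2 = y + ε/2 from by ring]
    rw [F0, Fpi, FL, FR]; ring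
  have hphi : Tendsto (fun ε : ℝ =>
      (Real.log (Real.sin (y + ε/2)) - Real.log (Real.sin (y - ε/2))) / Real.sin y)
      (nhdsWithin 0 (Set.Ioi 0)) (nhds 0) := by
    have c1 : ContinuousAt (fun ε : ℝ => Real.log (Real.sin (y + ε/2))) 0 := by
      apply ContinuousAt.comp (x := (0:ℝ)) (g := Real.log)
      · apply Real.continuousAt_log
        norm_num
        exact hs.ne'
      · fun_prop
    have c2 : ContinuousAt (fun ε : ℝ => Real.log (Real.sin (y - ε/2))) 0 := by
      apply ContinuousAt.comp (x := (0:ℝ)) (g := Real.log)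
      · apply Real.continuousAt_log
        norm_num
        exact hs.ne'
      · fun_prop
    have := (((c1.sub c2).div_const (Real.sin y)).tendsto).mono_left
      (nhdsWithin_le_nhds (s := Set.Ioi (0:ℝ)))
    simpa using this
  exact Tendsto.congr' (eventuallyEq_of_mem (Ioo_mem_nhdsGT_of_mem ⟨le_refl 0, hδ0⟩)
    (fun ε hε => (key ε hε).symm)) hphi

lemma integral_sin_sin (k : ℕ) :
    (∫ z in (0:ℝ)..Real.pi, Real.sin z * Real.sin (((k:ℝ) + 2) * z)) = 0 := by
  have hk1 : ((k:ℝ) + 1) ≠ 0 := by positivity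
  have hk3 : ((k:ℝ) + 3) ≠ 0 := by positivity
  have hder : ∀ t ∈ Set.uIcc (0:ℝ) Real.pi,
      HasDerivAt (fun z => (Real.sin (((k:ℝ)+1) * z)/((k:ℝ)+1)
          - Real.sin (((k:ℝ)+3) * z)/((k:ℝ)+3))/2)
        (Real.sin t * Real.sin (((k:ℝ) + 2) * t)) t := by
    intro t _
    have d1 : HasDerivAt (fun z : ℝ => Real.sin (((k:ℝ)+1) * z))
        (Real.cos (((k:ℝ)+1) * t) * ((k:ℝ)+1)) t := by
      exact (Real.hasDerivAt_sin _).comp t (by simpa using (hasDerivAt_id t).const_mul ((k:ℝ)+1))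
    have d3 : HasDerivAt (fun z : ℝ => Real.sin (((k:ℝ)+3) * z))
        (Real.cos (((k:ℝ)+3) * t) * ((k:ℝ)+3)) t := by
      exact (Real.hasDerivAt_sin _).comp t (by simpa using (hasDerivAt_id t).const_mul ((k:ℝ)+3))
    have h := ((d1.div_const ((k:ℝ)+1)).sub (d3.div_const ((k:ℝ)+3))).div_const 2
    convert h using 1
    · rfl
    · rfl
    · rfl
    have e1 : Real.cos (((k:ℝ)+1) * t)
        = Real.cos (((k:ℝ)+2) * t) * Real.cos t + Real.sin (((k:ℝ)+2) * t) * Real.sin t := by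
      rw [← Real.cos_sub]; congr 1; ring
    have e3 : Real.cos (((k:ℝ)+3) * t)
        = Real.cos (((k:ℝ)+2) * t) * Real.cos t - Real.sin (((k:ℝ)+2) * t) * Real.sin t := by
      rw [← Real.cos_add]; congr 1; ring
    rw [e1, e3]
    field_simp
    ring
  rw [intervalIntegral.integral_eq_sub_of_hasDerivAt hder (Continuous.intervalIntegrable (by fun_prop) _ _)]
  have s1 : Real.sin (((k:ℝ)+1) * Real.pi) = 0 := by
    have := Real.sin_nat_mul_pi (k+1)
    push_cast at this ⊢
    convert this using 2
  have s3 : Real.sin (((k:ℝ)+3) * Real.pi) = 0 := by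
    have := Real.sin_nat_mul_pi (k+3)
    push_cast at this ⊢
    convert this using 2
  simp [s1, s3]

lemma tendsto_A (y : ℝ) (m : ℕ) :
    Tendsto (fun ε => (∫ z in (0:ℝ)..(y - ε), Real.sin z * Real.sin (m * z)) +
        ∫ z in (y + ε)..Real.pi, Real.sin z * Real.sin (m * z))
      (nhdsWithin 0 (Set.Ioi 0))
      (nhds (if m = 1 then Real.pi/2 else 0)) := by
  have h := tendsto_both y (fun z => Real.sin z * Real.sin (m * z)) (by fun_prop)
  have hval : (∫ z in (0:ℝ)..Real.pi, Real.sin z * Real.sin (m * z))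
      = (if m = 1 then Real.pi/2 else 0) := by
    match m with
    | 0 => simp
    | 1 =>
      simp only [Nat.cast_one, one_mul, if_pos rfl]
      have : ∀ z : ℝ, Real.sin z * Real.sin z = Real.sin z ^ 2 := fun z => (sq (Real.sin z)).symm
      rw [intervalIntegral.integral_congr (fun z _ => this z)]
      rw [integral_sin_sq]
      simp
    | (k+2) =>
      have := integral_sin_sin k
      rw [if_neg (by omega)]
      rw [← this]
      congr 1
      funext z
      push_cast
      ring_nf
  rwa [hval] at h

lemma integral_base {y a b : ℝ} (hne : ∀ z ∈ Set.uIcc a b, Real.cos y - Real.cos z ≠ 0) :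
    (∫ z in a..b, Real.sin z * Real.sin ((1:ℕ) * z) / (Real.cos y - Real.cos z))
      = Real.sin y ^ 2 * (∫ z in a..b, 1 / (Real.cos y - Real.cos z))
        + ∫ z in a..b, (Real.cos y + Real.cos z) := by
  have hcong : ∀ z ∈ Set.uIcc a b,
      Real.sin z * Real.sin ((1:ℕ) * z) / (Real.cos y - Real.cos z)
        = Real.sin y ^ 2 * (1 / (Real.cos y - Real.cos z)) + (Real.cos y + Real.cos z) := by
    intro z hz
    have hD := hne z hz
    push_cast
    rw [one_mul]
    field_simp
    linear_combination Real.sin_sq_add_cos_sq z - Real.sin_sq_add_cos_sq y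
  rw [intervalIntegral.integral_congr hcong]
  rw [intervalIntegral.integral_add ((intInt hne _ continuous_const).const_mul _)
    (Continuous.intervalIntegrable (by fun_prop) _ _),
    intervalIntegral.integral_const_mul]

lemma integral_rec (n : ℕ) {y a b : ℝ} (hne : ∀ z ∈ Set.uIcc a b, Real.cos y - Real.cos z ≠ 0) :
    (∫ z in a..b, Real.sin z * Real.sin ((n + 2 : ℕ) * z) / (Real.cos y - Real.cos z))
      = 2 * Real.cos y *
          (∫ z in a..b, Real.sin z * Real.sin ((n + 1 : ℕ) * z) / (Real.cos y - Real.cos z))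
        - (∫ z in a..b, Real.sin z * Real.sin (n * z) / (Real.cos y - Real.cos z))
        - 2 * ∫ z in a..b, Real.sin z * Real.sin ((n + 1 : ℕ) * z) := by
  have hcong : ∀ z ∈ Set.uIcc a b,
      Real.sin z * Real.sin ((n + 2 : ℕ) * z) / (Real.cos y - Real.cos z)
        = 2 * Real.cos y * (Real.sin z * Real.sin ((n + 1 : ℕ) * z) / (Real.cos y - Real.cos z))
          - Real.sin z * Real.sin (n * z) / (Real.cos y - Real.cos z)
          - 2 * (Real.sin z * Real.sin ((n + 1 : ℕ) * z)) := by
    intro z hz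
    have hD := hne z hz
    have key : Real.sin (((n:ℝ) + 2) * z) + Real.sin ((n:ℝ) * z)
        = 2 * Real.sin (((n:ℝ) + 1) * z) * Real.cos z := by
      rw [show ((n:ℝ) + 2) * z = ((n:ℝ) + 1) * z + z from by ring,
        show (n:ℝ) * z = ((n:ℝ) + 1) * z - z from by ring, Real.sin_add, Real.sin_sub]
      ring
    push_cast
    field_simp
    linear_combination (norm := ring_nf) (Real.sin z) * key
  rw [intervalIntegral.integral_congr hcong]
  have i1 : IntervalIntegrable
      (fun z => Real.sin z * Real.sin ((n + 1 : ℕ) * z) / (Real.cos y - Real.cos z)) volume a b :=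
    intInt hne _ (by fun_prop)
  have i0 : IntervalIntegrable
      (fun z => Real.sin z * Real.sin ((n : ℕ) * z) / (Real.cos y - Real.cos z)) volume a b :=
    intInt hne _ (by fun_prop)
  have i2 : IntervalIntegrable (fun z => Real.sin z * Real.sin ((n + 1 : ℕ) * z)) volume a b :=
    Continuous.intervalIntegrable (by fun_prop) _ _
  rw [intervalIntegral.integral_sub ((i1.const_mul _).sub i0) (i2.const_mul _),
    intervalIntegral.integral_sub (i1.const_mul _) i0,
    intervalIntegral.integral_const_mul, intervalIntegral.integral_const_mul]

lemma main_tendsto {y : ℝ} (hy1 : 0 < y) (hy2 : y < Real.pi) (n : ℕ) :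
    Tendsto (If y n) (nhdsWithin 0 (Set.Ioi 0)) (nhds (L y n)) := by
  have hδ0 : 0 < min y (Real.pi - y) := lt_min hy1 (by linarith)
  have hmem : Set.Ioo (0:ℝ) (min y (Real.pi - y)) ∈ nhdsWithin (0:ℝ) (Set.Ioi 0) :=
    Ioo_mem_nhdsGT_of_mem ⟨le_refl 0, hδ0⟩
  induction n using Nat.twoStepInduction with
  | zero =>
    have : If y 0 = fun _ => (0:ℝ) := by
      funext ε
      simp [If]
    rw [this, L]
    simp
  | one =>
    have key : ∀ ε ∈ Set.Ioo (0:ℝ) (min y (Real.pi - y)),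
        ((Real.sin y ^ 2) * ((∫ z in (0:ℝ)..(y - ε), 1 / (Real.cos y - Real.cos z)) +
            ∫ z in (y + ε)..Real.pi, 1 / (Real.cos y - Real.cos z))
          + ((∫ z in (0:ℝ)..(y - ε), (Real.cos y + Real.cos z)) +
            ∫ z in (y + ε)..Real.pi, (Real.cos y + Real.cos z)))
        = If y 1 ε := by
      intro ε hε
      have hεy : ε < y := lt_of_lt_of_le hε.2 (min_le_left _ _)
      have hεπ : ε < Real.pi - y := lt_of_lt_of_le hε.2 (min_le_right _ _)
      rw [If, integral_base (left_ne hy2 hε.1 hεy), integral_base (right_ne hy1 hε.1 hεπ)]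
      ring
    have hT := (((tendsto_J hy1 hy2).const_mul (Real.sin y ^ 2)).add
      (tendsto_both y (fun z => Real.cos y + Real.cos z) (by fun_prop)))
    have hval : Real.sin y ^ 2 * 0 + (∫ z in (0:ℝ)..Real.pi, (Real.cos y + Real.cos z))
        = L y 1 := by
      rw [intervalIntegral.integral_add (intervalIntegrable_const)
        (Continuous.intervalIntegrable Real.continuous_cos _ _),
        intervalIntegral.integral_const, integral_cos]
      rw [L]
      simp
    rw [← hval]
    exact Tendsto.congr' (eventuallyEq_of_mem hmem (fun ε hε => key ε hε)) hT
  | more n ihn ihn1 =>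
    have key : ∀ ε ∈ Set.Ioo (0:ℝ) (min y (Real.pi - y)),
        (2 * Real.cos y * If y (n+1) ε - If y n ε
          - 2 * ((∫ z in (0:ℝ)..(y - ε), Real.sin z * Real.sin ((n+1 : ℕ) * z)) +
              ∫ z in (y + ε)..Real.pi, Real.sin z * Real.sin ((n+1 : ℕ) * z)))
        = If y (n+2) ε := by
      intro ε hε
      have hεy : ε < y := lt_of_lt_of_le hε.2 (min_le_left _ _)
      have hεπ : ε < Real.pi - y := lt_of_lt_of_le hε.2 (min_le_right _ _)
      rw [If, If, If, integral_rec n (left_ne hy2 hε.1 hεy),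
        integral_rec n (right_ne hy1 hε.1 hεπ)]
      ring
    have hT := (((ihn1).const_mul (2 * Real.cos y)).sub ihn).sub
      ((tendsto_A y (n+1)).const_mul 2)
    have hval : 2 * Real.cos y * L y (n+1) - L y n
        - 2 * (if n + 1 = 1 then Real.pi/2 else 0) = L y (n+2) := by
      match n with
      | 0 =>
        rw [L, L, L]
        norm_num
        rw [Real.cos_two_mul]
        ring
      | (m+1) =>
        rw [L, L, L, if_neg (by omega), if_neg (by omega), if_neg (by omega), if_neg (by omega)]
        have e : Real.cos (((m:ℝ)+1+2) * y) + Real.cos (((m:ℝ)+1) * y)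
            = 2 * Real.cos (((m:ℝ)+1+1) * y) * Real.cos y := by
          rw [show ((m:ℝ)+1+2) * y = ((m:ℝ)+1+1) * y + y from by ring,
            show ((m:ℝ)+1) * y = ((m:ℝ)+1+1) * y - y from by ring, Real.cos_add, Real.cos_sub]
          ring
        push_cast at e ⊢
        linear_combination (-Real.pi) * e
    rw [← hval]
    exact Tendsto.congr' (eventuallyEq_of_mem hmem (fun ε hε => key ε hε)) hT

/-- Airfoil-operator identity `K sin(n·) = cos(n·)`: for `n ≥ 1` and `y ∈ (0,π)`, the
principal value `(1/π) P.V. ∫₀^π sin(z) sin(nz)/(cos y − cos z) dz` exists and equals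
`cos(ny)`. -/
theorem airfoil_K_sin (n : ℕ) (hn : 1 ≤ n) (y : ℝ) (hy : y ∈ Set.Ioo 0 Real.pi) :
    Tendsto
      (fun ε : ℝ =>
        (1 / Real.pi) *
          ((∫ z in (0:ℝ)..(y - ε), Real.sin z * Real.sin (n * z) / (Real.cos y - Real.cos z)) +
           ∫ z in (y + ε)..Real.pi, Real.sin z * Real.sin (n * z) / (Real.cos y - Real.cos z)))
      (nhdsWithin 0 (Set.Ioi 0)) (nhds (Real.cos (n * y))) := by
  obtain ⟨hy1, hy2⟩ := hy
  have h := (main_tendsto hy1 hy2 n).const_mul (1 / Real.pi)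
  have hL : (1 / Real.pi) * L y n = Real.cos (n * y) := by
    rw [L, if_neg (by omega)]
    rw [← mul_assoc]
    rw [one_div_mul_cancel Real.pi_ne_zero, one_mul]
  rw [hL] at h
  exact h
end

section
/- For every integer n ≥ 1 and every y ∈ (0,π), the principal value −(sin y/π) P.V. ∫_{0}^{π} cos(nz) / (cos y − cos z) dz exists and equals sin(ny); moreover for n = 0, i.e. for the constant function 1, the principal value −(sin y/π) P.V. ∫_{0}^{π} 1/(cos y − cos z) dz exists and equals 0. -/
open Filter

section AirfoilAux
open Real Set intervalIntegral MeasureTheory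

private lemma airfoil_cos_ne {y : ℝ} (hy : y ∈ Set.Ioo 0 π) {z : ℝ} (hz : z ∈ Set.Icc 0 π)
    (hne : z ≠ y) : Real.cos y - Real.cos z ≠ 0 := by
  intro h
  exact hne (Real.injOn_cos hz ⟨hy.1.le, hy.2.le⟩ (by linarith))

private lemma airfoil_intInt {y : ℝ} (hy : y ∈ Set.Ioo 0 π) (f : ℝ → ℝ) (hf : Continuous f)
    {a b : ℝ} (hab : a ≤ b) (hsub : Set.Icc a b ⊆ Set.Icc 0 π) (hyab : y ∉ Set.Icc a b) :
    IntervalIntegrable (fun z => f z / (Real.cos y - Real.cos z)) MeasureTheory.volume a b := by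
  apply ContinuousOn.intervalIntegrable
  rw [Set.uIcc_of_le hab]
  apply hf.continuousOn.div (by fun_prop)
  intro z hz
  exact airfoil_cos_ne hy (hsub hz) (fun h => hyab (h ▸ hz))

private lemma airfoil_hasDerivAt_F0 {y : ℝ} (hsy : Real.sin y ≠ 0) {z : ℝ}
    (ha : Real.sin ((z+y)/2) ≠ 0) (hb : Real.sin ((z-y)/2) ≠ 0) :
    HasDerivAt (fun w => -(Real.sin y)⁻¹ * (Real.log (Real.sin ((w+y)/2)) - Real.log (Real.sin ((w-y)/2))))
      (1/(Real.cos y - Real.cos z)) z := by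
  have hia : HasDerivAt (fun w : ℝ => (w+y)/2) (1/2) z := by
    simpa using ((hasDerivAt_id z).add_const y).div_const 2
  have hib : HasDerivAt (fun w : ℝ => (w-y)/2) (1/2) z := by
    simpa using ((hasDerivAt_id z).sub_const y).div_const 2
  have hsa : HasDerivAt (fun w : ℝ => Real.sin ((w+y)/2)) (Real.cos ((z+y)/2) * (1/2)) z :=
    (Real.hasDerivAt_sin _).comp z hia
  have hsb : HasDerivAt (fun w : ℝ => Real.sin ((w-y)/2)) (Real.cos ((z-y)/2) * (1/2)) z :=
    (Real.hasDerivAt_sin _).comp z hib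
  have hla : HasDerivAt (fun w : ℝ => Real.log (Real.sin ((w+y)/2)))
      ((Real.sin ((z+y)/2))⁻¹ * (Real.cos ((z+y)/2) * (1/2))) z :=
    (Real.hasDerivAt_log ha).comp (h₂ := Real.log) z hsa
  have hlb : HasDerivAt (fun w : ℝ => Real.log (Real.sin ((w-y)/2)))
      ((Real.sin ((z-y)/2))⁻¹ * (Real.cos ((z-y)/2) * (1/2))) z :=
    (Real.hasDerivAt_log hb).comp (h₂ := Real.log) z hsb
  have h := (hla.sub hlb).const_mul (-(Real.sin y)⁻¹)
  refine h.congr_deriv (Eq.symm ?_)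
  have hD : Real.cos y - Real.cos z = 2 * Real.sin ((z+y)/2) * Real.sin ((z-y)/2) := by
    rw [Real.cos_sub_cos]
    have e1 : (y+z)/2 = (z+y)/2 := by ring
    have e2 : (y-z)/2 = -((z-y)/2) := by ring
    rw [e1, e2, Real.sin_neg]; ring
  have hy' : Real.sin y = Real.sin ((z+y)/2) * Real.cos ((z-y)/2)
      - Real.cos ((z+y)/2) * Real.sin ((z-y)/2) := by
    rw [← Real.sin_sub]; congr 1; ring
  rw [hD]
  set sa := Real.sin ((z+y)/2)
  set sb := Real.sin ((z-y)/2)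
  set ca := Real.cos ((z+y)/2)
  set cb := Real.cos ((z-y)/2)
  rw [hy'] at hsy ⊢
  field_simp
  have hsy2 : sa * cb - sb * ca ≠ 0 := fun h => hsy (by linarith)
  rw [← neg_div, neg_sub, div_self hsy2]

private lemma airfoil_pv0 {y ε : ℝ} (hy : y ∈ Set.Ioo 0 π) (hε1 : 0 < ε) (hε2 : ε < y)
    (hε3 : ε < π - y) :
    (∫ z in (0:ℝ)..(y-ε), 1/(Real.cos y - Real.cos z)) + ∫ z in (y+ε)..π, 1/(Real.cos y - Real.cos z)
      = -(Real.sin y)⁻¹ * (Real.log (Real.sin (y-ε/2)) - Real.log (Real.sin (y+ε/2))) := by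
  obtain ⟨hy1, hy2⟩ := hy
  have hsy : Real.sin y ≠ 0 := (Real.sin_pos_of_pos_of_lt_pi hy1 hy2).ne'
  set F0 : ℝ → ℝ := fun w =>
    -(Real.sin y)⁻¹ * (Real.log (Real.sin ((w+y)/2)) - Real.log (Real.sin ((w-y)/2))) with hF0
  have i1 : (∫ z in (0:ℝ)..(y-ε), 1/(Real.cos y - Real.cos z)) = F0 (y-ε) - F0 0 := by
    apply intervalIntegral.integral_eq_sub_of_hasDerivAt
    · intro z hz
      rw [Set.uIcc_of_le (by linarith)] at hz
      obtain ⟨hz1, hz2⟩ := hz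
      apply airfoil_hasDerivAt_F0 hsy
      · exact (Real.sin_pos_of_pos_of_lt_pi (by linarith) (by linarith)).ne'
      · exact (Real.sin_neg_of_neg_of_neg_pi_lt (by linarith) (by linarith)).ne
    · exact airfoil_intInt ⟨hy1, hy2⟩ (fun _ => 1) continuous_const (by linarith)
        (fun z hz => ⟨hz.1, by obtain ⟨h1,h2⟩ := hz; linarith⟩)
        (fun h => by obtain ⟨h1,h2⟩ := h; linarith)
  have i2 : (∫ z in (y+ε)..π, 1/(Real.cos y - Real.cos z)) = F0 π - F0 (y+ε) := by
    apply intervalIntegral.integral_eq_sub_of_hasDerivAt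
    · intro z hz
      rw [Set.uIcc_of_le (by linarith)] at hz
      obtain ⟨hz1, hz2⟩ := hz
      apply airfoil_hasDerivAt_F0 hsy
      · exact (Real.sin_pos_of_pos_of_lt_pi (by linarith) (by linarith)).ne'
      · exact (Real.sin_pos_of_pos_of_lt_pi (by linarith) (by linarith)).ne'
    · exact airfoil_intInt ⟨hy1, hy2⟩ (fun _ => 1) continuous_const (by linarith)
        (fun z hz => ⟨by obtain ⟨h1,h2⟩ := hz; linarith, hz.2⟩)
        (fun h => by obtain ⟨h1,h2⟩ := h; linarith)
  have hF00 : F0 0 = 0 := by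
    rw [hF0]; beta_reduce
    have e1 : ((0:ℝ)+y)/2 = y/2 := by ring
    have e2 : ((0:ℝ)-y)/2 = -(y/2) := by ring
    simp only [e1, e2, Real.sin_neg, Real.log_neg_eq_log, sub_self, mul_zero]
  have hF0π : F0 π = 0 := by
    rw [hF0]; beta_reduce
    have e1 : (π+y)/2 = π/2 + y/2 := by ring
    have e2 : (π-y)/2 = π/2 - y/2 := by ring
    simp [e1, e2, Real.sin_add, Real.sin_pi_div_two_sub]
  have hFm : F0 (y-ε) = -(Real.sin y)⁻¹ * (Real.log (Real.sin (y-ε/2)) - Real.log (Real.sin (ε/2))) := by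
    rw [hF0]; beta_reduce
    have e1 : ((y-ε)+y)/2 = y-ε/2 := by ring
    have e2 : ((y-ε)-y)/2 = -(ε/2) := by ring
    rw [e1, e2, Real.sin_neg, Real.log_neg_eq_log]
  have hFp : F0 (y+ε) = -(Real.sin y)⁻¹ * (Real.log (Real.sin (y+ε/2)) - Real.log (Real.sin (ε/2))) := by
    rw [hF0]; beta_reduce
    have e1 : ((y+ε)+y)/2 = y+ε/2 := by ring
    have e2 : ((y+ε)-y)/2 = ε/2 := by ring
    rw [e1, e2]
  rw [i1, i2, hF00, hF0π, hFm, hFp]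
  ring

private lemma airfoil_ptwise {y z : ℝ} (hD : Real.cos y - Real.cos z ≠ 0) (c : ℝ) :
    Real.cos ((c+2) * z) / (Real.cos y - Real.cos z)
      = 2*Real.cos y * (Real.cos ((c+1)*z)/(Real.cos y - Real.cos z))
        - Real.cos (c*z)/(Real.cos y - Real.cos z) - 2*Real.cos ((c+1)*z) := by
  have e1 : (c+2)*z = (c+1)*z + z := by ring
  have e2 : c*z = (c+1)*z - z := by ring
  rw [e1, e2, Real.cos_add, Real.cos_sub]
  field_simp
  ring

private lemma airfoil_split {y : ℝ} (hy : y ∈ Set.Ioo 0 π) {a b : ℝ} (hab : a ≤ b)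
    (hsub : Set.Icc a b ⊆ Set.Icc 0 π) (hyab : y ∉ Set.Icc a b) (c : ℝ) :
    ∫ z in a..b, Real.cos ((c+2) * z) / (Real.cos y - Real.cos z)
      = 2*Real.cos y * (∫ z in a..b, Real.cos ((c+1)*z)/(Real.cos y - Real.cos z))
        - (∫ z in a..b, Real.cos (c*z)/(Real.cos y - Real.cos z))
        - 2 * ∫ z in a..b, Real.cos ((c+1)*z) := by
  have i1 := airfoil_intInt hy (fun z => Real.cos ((c+1)*z)) (by fun_prop) hab hsub hyab
  have i0 := airfoil_intInt hy (fun z => Real.cos (c*z)) (by fun_prop) hab hsub hyab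
  have i2 : IntervalIntegrable (fun z => Real.cos ((c+1)*z)) volume a b :=
    (Continuous.intervalIntegrable (by fun_prop) a b)
  have hcg : Set.EqOn (fun z => Real.cos ((c+2) * z) / (Real.cos y - Real.cos z))
      (fun z => (2*Real.cos y * (Real.cos ((c+1)*z)/(Real.cos y - Real.cos z))
        - Real.cos (c*z)/(Real.cos y - Real.cos z)) - 2*Real.cos ((c+1)*z)) (Set.uIcc a b) := by
    intro z hz
    rw [Set.uIcc_of_le hab] at hz
    exact airfoil_ptwise (airfoil_cos_ne hy (hsub hz) (fun h => hyab (h ▸ hz))) c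
  rw [intervalIntegral.integral_congr hcg,
    intervalIntegral.integral_sub ((i1.const_mul _).sub i0) (i2.const_mul 2),
    intervalIntegral.integral_sub (i1.const_mul _) i0,
    intervalIntegral.integral_const_mul, intervalIntegral.integral_const_mul]

private lemma airfoil_split1 {y : ℝ} (hy : y ∈ Set.Ioo 0 π) {a b : ℝ} (hab : a ≤ b)
    (hsub : Set.Icc a b ⊆ Set.Icc 0 π) (hyab : y ∉ Set.Icc a b) :
    ∫ z in a..b, Real.cos (1*z) / (Real.cos y - Real.cos z)
      = Real.cos y * (∫ z in a..b, 1/(Real.cos y - Real.cos z)) - (b - a) := by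
  have i0 := airfoil_intInt hy (fun _ => 1) continuous_const hab hsub hyab
  have hcg : Set.EqOn (fun z => Real.cos (1 * z) / (Real.cos y - Real.cos z))
      (fun z => Real.cos y * (1/(Real.cos y - Real.cos z)) - 1) (Set.uIcc a b) := by
    intro z hz
    rw [Set.uIcc_of_le hab] at hz
    have hD := airfoil_cos_ne hy (hsub hz) (fun h => hyab (h ▸ hz))
    simp only [one_mul]
    field_simp
    ring
  rw [intervalIntegral.integral_congr hcg,
    intervalIntegral.integral_sub (i0.const_mul _) intervalIntegrable_const,
    intervalIntegral.integral_const_mul, intervalIntegral.integral_const]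
  simp [smul_eq_mul]

private lemma airfoil_cosint {m : ℕ} (hm : 1 ≤ m) (y : ℝ) :
    Tendsto (fun ε : ℝ => (∫ z in (0:ℝ)..(y-ε), Real.cos (m*z)) + ∫ z in (y+ε)..π, Real.cos (m*z))
      (nhdsWithin 0 (Set.Ioi 0)) (nhds 0) := by
  have hm' : (m:ℝ) ≠ 0 := Nat.cast_ne_zero.mpr (by omega)
  have key : ∀ a b : ℝ, (∫ z in a..b, Real.cos (m*z)) = (Real.sin (m*b) - Real.sin (m*a))/m := by
    intro a b
    rw [intervalIntegral.integral_comp_mul_left (fun x => Real.cos x) hm', integral_cos,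
      smul_eq_mul]
    ring
  simp only [key]
  have hc : Continuous (fun ε : ℝ =>
      (Real.sin (m*(y-ε)) - Real.sin (m*0))/m + (Real.sin (m*π) - Real.sin (m*(y+ε)))/m) := by
    fun_prop
  have := hc.tendsto' 0 0 (by simp [Real.sin_nat_mul_pi]; ring)
  exact this.mono_left nhdsWithin_le_nhds

end AirfoilAux

/-- Adjoint airfoil-operator identities `K* cos(n·) = sin(n·)` (for `n ≥ 1`) and
`K* 1 = 0`: for `y ∈ (0,π)`, the principal values
`−(sin y/π) P.V. ∫₀^π cos(nz)/(cos y − cos z) dz` and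
`−(sin y/π) P.V. ∫₀^π 1/(cos y − cos z) dz` exist and equal `sin(ny)` and `0`,
respectively. -/
theorem airfoil_Kstar (y : ℝ) (hy : y ∈ Set.Ioo 0 Real.pi) :
    (∀ n : ℕ, 1 ≤ n →
      Tendsto
        (fun ε : ℝ =>
          -(Real.sin y / Real.pi) *
            ((∫ z in (0:ℝ)..(y - ε), Real.cos (n * z) / (Real.cos y - Real.cos z)) +
             ∫ z in (y + ε)..Real.pi, Real.cos (n * z) / (Real.cos y - Real.cos z)))
        (nhdsWithin 0 (Set.Ioi 0)) (nhds (Real.sin (n * y)))) ∧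
    Tendsto
      (fun ε : ℝ =>
        -(Real.sin y / Real.pi) *
          ((∫ z in (0:ℝ)..(y - ε), 1 / (Real.cos y - Real.cos z)) +
           ∫ z in (y + ε)..Real.pi, 1 / (Real.cos y - Real.cos z)))
      (nhdsWithin 0 (Set.Ioi 0)) (nhds 0) := by
  obtain ⟨hy1, hy2⟩ := hy
  have hπ := Real.pi_pos
  have hsy : Real.sin y ≠ 0 := (Real.sin_pos_of_pos_of_lt_pi hy1 hy2).ne'
  have hδ : (0:ℝ) < min y (Real.pi - y) := lt_min hy1 (by linarith)
  have hEv : Set.Ioo (0:ℝ) (min y (Real.pi - y)) ∈ nhdsWithin (0:ℝ) (Set.Ioi 0) :=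
    Ioo_mem_nhdsGT_of_mem ⟨le_refl 0, hδ⟩
  -- the principal value for n = 0 tends to 0
  have P0 : Tendsto (fun ε : ℝ =>
      (∫ z in (0:ℝ)..(y-ε), 1/(Real.cos y - Real.cos z)) +
        ∫ z in (y+ε)..Real.pi, 1/(Real.cos y - Real.cos z))
      (nhdsWithin 0 (Set.Ioi 0)) (nhds 0) := by
    have c1 : ContinuousAt (fun ε : ℝ => Real.log (Real.sin (y - ε/2))) 0 :=
      (Real.continuousAt_log (by simpa using hsy)).comp (Continuous.continuousAt (by fun_prop))
    have c2 : ContinuousAt (fun ε : ℝ => Real.log (Real.sin (y + ε/2))) 0 :=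
      (Real.continuousAt_log (by simpa using hsy)).comp (Continuous.continuousAt (by fun_prop))
    have hcont : ContinuousAt (fun ε : ℝ =>
        -(Real.sin y)⁻¹ * (Real.log (Real.sin (y-ε/2)) - Real.log (Real.sin (y+ε/2)))) 0 :=
      continuousAt_const.mul (c1.sub c2)
    have hG : Tendsto (fun ε : ℝ =>
        -(Real.sin y)⁻¹ * (Real.log (Real.sin (y-ε/2)) - Real.log (Real.sin (y+ε/2))))
        (nhdsWithin 0 (Set.Ioi 0)) (nhds 0) := by
      have h2 : Tendsto (fun ε : ℝ =>
          -(Real.sin y)⁻¹ * (Real.log (Real.sin (y-ε/2)) - Real.log (Real.sin (y+ε/2))))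
          (nhdsWithin 0 (Set.Ioi 0)) (nhds (-(Real.sin y)⁻¹ *
            (Real.log (Real.sin (y-0/2)) - Real.log (Real.sin (y+0/2))))) :=
        hcont.tendsto.mono_left nhdsWithin_le_nhds
      simpa using h2
    apply Tendsto.congr' _ hG
    apply Filter.eventuallyEq_of_mem hEv
    intro ε hε
    obtain ⟨he1, he2⟩ := hε
    have he2y : ε < y := lt_of_lt_of_le he2 (min_le_left _ _)
    have he2π : ε < Real.pi - y := lt_of_lt_of_le he2 (min_le_right _ _)
    exact (airfoil_pv0 ⟨hy1, hy2⟩ he1 he2y he2π).symm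
  -- interval inclusions for small ε
  have hsub1 : ∀ ε : ℝ, 0 < ε → ε < y → Set.Icc (0:ℝ) (y-ε) ⊆ Set.Icc 0 Real.pi :=
    fun ε h1 h2 z hz => ⟨hz.1, by obtain ⟨a1, a2⟩ := hz; linarith⟩
  have hy1' : ∀ ε : ℝ, 0 < ε → ε < y → y ∉ Set.Icc (0:ℝ) (y-ε) :=
    fun ε h1 h2 h => by obtain ⟨a1, a2⟩ := h; linarith
  have hsub2 : ∀ ε : ℝ, 0 < ε → ε < Real.pi - y → Set.Icc (y+ε) Real.pi ⊆ Set.Icc 0 Real.pi :=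
    fun ε h1 h2 z hz => ⟨by obtain ⟨a1, a2⟩ := hz; linarith, hz.2⟩
  have hy2' : ∀ ε : ℝ, 0 < ε → ε < Real.pi - y → y ∉ Set.Icc (y+ε) Real.pi :=
    fun ε h1 h2 h => by obtain ⟨a1, a2⟩ := h; linarith
  -- the key statement for all n, by two-step induction
  have key : ∀ n : ℕ, Tendsto (fun ε : ℝ =>
      (∫ z in (0:ℝ)..(y-ε), Real.cos (n*z)/(Real.cos y - Real.cos z)) +
        ∫ z in (y+ε)..Real.pi, Real.cos (n*z)/(Real.cos y - Real.cos z))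
      (nhdsWithin 0 (Set.Ioi 0)) (nhds (-Real.pi * Real.sin (n*y)/Real.sin y)) := by
    have T0 : Tendsto (fun ε : ℝ =>
        (∫ z in (0:ℝ)..(y-ε), Real.cos ((0:ℕ)*z)/(Real.cos y - Real.cos z)) +
          ∫ z in (y+ε)..Real.pi, Real.cos ((0:ℕ)*z)/(Real.cos y - Real.cos z))
        (nhdsWithin 0 (Set.Ioi 0)) (nhds (-Real.pi * Real.sin ((0:ℕ)*y)/Real.sin y)) := by
      simpa using P0
    have T1 : Tendsto (fun ε : ℝ =>
        (∫ z in (0:ℝ)..(y-ε), Real.cos ((1:ℕ)*z)/(Real.cos y - Real.cos z)) +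
          ∫ z in (y+ε)..Real.pi, Real.cos ((1:ℕ)*z)/(Real.cos y - Real.cos z))
        (nhdsWithin 0 (Set.Ioi 0)) (nhds (-Real.pi * Real.sin ((1:ℕ)*y)/Real.sin y)) := by
      have hlim : Tendsto (fun ε : ℝ => Real.cos y *
          ((∫ z in (0:ℝ)..(y-ε), 1/(Real.cos y - Real.cos z)) +
            ∫ z in (y+ε)..Real.pi, 1/(Real.cos y - Real.cos z)) - (Real.pi - 2*ε))
          (nhdsWithin 0 (Set.Ioi 0)) (nhds (Real.cos y * 0 - (Real.pi - 2*0))) := by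
        apply Tendsto.sub (P0.const_mul _)
        exact ((continuous_const.sub (continuous_const.mul continuous_id)).tendsto 0).mono_left
          nhdsWithin_le_nhds
      have hval : Real.cos y * 0 - (Real.pi - 2*0) = -Real.pi * Real.sin ((1:ℕ)*y)/Real.sin y := by
        push_cast
        rw [one_mul, mul_div_assoc, div_self hsy]
        ring
      rw [hval] at hlim
      apply Tendsto.congr' _ hlim
      apply Filter.eventuallyEq_of_mem hEv
      intro ε hε
      obtain ⟨he1, he2⟩ := hε
      have he2y : ε < y := lt_of_lt_of_le he2 (min_le_left _ _)
      have he2π : ε < Real.pi - y := lt_of_lt_of_le he2 (min_le_right _ _)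
      push_cast
      rw [airfoil_split1 ⟨hy1, hy2⟩ (by linarith) (hsub1 ε he1 he2y) (hy1' ε he1 he2y),
        airfoil_split1 ⟨hy1, hy2⟩ (by linarith) (hsub2 ε he1 he2π) (hy2' ε he1 he2π)]
      ring
    have pair : ∀ n : ℕ,
        (Tendsto (fun ε : ℝ =>
          (∫ z in (0:ℝ)..(y-ε), Real.cos (n*z)/(Real.cos y - Real.cos z)) +
            ∫ z in (y+ε)..Real.pi, Real.cos (n*z)/(Real.cos y - Real.cos z))
          (nhdsWithin 0 (Set.Ioi 0)) (nhds (-Real.pi * Real.sin (n*y)/Real.sin y))) ∧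
        (Tendsto (fun ε : ℝ =>
          (∫ z in (0:ℝ)..(y-ε), Real.cos ((n+1:ℕ)*z)/(Real.cos y - Real.cos z)) +
            ∫ z in (y+ε)..Real.pi, Real.cos ((n+1:ℕ)*z)/(Real.cos y - Real.cos z))
          (nhdsWithin 0 (Set.Ioi 0)) (nhds (-Real.pi * Real.sin ((n+1:ℕ)*y)/Real.sin y))) := by
      intro n
      induction n with
      | zero => exact ⟨T0, T1⟩
      | succ n ih =>
        refine ⟨ih.2, ?_⟩
        obtain ⟨htn, htn1⟩ := ih
        have e1 : ((n+1 : ℕ) : ℝ) = (n:ℝ)+1 := by push_cast; ring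
        have e2 : ((n+1+1 : ℕ) : ℝ) = (n:ℝ)+2 := by push_cast; ring
        simp only [e2]
        simp only [e1] at htn1
        have hC := airfoil_cosint (m := n+1) (by omega) y
        simp only [e1] at hC
        have hlim : Tendsto (fun ε : ℝ =>
            2*Real.cos y * ((∫ z in (0:ℝ)..(y-ε), Real.cos (((n:ℝ)+1)*z)/(Real.cos y - Real.cos z)) +
              ∫ z in (y+ε)..Real.pi, Real.cos (((n:ℝ)+1)*z)/(Real.cos y - Real.cos z))
            - ((∫ z in (0:ℝ)..(y-ε), Real.cos ((n:ℝ)*z)/(Real.cos y - Real.cos z)) +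
              ∫ z in (y+ε)..Real.pi, Real.cos ((n:ℝ)*z)/(Real.cos y - Real.cos z))
            - 2*((∫ z in (0:ℝ)..(y-ε), Real.cos (((n:ℝ)+1)*z)) +
              ∫ z in (y+ε)..Real.pi, Real.cos (((n:ℝ)+1)*z)))
            (nhdsWithin 0 (Set.Ioi 0))
            (nhds (2*Real.cos y * (-Real.pi * Real.sin (((n:ℝ)+1)*y)/Real.sin y)
              - (-Real.pi * Real.sin ((n:ℝ)*y)/Real.sin y) - 2*0)) :=
          ((htn1.const_mul _).sub htn).sub (hC.const_mul 2)
        have hval : 2*Real.cos y * (-Real.pi * Real.sin (((n:ℝ)+1)*y)/Real.sin y)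
              - (-Real.pi * Real.sin ((n:ℝ)*y)/Real.sin y) - 2*0
            = -Real.pi * Real.sin (((n:ℝ)+2)*y)/Real.sin y := by
          have hs : Real.sin (((n:ℝ)+2)*y)
              = 2*Real.cos y*Real.sin (((n:ℝ)+1)*y) - Real.sin ((n:ℝ)*y) := by
            have a1 : ((n:ℝ)+2)*y = ((n:ℝ)+1)*y + y := by ring
            have a2 : ((n:ℝ))*y = ((n:ℝ)+1)*y - y := by ring
            rw [a1, a2, Real.sin_add, Real.sin_sub]
            ring
          rw [hs]
          field_simp
          ring
        rw [hval] at hlim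
        apply Tendsto.congr' _ hlim
        apply Filter.eventuallyEq_of_mem hEv
        intro ε hε
        obtain ⟨he1, he2⟩ := hε
        have he2y : ε < y := lt_of_lt_of_le he2 (min_le_left _ _)
        have he2π : ε < Real.pi - y := lt_of_lt_of_le he2 (min_le_right _ _)
        beta_reduce
        rw [airfoil_split ⟨hy1, hy2⟩ (by linarith) (hsub1 ε he1 he2y) (hy1' ε he1 he2y) (n:ℝ),
          airfoil_split ⟨hy1, hy2⟩ (by linarith) (hsub2 ε he1 he2π) (hy2' ε he1 he2π) (n:ℝ)]
        ring
    exact fun n => (pair n).1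
  constructor
  · intro n hn
    have h := (key n).const_mul (-(Real.sin y / Real.pi))
    have hval : -(Real.sin y / Real.pi) * (-Real.pi * Real.sin (n*y)/Real.sin y)
        = Real.sin (n*y) := by
      field_simp
    rw [hval] at h
    exact h
  · have h := (key 0).const_mul (-(Real.sin y / Real.pi))
    simpa using h
end
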